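/- arXiv:1405.6808 — 4 statements merged into one kernel-verified Lean document; each statement's English description precedes it below -/
import Mathlib

section
/- Suppose that (G_n) is a p-quasi-random sequence of graphs, where 0 ≤ p ≤ 1, and let F be a fixed labelled graph with e(F) > 0 and m = |F| vertices. Then for all (not necessarily disjoint) subsets U_1,…,U_m of V(G_n), one has N(F,G_n;U_1,…,U_m) = p^{e(F)} ∏_{i=1}^m |U_i| + o(|G_n|^m) and Ñ(F,G_n;U_1,…,U_m) = p^{e(F)} ∏_{i=1}^m |U_i| + o(|G_n|^m), where the o(|G_n|^m) bounds are uniform over all choices of the subsets. -/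
open Filter Finset Asymptotics MeasureTheory

/-- `labCount F G U` is the number of injective graph homomorphisms `φ : F → G`
with `φ i ∈ U i` for every vertex `i` of `F` (the quantity `N(F,G;U₁,…,U_m)`). -/
noncomputable def labCount {m : ℕ} {β : Type} [Fintype β]
    (F : SimpleGraph (Fin m)) (G : SimpleGraph β) (U : Fin m → Finset β) : ℕ :=
  Nat.card {φ : Fin m → β //
    Function.Injective φ ∧ (∀ i j, F.Adj i j → G.Adj (φ i) (φ j)) ∧ ∀ i, φ i ∈ U i}

/-- `totalCount F G` is the total number of injective graph homomorphisms `F → G`,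
the quantity `N(F,G)`. -/
noncomputable def totalCount {m : ℕ} {β : Type} [Fintype β]
    (F : SimpleGraph (Fin m)) (G : SimpleGraph β) : ℕ :=
  Nat.card {φ : Fin m → β //
    Function.Injective φ ∧ ∀ i j, F.Adj i j → G.Adj (φ i) (φ j)}

/-- `symCount F G U` is `Ñ(F,G;U₁,…,U_m) = (1/m!) ∑_σ N(F,G;U_{σ(1)},…,U_{σ(m)})`. -/
noncomputable def symCount {m : ℕ} {β : Type} [Fintype β]
    (F : SimpleGraph (Fin m)) (G : SimpleGraph β) (U : Fin m → Finset β) : ℝ :=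
  ((m.factorial : ℝ))⁻¹ * ∑ σ : Equiv.Perm (Fin m), (labCount F G (fun i => U (σ i)) : ℝ)

/-- `numEdges F` is `e(F)`, the number of edges of `F`. -/
noncomputable def numEdges {m : ℕ} (F : SimpleGraph (Fin m)) : ℕ := Nat.card F.edgeSet

/-- A sequence of graphs `G n` on vertex sets `Fin (V n)` is `p`-quasi-random if, for every
finite simple graph `F`, `N(F,G_n) = p^(e F) |G_n|^(|F|) + o(|G_n|^(|F|))`. -/
def IsQuasirandom (p : ℝ) (V : ℕ → ℕ) (G : ∀ n, SimpleGraph (Fin (V n))) : Prop :=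
  ∀ (m : ℕ) (F : SimpleGraph (Fin m)),
    (fun n => (totalCount F (G n) : ℝ) - p ^ numEdges F * (V n : ℝ) ^ m)
      =o[atTop] (fun n => (V n : ℝ) ^ m)

/-- The property `P(F;α₁,…,α_m)`: `N(F,G_n;U₁,…,U_m) = p^(e F) ∏ |U_i| + o(|G_n|^m)`,
uniformly over all pairwise disjoint `U₁,…,U_m ⊆ V(G_n)` with `|U_i| = ⌊α_i |G_n|⌋`. -/
def SatisfiesP {m : ℕ} (F : SimpleGraph (Fin m)) (p : ℝ) (α : Fin m → ℝ)
    (V : ℕ → ℕ) (G : ∀ n, SimpleGraph (Fin (V n))) : Prop :=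
  ∃ ε : ℕ → ℝ, Tendsto ε atTop (nhds 0) ∧
    ∀ (n : ℕ) (U : Fin m → Finset (Fin (V n))),
      Pairwise (fun i j => Disjoint (U i) (U j)) →
      (∀ i, (U i).card = ⌊α i * (V n : ℝ)⌋₊) →
      |(labCount F (G n) U : ℝ) - p ^ numEdges F * ∏ i, ((U i).card : ℝ)|
        ≤ ε n * (V n : ℝ) ^ m

/-- The property `P̃(F;α₁,…,α_m)`: as `SatisfiesP` but with the symmetrized count `Ñ`. -/
def SatisfiesPt {m : ℕ} (F : SimpleGraph (Fin m)) (p : ℝ) (α : Fin m → ℝ)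
    (V : ℕ → ℕ) (G : ∀ n, SimpleGraph (Fin (V n))) : Prop :=
  ∃ ε : ℕ → ℝ, Tendsto ε atTop (nhds 0) ∧
    ∀ (n : ℕ) (U : Fin m → Finset (Fin (V n))),
      Pairwise (fun i j => Disjoint (U i) (U j)) →
      (∀ i, (U i).card = ⌊α i * (V n : ℝ)⌋₊) →
      |symCount F (G n) U - p ^ numEdges F * ∏ i, ((U i).card : ℝ)|
        ≤ ε n * (V n : ℝ) ^ m

/-- The property `Pᵘ(F;α₁,…,α_m)`: `P` holds for every labelling of `F`. -/
def SatisfiesPu {m : ℕ} (F : SimpleGraph (Fin m)) (p : ℝ) (α : Fin m → ℝ)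
    (V : ℕ → ℕ) (G : ∀ n, SimpleGraph (Fin (V n))) : Prop :=
  ∀ σ : Equiv.Perm (Fin m), SatisfiesP (SimpleGraph.map σ.toEmbedding F) p α V G


set_option linter.unusedSectionVars false
set_option maxHeartbeats 1000000
namespace QR5
attribute [local instance] Classical.propDecidable

variable {β : Type} [Fintype β] {k : ℕ}

/-- real-valued adjacency indicator applied to an edge -/
noncomputable def eval' (G : SimpleGraph β) (e : Sym2 (Fin k)) (φ : Fin k → β) : ℝ :=
  if e.map φ ∈ G.edgeSet then 1 else 0

lemma eval'_mk (G : SimpleGraph β) (a b : Fin k) (φ : Fin k → β) :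
    eval' G s(a, b) φ = if G.Adj (φ a) (φ b) then 1 else 0 := by
  simp [eval']

lemma eval'_nonneg (G : SimpleGraph β) (e : Sym2 (Fin k)) (φ : Fin k → β) :
    0 ≤ eval' G e φ := by unfold eval'; positivity

lemma eval'_le_one (G : SimpleGraph β) (e : Sym2 (Fin k)) (φ : Fin k → β) :
    eval' G e φ ≤ 1 := by unfold eval'; split <;> norm_num

lemma eval'_update (G : SimpleGraph β) (e : Sym2 (Fin k)) (φ : Fin k → β)
    (a : Fin k) (x : β) (ha : a ∉ e) :
    eval' G e (Function.update φ a x) = eval' G e φ := by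
  induction e with
  | _ b c =>
    rw [Sym2.mem_iff] at ha
    push_neg at ha
    simp only [eval'_mk]
    rw [Function.update_of_ne (fun h => ha.1 h.symm), Function.update_of_ne (fun h => ha.2 h.symm)]

/-- edge finset of a graph -/
noncomputable def edges (H : SimpleGraph (Fin k)) : Finset (Sym2 (Fin k)) :=
  (H.edgeSet.toFinite).toFinset

lemma mem_edges {H : SimpleGraph (Fin k)} {e : Sym2 (Fin k)} :
    e ∈ edges H ↔ e ∈ H.edgeSet := Set.Finite.mem_toFinset _

lemma edges_card (H : SimpleGraph (Fin k)) : (edges H).card = numEdges H := by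
  rw [numEdges, Nat.card_eq_card_finite_toFinset (H.edgeSet.toFinite)]
  rfl

lemma edges_not_isDiag {H : SimpleGraph (Fin k)} {e : Sym2 (Fin k)} (he : e ∈ edges H) :
    ¬ e.IsDiag := H.not_isDiag_of_mem_edgeSet (mem_edges.1 he)

/-- counting functions with a property -/
noncomputable def cnt (k : ℕ) (β : Type) [Fintype β] (P : (Fin k → β) → Prop) : ℕ :=
  Nat.card {φ : Fin k → β // P φ}

lemma cnt_eq_sum (P : (Fin k → β) → Prop) :
    (cnt k β P : ℝ) = ∑ φ : Fin k → β, if P φ then 1 else 0 := by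
  classical
  rw [cnt, Nat.card_eq_fintype_card, Fintype.card_subtype, Finset.sum_boole]

lemma cnt_mono {P Q : (Fin k → β) → Prop} (h : ∀ φ, P φ → Q φ) : cnt k β P ≤ cnt k β Q := by
  classical
  rw [cnt, cnt, Nat.card_eq_fintype_card, Nat.card_eq_fintype_card,
    Fintype.card_subtype, Fintype.card_subtype]
  exact Finset.card_le_card (fun φ hφ => by
    simp only [Finset.mem_filter] at *; exact ⟨hφ.1, h φ hφ.2⟩)

lemma cnt_le_add {P Q R : (Fin k → β) → Prop} (h : ∀ φ, P φ → Q φ ∨ R φ) :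
    cnt k β P ≤ cnt k β Q + cnt k β R := by
  classical
  rw [cnt, cnt, cnt, Nat.card_eq_fintype_card, Nat.card_eq_fintype_card,
    Nat.card_eq_fintype_card, Fintype.card_subtype, Fintype.card_subtype,
    Fintype.card_subtype]
  calc (Finset.univ.filter P).card ≤ ((Finset.univ.filter Q) ∪ (Finset.univ.filter R)).card := by
        apply Finset.card_le_card
        intro φ hφ
        simp only [Finset.mem_filter, Finset.mem_union] at *
        rcases h φ hφ.2 with h' | h'
        · exact Or.inl ⟨hφ.1, h'⟩
        · exact Or.inr ⟨hφ.1, h'⟩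
    _ ≤ _ := Finset.card_union_le _ _

lemma cnt_notInj_le :
    cnt k β (fun φ => ¬ Function.Injective φ) ≤ k ^ 2 * (Fintype.card β) ^ (k - 1) := by
  classical
  rw [cnt, Nat.card_eq_fintype_card, Fintype.card_subtype]
  have hpair : ∀ q : Fin k × Fin k, q.1 ≠ q.2 →
      (Finset.univ.filter (fun φ : Fin k → β => φ q.1 = φ q.2)).card
        ≤ (Fintype.card β) ^ (k - 1) := by
    intro q hq
    have : (Fintype.card β) ^ (k - 1)
        = Fintype.card ({a : Fin k // a ≠ q.2} → β) := by
      rw [Fintype.card_fun, Fintype.card_subtype]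
      congr 1
      rw [Finset.filter_ne', Finset.card_erase_of_mem (Finset.mem_univ _)]
      simp
    rw [this, ← Finset.card_univ]
    apply Finset.card_le_card_of_injOn (fun φ a => φ a.1) (fun _ _ => Finset.mem_univ _)
    intro φ hφ φ' hφ' hr
    simp only [Finset.mem_coe, Finset.mem_filter] at hφ hφ'
    funext a
    by_cases ha : a = q.2
    · subst ha
      have h1 : φ q.1 = φ' q.1 := congrFun hr ⟨q.1, hq⟩
      rw [← hφ.2, ← hφ'.2, h1]
    · exact congrFun hr ⟨a, ha⟩
  calc (Finset.univ.filter (fun φ : Fin k → β => ¬ Function.Injective φ)).card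
      ≤ ((Finset.univ : Finset (Fin k)).offDiag.biUnion
          (fun q => Finset.univ.filter (fun φ : Fin k → β => φ q.1 = φ q.2))).card := by
        apply Finset.card_le_card
        intro φ hφ
        have hφ2 : ¬ Function.Injective φ := by simpa using hφ
        simp only [Function.Injective] at hφ2
        push_neg at hφ2
        obtain ⟨i, j, hij, hne⟩ := hφ2
        apply Finset.mem_biUnion.2
        exact ⟨(i, j), Finset.mem_offDiag.2 ⟨Finset.mem_univ _, Finset.mem_univ _, hne⟩,
          Finset.mem_filter.2 ⟨Finset.mem_univ _, hij⟩⟩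
    _ ≤ ∑ q ∈ (Finset.univ : Finset (Fin k)).offDiag,
          (Finset.univ.filter (fun φ : Fin k → β => φ q.1 = φ q.2)).card :=
        Finset.card_biUnion_le
    _ ≤ ∑ _q ∈ (Finset.univ : Finset (Fin k)).offDiag,
          (Fintype.card β) ^ (k - 1) := by
        apply Finset.sum_le_sum
        intro q hq
        exact hpair q (Finset.mem_offDiag.1 hq).2.2
    _ ≤ k ^ 2 * (Fintype.card β) ^ (k - 1) := by
        rw [Finset.sum_const, smul_eq_mul]
        apply Nat.mul_le_mul_right
        calc ((Finset.univ : Finset (Fin k)).offDiag).card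
            = k * k - k := by rw [Finset.offDiag_card]; simp
          _ ≤ k ^ 2 := by rw [sq]; omega

/-- weighted homomorphism sum over an edge finset with vertex weights -/
noncomputable def hsum (G : SimpleGraph β) (s : Finset (Sym2 (Fin k)))
    (u : Fin k → β → ℝ) : ℝ :=
  ∑ φ : Fin k → β, (∏ e ∈ s, eval' G e φ) * ∏ v, u v (φ v)

/-- hom-through-edges condition -/
def homC (G : SimpleGraph β) (s : Finset (Sym2 (Fin k))) (φ : Fin k → β) : Prop :=
  ∀ e ∈ s, e.map φ ∈ G.edgeSet

lemma hsum_indicator (G : SimpleGraph β) (s : Finset (Sym2 (Fin k))) (U : Fin k → Finset β) :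
    hsum G s (fun v x => if x ∈ U v then 1 else 0)
      = (cnt k β (fun φ => homC G s φ ∧ ∀ v, φ v ∈ U v) : ℝ) := by
  rw [cnt_eq_sum, hsum]
  apply Finset.sum_congr rfl
  intro φ _
  have hA : (∏ e ∈ s, eval' G e φ) = if homC G s φ then (1:ℝ) else 0 := by
    simp [eval', Finset.prod_boole, homC]
    congr 1
  have hB : (∏ v, (if φ v ∈ U v then (1:ℝ) else 0))
      = if (∀ v, φ v ∈ U v) then (1:ℝ) else 0 := by
    simp [Finset.prod_boole]
  rw [hA, hB, ite_zero_mul_ite_zero, one_mul]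
  simp

lemma labCount_eq_cnt (F : SimpleGraph (Fin k)) (G : SimpleGraph β) (U : Fin k → Finset β) :
    labCount F G U
      = cnt k β (fun φ => Function.Injective φ ∧ homC G (edges F) φ ∧ ∀ v, φ v ∈ U v) := by
  rw [labCount, cnt]
  apply Nat.card_congr
  apply Equiv.subtypeEquivRight
  intro φ
  constructor
  · rintro ⟨h1, h2, h3⟩
    refine ⟨h1, ?_, h3⟩
    intro e he
    induction e with
    | _ a b =>
      rw [Sym2.map_pair_eq, SimpleGraph.mem_edgeSet]
      exact h2 a b (mem_edges.1 he)
  · rintro ⟨h1, h2, h3⟩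
    refine ⟨h1, ?_, h3⟩
    intro i j hij
    have := h2 s(i, j) (mem_edges.2 hij)
    rwa [Sym2.map_pair_eq, SimpleGraph.mem_edgeSet] at this

lemma totalCount_eq_cnt (F : SimpleGraph (Fin k)) (G : SimpleGraph β) :
    totalCount F G
      = cnt k β (fun φ => Function.Injective φ ∧ homC G (edges F) φ) := by
  rw [totalCount, cnt]
  apply Nat.card_congr
  apply Equiv.subtypeEquivRight
  intro φ
  constructor
  · rintro ⟨h1, h2⟩
    refine ⟨h1, ?_⟩
    intro e he
    induction e with
    | _ a b =>
      rw [Sym2.map_pair_eq, SimpleGraph.mem_edgeSet]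
      exact h2 a b (mem_edges.1 he)
  · rintro ⟨h1, h2⟩
    refine ⟨h1, ?_⟩
    intro i j hij
    have := h2 s(i, j) (mem_edges.2 hij)
    rwa [Sym2.map_pair_eq, SimpleGraph.mem_edgeSet] at this

/-- difference between the weighted sum and the injective count -/
lemma hsum_sub_cnt (G : SimpleGraph β) (s : Finset (Sym2 (Fin k))) (U : Fin k → Finset β) :
    |hsum G s (fun v x => if x ∈ U v then 1 else 0)
      - (cnt k β (fun φ => Function.Injective φ ∧ homC G s φ ∧ ∀ v, φ v ∈ U v) : ℝ)|
      ≤ k ^ 2 * (Fintype.card β : ℝ) ^ (k - 1) := by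
  rw [hsum_indicator]
  rw [abs_sub_comm, abs_sub_le_iff]
  constructor
  · have hle : (cnt k β (fun φ => Function.Injective φ ∧ homC G s φ ∧ ∀ v, φ v ∈ U v) : ℝ)
        ≤ (cnt k β (fun φ => homC G s φ ∧ ∀ v, φ v ∈ U v) : ℝ) := by
      have harg0 : ∀ φ : Fin k → β,
          (Function.Injective φ ∧ homC G s φ ∧ ∀ v, φ v ∈ U v) →
          (homC G s φ ∧ ∀ v, φ v ∈ U v) := fun φ h => ⟨h.2.1, h.2.2⟩
      exact_mod_cast cnt_mono harg0
    have hpos : (0:ℝ) ≤ (k:ℝ) ^ 2 * (Fintype.card β : ℝ) ^ (k - 1) := by positivity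
    linarith
  · rw [sub_le_iff_le_add']
    have harg : ∀ φ : Fin k → β, (homC G s φ ∧ ∀ v, φ v ∈ U v) →
        (Function.Injective φ ∧ homC G s φ ∧ ∀ v, φ v ∈ U v) ∨ ¬ Function.Injective φ := by
      intro φ h
      by_cases hi : Function.Injective φ
      · exact Or.inl ⟨hi, h⟩
      · exact Or.inr hi
    have h1 := cnt_le_add (β := β)
      (P := fun φ => homC G s φ ∧ ∀ v, φ v ∈ U v)
      (Q := fun φ => Function.Injective φ ∧ homC G s φ ∧ ∀ v, φ v ∈ U v)
      (R := fun φ => ¬ Function.Injective φ) harg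
    have h2 := cnt_notInj_le (k := k) (β := β)
    calc (cnt k β (fun φ => homC G s φ ∧ ∀ v, φ v ∈ U v) : ℝ)
        ≤ (cnt k β (fun φ => Function.Injective φ ∧ homC G s φ ∧ ∀ v, φ v ∈ U v) : ℝ)
          + cnt k β (fun φ => ¬ Function.Injective φ) := by exact_mod_cast h1
      _ ≤ _ := by
          have : (cnt k β (fun φ => ¬ Function.Injective φ) : ℝ)
              ≤ (k : ℝ) ^ 2 * (Fintype.card β : ℝ) ^ (k - 1) := by exact_mod_cast h2
          linarith

variable (G : SimpleGraph β) (p : ℝ)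

/-- the edge-deviation function -/
noncomputable def fdev (x y : β) : ℝ := (if G.Adj x y then (1:ℝ) else 0) - p

lemma card_ne_ne (i j : Fin k) (hij : i ≠ j) :
    Fintype.card {a : Fin k // a ≠ i ∧ a ≠ j} = k - 2 := by
  classical
  rw [Fintype.card_subtype]
  have : Finset.univ.filter (fun a : Fin k => a ≠ i ∧ a ≠ j)
      = (Finset.univ.erase j).erase i := by
    ext a
    simp only [Finset.mem_filter, Finset.mem_erase, Finset.mem_univ, and_true, true_and]
  rw [this, Finset.card_erase_of_mem, Finset.card_erase_of_mem (Finset.mem_univ _)]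
  · simp only [Finset.card_univ, Fintype.card_fin]
    omega
  · exact Finset.mem_erase.2 ⟨hij, Finset.mem_univ _⟩

lemma edge_term [Nonempty β] {B : ℝ}
    (hB : ∀ g h : β → ℝ, (∀ x, 0 ≤ g x ∧ g x ≤ 1) → (∀ x, 0 ≤ h x ∧ h x ≤ 1) →
      |∑ x, ∑ y, fdev G p x y * g x * h y| ≤ B)
    (u : Fin k → β → ℝ) (hu : ∀ v x, 0 ≤ u v x ∧ u v x ≤ 1)
    (i j : Fin k) (hij : i ≠ j) (s : Finset (Sym2 (Fin k)))
    (hns : s(i, j) ∉ s) :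
    |∑ φ : Fin k → β, fdev G p (φ i) (φ j)
        * ((∏ e ∈ s, eval' G e φ) * ∏ v, u v (φ v))|
      ≤ B * (Fintype.card β : ℝ) ^ (k - 2) := by
  classical
  set γ := {a : Fin k // a ≠ i ∧ a ≠ j} with hγ
  set base : (γ → β) → Fin k → β :=
    fun ψ a => if h : a ≠ i ∧ a ≠ j then ψ ⟨a, h⟩ else Classical.arbitrary β with hbase
  have hup_i : ∀ (ψ : γ → β) (x y : β),
      (Function.update (Function.update (base ψ) i x) j y) i = x := by
    intro ψ x y
    rw [Function.update_of_ne hij, Function.update_self]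
  have hup_j : ∀ (ψ : γ → β) (x y : β),
      (Function.update (Function.update (base ψ) i x) j y) j = y := by
    intro ψ x y
    rw [Function.update_self]
  have hup_a : ∀ (ψ : γ → β) (x y : β) (a : Fin k), a ≠ i → a ≠ j →
      (Function.update (Function.update (base ψ) i x) j y) a = base ψ a := by
    intro ψ x y a hai haj
    rw [Function.update_of_ne haj, Function.update_of_ne hai]
  set E : ((γ → β) × β × β) ≃ (Fin k → β) :=
    { toFun := fun z => Function.update (Function.update (base z.1) i z.2.1) j z.2.2
      invFun := fun φ => (fun a => φ a.1, φ i, φ j)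
      left_inv := by
        rintro ⟨ψ, x, y⟩
        refine Prod.ext ?_ (Prod.ext ?_ ?_)
        · funext a
          dsimp only
          rw [hup_a ψ x y a.1 a.2.1 a.2.2, hbase]
          beta_reduce
          rw [dif_pos a.2]
        · dsimp only
          rw [hup_i]
        · dsimp only
          rw [hup_j]
      right_inv := by
        intro φ
        funext a
        dsimp only
        by_cases haj : a = j
        · subst haj; rw [Function.update_self]
        · rw [Function.update_of_ne haj]
          by_cases hai : a = i
          · subst hai; rw [Function.update_self]
          · rw [Function.update_of_ne hai, hbase]
            beta_reduce
            rw [dif_pos (And.intro hai haj)] } with hE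
  have key : ∀ X : (Fin k → β) → ℝ, ∑ φ : Fin k → β, X φ
      = ∑ ψ : γ → β, ∑ x : β, ∑ y : β,
        X (Function.update (Function.update (base ψ) i x) j y) := by
    intro X
    rw [← Equiv.sum_comp E X, Fintype.sum_prod_type]
    exact Finset.sum_congr rfl fun ψ _ => by
      rw [Fintype.sum_prod_type]
      exact Finset.sum_congr rfl fun x _ => Finset.sum_congr rfl fun y _ => rfl
  rw [key]
  have hcard : ((Fintype.card β : ℝ)) ^ (k - 2) = (Fintype.card (γ → β) : ℝ) := by
    rw [Fintype.card_fun, card_ne_ne i j hij]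
    push_cast
    ring
  calc |∑ ψ : γ → β, ∑ x : β, ∑ y : β, _| ≤ ∑ ψ : γ → β, |∑ x : β, ∑ y : β,
        fdev G p ((Function.update (Function.update (base ψ) i x) j y) i)
          ((Function.update (Function.update (base ψ) i x) j y) j)
        * ((∏ e ∈ s, eval' G e (Function.update (Function.update (base ψ) i x) j y))
          * ∏ v, u v ((Function.update (Function.update (base ψ) i x) j y) v))| :=
      Finset.abs_sum_le_sum_abs _ _
    _ ≤ ∑ _ψ : γ → β, B := by
      apply Finset.sum_le_sum
      intro ψ _
      set g : β → ℝ := fun x =>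
        (∏ e ∈ s.filter (fun e => i ∈ e), eval' G e (Function.update (base ψ) i x)) * u i x
        with hg
      set h : β → ℝ := fun y =>
        (∏ e ∈ s.filter (fun e => i ∉ e ∧ j ∈ e), eval' G e (Function.update (base ψ) j y))
          * u j y with hh
      set c : ℝ :=
        (∏ e ∈ s.filter (fun e => i ∉ e ∧ j ∉ e), eval' G e (base ψ))
          * ∏ a ∈ (Finset.univ.erase i).erase j, u a (base ψ a) with hc
      have hgb : ∀ x, 0 ≤ g x ∧ g x ≤ 1 := by
        intro x
        constructor
        · exact mul_nonneg (Finset.prod_nonneg fun e _ => eval'_nonneg G e _) (hu i x).1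
        · exact mul_le_one₀ (Finset.prod_le_one (fun e _ => eval'_nonneg G e _)
            (fun e _ => eval'_le_one G e _)) (hu i x).1 (hu i x).2
      have hhb : ∀ y, 0 ≤ h y ∧ h y ≤ 1 := by
        intro y
        constructor
        · exact mul_nonneg (Finset.prod_nonneg fun e _ => eval'_nonneg G e _) (hu j y).1
        · exact mul_le_one₀ (Finset.prod_le_one (fun e _ => eval'_nonneg G e _)
            (fun e _ => eval'_le_one G e _)) (hu j y).1 (hu j y).2
      have hcb : 0 ≤ c ∧ c ≤ 1 := by
        constructor
        · exact mul_nonneg (Finset.prod_nonneg fun e _ => eval'_nonneg G e _)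
            (Finset.prod_nonneg fun a _ => (hu a _).1)
        · exact mul_le_one₀ (Finset.prod_le_one (fun e _ => eval'_nonneg G e _)
            (fun e _ => eval'_le_one G e _))
            (Finset.prod_nonneg fun a _ => (hu a _).1)
            (Finset.prod_le_one (fun a _ => (hu a _).1) (fun a _ => (hu a _).2))
      have hfac : ∀ x y : β,
          (∏ e ∈ s, eval' G e (Function.update (Function.update (base ψ) i x) j y))
            * ∏ v, u v ((Function.update (Function.update (base ψ) i x) j y) v)
          = c * (g x * h y) := by
        intro x y
        set φ' := Function.update (Function.update (base ψ) i x) j y with hφ'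
        have hsplit : (∏ e ∈ s, eval' G e φ')
            = (∏ e ∈ s.filter (fun e => i ∈ e), eval' G e φ')
              * ((∏ e ∈ s.filter (fun e => i ∉ e ∧ j ∈ e), eval' G e φ')
                * (∏ e ∈ s.filter (fun e => i ∉ e ∧ j ∉ e), eval' G e φ')) := by
          rw [← Finset.prod_filter_mul_prod_filter_not s (fun e => i ∈ e)]
          congr 1
          rw [← Finset.prod_filter_mul_prod_filter_not (s.filter (fun e => ¬ i ∈ e))
            (fun e => j ∈ e), Finset.filter_filter, Finset.filter_filter]
        have h1 : ∀ e ∈ s.filter (fun e => i ∈ e), eval' G e φ'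
            = eval' G e (Function.update (base ψ) i x) := by
          intro e he
          rw [Finset.mem_filter] at he
          have hje : j ∉ e := fun hje =>
            hns (((Sym2.mem_and_mem_iff hij).1 ⟨he.2, hje⟩) ▸ he.1)
          rw [hφ', eval'_update G e _ j y hje]
        have h2 : ∀ e ∈ s.filter (fun e => i ∉ e ∧ j ∈ e), eval' G e φ'
            = eval' G e (Function.update (base ψ) j y) := by
          intro e he
          rw [Finset.mem_filter] at he
          rw [hφ', Function.update_comm hij x y (base ψ),
            eval'_update G e _ i x he.2.1]
        have h3 : ∀ e ∈ s.filter (fun e => i ∉ e ∧ j ∉ e), eval' G e φ'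
            = eval' G e (base ψ) := by
          intro e he
          rw [Finset.mem_filter] at he
          rw [hφ', eval'_update G e _ j y he.2.2, eval'_update G e _ i x he.2.1]
        have hvert : (∏ v, u v (φ' v))
            = u i x * (u j y * ∏ a ∈ (Finset.univ.erase i).erase j, u a (base ψ a)) := by
          rw [← Finset.mul_prod_erase Finset.univ (fun v => u v (φ' v)) (Finset.mem_univ i)]
          rw [hφ', hup_i ψ x y, ← hφ']
          congr 1
          rw [← Finset.mul_prod_erase (Finset.univ.erase i) (fun v => u v (φ' v))
            (Finset.mem_erase.2 ⟨Ne.symm hij, Finset.mem_univ j⟩)]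
          rw [hφ', hup_j ψ x y, ← hφ']
          congr 1
          apply Finset.prod_congr rfl
          intro a ha
          rw [Finset.mem_erase, Finset.mem_erase] at ha
          rw [hφ', hup_a ψ x y a ha.2.1 ha.1]
        rw [hsplit, Finset.prod_congr rfl h1, Finset.prod_congr rfl h2,
          Finset.prod_congr rfl h3, hvert, hg, hh, hc]
        ring
      have hsum_eq : ∑ x : β, ∑ y : β,
          fdev G p ((Function.update (Function.update (base ψ) i x) j y) i)
            ((Function.update (Function.update (base ψ) i x) j y) j)
          * ((∏ e ∈ s, eval' G e (Function.update (Function.update (base ψ) i x) j y))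
            * ∏ v, u v ((Function.update (Function.update (base ψ) i x) j y) v))
          = c * ∑ x : β, ∑ y : β, fdev G p x y * g x * h y := by
        rw [Finset.mul_sum]
        refine Finset.sum_congr rfl fun x _ => ?_
        rw [Finset.mul_sum]
        refine Finset.sum_congr rfl fun y _ => ?_
        rw [hup_i ψ x y, hup_j ψ x y, hfac x y]
        ring
      rw [hsum_eq, abs_mul]
      calc |c| * |∑ x : β, ∑ y : β, fdev G p x y * g x * h y|
          ≤ 1 * B := by
            apply mul_le_mul _ (hB g h hgb hhb) (abs_nonneg _) zero_le_one
            rw [abs_of_nonneg hcb.1]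
            exact hcb.2
        _ = B := one_mul B
    _ = B * (Fintype.card β : ℝ) ^ (k - 2) := by
      rw [Finset.sum_const, hcard, nsmul_eq_mul, Finset.card_univ, mul_comm]

lemma hsum_empty (u : Fin k → β → ℝ) :
    hsum G ∅ u = ∏ v, ∑ x : β, u v x := by
  classical
  rw [hsum, Finset.prod_univ_sum]
  simp only [Finset.prod_empty, one_mul, Fintype.piFinset_univ]

lemma tele [Nonempty β] (hp0 : 0 ≤ p) (hp1 : p ≤ 1) {B : ℝ}
    (hB : ∀ g h : β → ℝ, (∀ x, 0 ≤ g x ∧ g x ≤ 1) → (∀ x, 0 ≤ h x ∧ h x ≤ 1) →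
      |∑ x, ∑ y, fdev G p x y * g x * h y| ≤ B)
    (u : Fin k → β → ℝ) (hu : ∀ v x, 0 ≤ u v x ∧ u v x ≤ 1)
    (s : Finset (Sym2 (Fin k))) (hs : ∀ e ∈ s, ¬ e.IsDiag) :
    |hsum G s u - p ^ s.card * ∏ v, ∑ x : β, u v x|
      ≤ s.card * (B * (Fintype.card β : ℝ) ^ (k - 2)) := by
  classical
  induction s using Finset.induction with
  | empty =>
    rw [hsum_empty, Finset.card_empty, pow_zero, one_mul, sub_self, abs_zero]
    simp
  | @insert e s he ih =>
    have hdiag := hs e (Finset.mem_insert_self e s)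
    obtain ⟨i, j, rfl⟩ : ∃ i j, e = s(i, j) := Sym2.ind (fun a b => ⟨a, b, rfl⟩) e
    have hij : i ≠ j := fun hij' => hdiag (Sym2.mk_isDiag_iff.2 hij')
    have hstep : hsum G (insert s(i,j) s) u
        = (∑ φ : Fin k → β, fdev G p (φ i) (φ j)
            * ((∏ e' ∈ s, eval' G e' φ) * ∏ v, u v (φ v)))
          + p * hsum G s u := by
      rw [hsum, hsum, Finset.mul_sum, ← Finset.sum_add_distrib]
      apply Finset.sum_congr rfl
      intro φ _
      rw [Finset.prod_insert he, eval'_mk, fdev]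
      ring
    have hb1 := edge_term G p hB u hu i j hij s he
    have hb2 := ih (fun e' he' => hs e' (Finset.mem_insert_of_mem he'))
    rw [hstep, Finset.card_insert_of_notMem he]
    have habs : |(∑ φ : Fin k → β, fdev G p (φ i) (φ j)
            * ((∏ e' ∈ s, eval' G e' φ) * ∏ v, u v (φ v)))
          + p * hsum G s u - p ^ (s.card + 1) * ∏ v, ∑ x : β, u v x|
        ≤ |∑ φ : Fin k → β, fdev G p (φ i) (φ j)
            * ((∏ e' ∈ s, eval' G e' φ) * ∏ v, u v (φ v))|
          + |p| * |hsum G s u - p ^ s.card * ∏ v, ∑ x : β, u v x| := by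
      have : (∑ φ : Fin k → β, fdev G p (φ i) (φ j)
            * ((∏ e' ∈ s, eval' G e' φ) * ∏ v, u v (φ v)))
          + p * hsum G s u - p ^ (s.card + 1) * ∏ v, ∑ x : β, u v x
          = (∑ φ : Fin k → β, fdev G p (φ i) (φ j)
            * ((∏ e' ∈ s, eval' G e' φ) * ∏ v, u v (φ v)))
            + p * (hsum G s u - p ^ s.card * ∏ v, ∑ x : β, u v x) := by
        ring
      rw [this]
      calc |_ + p * (hsum G s u - p ^ s.card * ∏ v, ∑ x : β, u v x)|
          ≤ _ + |p * (hsum G s u - p ^ s.card * ∏ v, ∑ x : β, u v x)| := abs_add_le _ _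
        _ = _ := by rw [abs_mul]
    have hp_abs : |p| ≤ 1 := abs_le.2 ⟨by linarith, hp1⟩
    have hstep2 : |p| * |hsum G s u - p ^ s.card * ∏ v, ∑ x : β, u v x|
        ≤ s.card * (B * (Fintype.card β : ℝ) ^ (k - 2)) := by
      calc |p| * |hsum G s u - p ^ s.card * ∏ v, ∑ x : β, u v x|
          ≤ 1 * |hsum G s u - p ^ s.card * ∏ v, ∑ x : β, u v x| :=
            mul_le_mul_of_nonneg_right hp_abs (abs_nonneg _)
        _ = _ := one_mul _
        _ ≤ _ := hb2
    push_cast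
    calc |_| ≤ _ := habs
      _ ≤ B * (Fintype.card β : ℝ) ^ (k - 2)
          + s.card * (B * (Fintype.card β : ℝ) ^ (k - 2)) := add_le_add hb1 hstep2
      _ = (s.card + 1) * (B * (Fintype.card β : ℝ) ^ (k - 2)) := by ring

variable (G : SimpleGraph β) (p : ℝ)

/-- the C4-deviation sum -/
noncomputable def qsum : ℝ :=
  ∑ x : β, ∑ x' : β, ∑ y : β, ∑ y' : β,
    fdev G p x y * fdev G p x y' * fdev G p x' y * fdev G p x' y'

lemma qsum_eq : qsum G p
    = ∑ y : β, ∑ y' : β, (∑ x : β, fdev G p x y * fdev G p x y') ^ 2 := by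
  have step : ∀ y y' : β, (∑ x : β, fdev G p x y * fdev G p x y') ^ 2
      = ∑ x : β, ∑ x' : β,
        fdev G p x y * fdev G p x y' * (fdev G p x' y * fdev G p x' y') := by
    intro y y'
    rw [sq, Finset.sum_mul_sum]
  calc qsum G p
      = ∑ x : β, ∑ y : β, ∑ x' : β, ∑ y' : β,
          fdev G p x y * fdev G p x y' * fdev G p x' y * fdev G p x' y' :=
        Finset.sum_congr rfl fun x _ => Finset.sum_comm
    _ = ∑ y : β, ∑ x : β, ∑ x' : β, ∑ y' : β,
          fdev G p x y * fdev G p x y' * fdev G p x' y * fdev G p x' y' :=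
        Finset.sum_comm
    _ = ∑ y : β, ∑ x : β, ∑ y' : β, ∑ x' : β,
          fdev G p x y * fdev G p x y' * fdev G p x' y * fdev G p x' y' :=
        Finset.sum_congr rfl fun y _ => Finset.sum_congr rfl fun x _ =>
          Finset.sum_comm
    _ = ∑ y : β, ∑ y' : β, ∑ x : β, ∑ x' : β,
          fdev G p x y * fdev G p x y' * fdev G p x' y * fdev G p x' y' :=
        Finset.sum_congr rfl fun y _ => Finset.sum_comm
    _ = _ := by
        refine Finset.sum_congr rfl fun y _ => Finset.sum_congr rfl fun y' _ => ?_
        rw [step y y']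
        exact Finset.sum_congr rfl fun x _ => Finset.sum_congr rfl fun x' _ => by ring

lemma qsum_nonneg : 0 ≤ qsum G p := by
  rw [qsum_eq]
  exact Finset.sum_nonneg fun y _ => Finset.sum_nonneg fun y' _ => sq_nonneg _

lemma cs_bound (g h : β → ℝ) (hg : ∀ x, 0 ≤ g x ∧ g x ≤ 1) (hh : ∀ x, 0 ≤ h x ∧ h x ≤ 1) :
    (∑ x : β, ∑ y : β, fdev G p x y * g x * h y) ^ 4
      ≤ (Fintype.card β : ℝ) ^ 4 * qsum G p := by
  classical
  set N := (Fintype.card β : ℝ) with hN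
  have hN0 : 0 ≤ N := by positivity
  set S := ∑ x : β, ∑ y : β, fdev G p x y * g x * h y with hS
  set T := ∑ x : β, (∑ y : β, fdev G p x y * h y) ^ 2 with hT
  have hT0 : 0 ≤ T := Finset.sum_nonneg fun x _ => sq_nonneg _
  -- first Cauchy-Schwarz
  have h1 : S ^ 2 ≤ N * T := by
    have : S = ∑ x : β, g x * (∑ y : β, fdev G p x y * h y) := by
      rw [hS]
      refine Finset.sum_congr rfl fun x _ => ?_
      rw [Finset.mul_sum]
      exact Finset.sum_congr rfl fun y _ => by ring
    rw [this]
    calc (∑ x : β, g x * (∑ y : β, fdev G p x y * h y)) ^ 2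
        ≤ (∑ x : β, (g x) ^ 2) * ∑ x : β, (∑ y : β, fdev G p x y * h y) ^ 2 :=
          Finset.sum_mul_sq_le_sq_mul_sq _ _ _
      _ ≤ N * T := by
          apply mul_le_mul_of_nonneg_right _ hT0
          calc ∑ x : β, (g x) ^ 2 ≤ ∑ _x : β, (1:ℝ) := by
                apply Finset.sum_le_sum
                intro x _
                calc (g x)^2 ≤ 1^2 := by
                      apply pow_le_pow_left₀ (hg x).1 (hg x).2
                  _ = 1 := one_pow 2
            _ = N := by rw [Finset.sum_const, nsmul_eq_mul, mul_one, Finset.card_univ]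
  -- second Cauchy-Schwarz
  have h2 : T ^ 2 ≤ N ^ 2 * qsum G p := by
    have hTexp : T = ∑ y : β, ∑ y' : β, (h y * h y')
        * (∑ x : β, fdev G p x y * fdev G p x y') := by
      calc T = ∑ x : β, ∑ y : β, ∑ y' : β,
            (fdev G p x y * h y) * (fdev G p x y' * h y') := by
            refine Finset.sum_congr rfl fun x _ => ?_
            rw [sq, Finset.sum_mul_sum]
        _ = ∑ y : β, ∑ x : β, ∑ y' : β,
            (fdev G p x y * h y) * (fdev G p x y' * h y') := Finset.sum_comm
        _ = ∑ y : β, ∑ y' : β, ∑ x : β,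
            (fdev G p x y * h y) * (fdev G p x y' * h y') :=
            Finset.sum_congr rfl fun y _ => Finset.sum_comm
        _ = _ := by
            refine Finset.sum_congr rfl fun y _ => Finset.sum_congr rfl fun y' _ => ?_
            rw [Finset.mul_sum]
            exact Finset.sum_congr rfl fun x _ => by ring
    have hTq : T = ∑ q : β × β, (h q.1 * h q.2)
        * (∑ x : β, fdev G p x q.1 * fdev G p x q.2) := by
      rw [hTexp, Fintype.sum_prod_type]
    rw [hTq]
    calc (∑ q : β × β, (h q.1 * h q.2) * (∑ x : β, fdev G p x q.1 * fdev G p x q.2)) ^ 2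
        ≤ (∑ q : β × β, (h q.1 * h q.2) ^ 2)
          * ∑ q : β × β, (∑ x : β, fdev G p x q.1 * fdev G p x q.2) ^ 2 :=
          Finset.sum_mul_sq_le_sq_mul_sq _ _ _
      _ ≤ N ^ 2 * qsum G p := by
          have e1 : (∑ q : β × β, (h q.1 * h q.2) ^ 2) ≤ N ^ 2 := by
            calc (∑ q : β × β, (h q.1 * h q.2) ^ 2) ≤ ∑ _q : β × β, (1:ℝ) := by
                  apply Finset.sum_le_sum
                  intro q _
                  calc (h q.1 * h q.2)^2 ≤ 1^2 := by
                        apply pow_le_pow_left₀ (mul_nonneg (hh q.1).1 (hh q.2).1)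
                        exact mul_le_one₀ (hh q.1).2 (hh q.2).1 (hh q.2).2
                    _ = 1 := one_pow 2
              _ = N ^ 2 := by
                  rw [Finset.sum_const, nsmul_eq_mul, mul_one, Finset.card_univ,
                    Fintype.card_prod, hN]
                  push_cast
                  ring
          have e2 : (∑ q : β × β, (∑ x : β, fdev G p x q.1 * fdev G p x q.2) ^ 2)
              = qsum G p := by
            rw [qsum_eq, Fintype.sum_prod_type]
          rw [e2]
          apply mul_le_mul_of_nonneg_right e1 (qsum_nonneg G p)
  calc S ^ 4 = (S ^ 2) ^ 2 := by ring
    _ ≤ (N * T) ^ 2 := by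
        apply pow_le_pow_left₀ (sq_nonneg S) h1
    _ = N ^ 2 * T ^ 2 := by ring
    _ ≤ N ^ 2 * (N ^ 2 * qsum G p) := by
        apply mul_le_mul_of_nonneg_left h2 (by positivity)
    _ = N ^ 4 * qsum G p := by ring

variable (G : SimpleGraph β) (p : ℝ)

/-- powerset expansion of the deviation product -/
lemma fsum_expand (s : Finset (Sym2 (Fin k))) :
    ∑ φ : Fin k → β, ∏ e ∈ s, (eval' G e φ - p)
      = ∑ t ∈ s.powerset, (-p) ^ ((s \ t).card) * hsum G t (fun _ _ => 1) := by
  classical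
  have hφ : ∀ φ : Fin k → β, ∏ e ∈ s, (eval' G e φ - p)
      = ∑ t ∈ s.powerset, (∏ e ∈ t, eval' G e φ) * (-p) ^ ((s \ t).card) := by
    intro φ
    have : ∀ e ∈ s, eval' G e φ - p = eval' G e φ + (-p) := by intro e _; ring
    rw [Finset.prod_congr rfl this, Finset.prod_add]
    exact Finset.sum_congr rfl fun t _ => by rw [Finset.prod_const]
  rw [Finset.sum_congr rfl fun φ _ => hφ φ, Finset.sum_comm]
  refine Finset.sum_congr rfl fun t _ => ?_
  rw [hsum, Finset.mul_sum]
  refine Finset.sum_congr rfl fun φ _ => ?_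
  rw [Finset.prod_const_one]
  ring

/-- the 4-cycle edge set (as K_{2,2} with parts {0,1},{2,3}) -/
def c4E : Finset (Sym2 (Fin 4)) := {s(0,2), s(0,3), s(1,2), s(1,3)}

lemma sum_fn4 (F : (Fin 4 → β) → ℝ) :
    ∑ φ : Fin 4 → β, F φ = ∑ a : β, ∑ b : β, ∑ c : β, ∑ d : β,
      F (Fin.cons a (Fin.cons b (Fin.cons c (Fin.cons d Fin.elim0)))) := by
  classical
  rw [← Equiv.sum_comp (Fin.consEquiv (fun _ : Fin 4 => β)) F, Fintype.sum_prod_type]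
  refine Finset.sum_congr rfl fun a _ => ?_
  rw [← Equiv.sum_comp (Fin.consEquiv (fun _ : Fin 3 => β)) _, Fintype.sum_prod_type]
  refine Finset.sum_congr rfl fun b _ => ?_
  rw [← Equiv.sum_comp (Fin.consEquiv (fun _ : Fin 2 => β)) _, Fintype.sum_prod_type]
  refine Finset.sum_congr rfl fun c _ => ?_
  rw [← Equiv.sum_comp (Fin.consEquiv (fun _ : Fin 1 => β)) _, Fintype.sum_prod_type]
  refine Finset.sum_congr rfl fun d _ => ?_
  rw [Fintype.sum_unique]
  exact congrArg F (by funext i; fin_cases i <;> rfl)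

lemma qsum_eq_fsum : qsum G p = ∑ φ : Fin 4 → β, ∏ e ∈ c4E, (eval' G e φ - p) := by
  classical
  rw [sum_fn4]
  refine Finset.sum_congr rfl fun x _ => Finset.sum_congr rfl fun x' _ => ?_
  refine Finset.sum_congr rfl fun y _ => Finset.sum_congr rfl fun y' _ => ?_
  have h02 : (s(0,2) : Sym2 (Fin 4)) ∉ ({s(0,3), s(1,2), s(1,3)} : Finset (Sym2 (Fin 4))) := by
    decide
  have h03 : (s(0,3) : Sym2 (Fin 4)) ∉ ({s(1,2), s(1,3)} : Finset (Sym2 (Fin 4))) := by decide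
  have h12 : (s(1,2) : Sym2 (Fin 4)) ∉ ({s(1,3)} : Finset (Sym2 (Fin 4))) := by decide
  have ev0 : (Fin.cons x (Fin.cons x' (Fin.cons y (Fin.cons y' Fin.elim0))) : Fin 4 → β) 0
      = x := rfl
  have ev1 : (Fin.cons x (Fin.cons x' (Fin.cons y (Fin.cons y' Fin.elim0))) : Fin 4 → β) 1
      = x' := rfl
  have ev2 : (Fin.cons x (Fin.cons x' (Fin.cons y (Fin.cons y' Fin.elim0))) : Fin 4 → β) 2
      = y := rfl
  have ev3 : (Fin.cons x (Fin.cons x' (Fin.cons y (Fin.cons y' Fin.elim0))) : Fin 4 → β) 3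
      = y' := rfl
  rw [c4E, Finset.prod_insert h02, Finset.prod_insert h03, Finset.prod_insert h12,
    Finset.prod_singleton, eval'_mk, eval'_mk, eval'_mk, eval'_mk, ev0, ev1, ev2, ev3]
  simp only [fdev]
  ring

lemma c4E_not_diag : ∀ e ∈ c4E, ¬ e.IsDiag := by decide

lemma c4E_card : c4E.card = 4 := by decide

/-- edges of a graph built from a finset of non-diagonal edges -/
lemma edges_fromEdgeSet (t : Finset (Sym2 (Fin k))) (ht : ∀ e ∈ t, ¬ e.IsDiag) :
    edges (SimpleGraph.fromEdgeSet (t : Set (Sym2 (Fin k)))) = t := by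
  ext e
  rw [mem_edges, SimpleGraph.edgeSet_fromEdgeSet]
  constructor
  · rintro ⟨he, _⟩; exact_mod_cast he
  · intro he
    exact ⟨by exact_mod_cast he, ht e he⟩

section seq
variable (p : ℝ) (V : ℕ → ℕ) (G : ∀ n, SimpleGraph (Fin (V n)))

lemma hsum_one_asymp (hV : Tendsto V atTop atTop) (hQR : IsQuasirandom p V G)
    {r : ℕ} (hr : 1 ≤ r) (t : Finset (Sym2 (Fin r))) (ht : ∀ e ∈ t, ¬ e.IsDiag) :
    Tendsto (fun n => (hsum (G n) t (fun _ _ => (1:ℝ)) - p ^ t.card * (V n : ℝ) ^ r)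
      / (V n : ℝ) ^ r) atTop (nhds 0) := by
  classical
  have hVR : Tendsto (fun n => (V n : ℝ)) atTop atTop :=
    tendsto_natCast_atTop_atTop.comp hV
  set H : SimpleGraph (Fin r) := SimpleGraph.fromEdgeSet (t : Set (Sym2 (Fin r))) with hH
  have hedges : edges H = t := edges_fromEdgeSet t ht
  have hnum : numEdges H = t.card := by rw [← edges_card, hedges]
  have hQ := (hQR r H).tendsto_div_nhds_zero
  have hpt : ∀ n, |hsum (G n) t (fun _ _ => (1:ℝ)) - (totalCount H (G n) : ℝ)|
      ≤ (r:ℝ)^2 * (V n : ℝ)^(r-1) := by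
    intro n
    have h1 := hsum_sub_cnt (G n) t (fun _ => (Finset.univ : Finset (Fin (V n))))
    simp only [Finset.mem_univ, if_true, forall_true_iff, and_true, Fintype.card_fin] at h1
    have e3 : totalCount H (G n)
        = cnt r (Fin (V n)) (fun φ => Function.Injective φ ∧ homC (G n) t φ) := by
      rw [totalCount_eq_cnt, hedges]
    rw [e3]
    exact_mod_cast h1
  apply squeeze_zero_norm' (a := fun n =>
    |((totalCount H (G n) : ℝ) - p ^ numEdges H * (V n : ℝ)^r) / (V n : ℝ)^r|
      + (r:ℝ)^2 / (V n : ℝ))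
  · filter_upwards [hV.eventually_ge_atTop 1] with n hn
    have hNpos : (0:ℝ) < (V n : ℝ) := by exact_mod_cast hn
    have hNrpos : (0:ℝ) < (V n : ℝ)^r := by positivity
    rw [Real.norm_eq_abs, abs_div, abs_of_pos hNrpos]
    have htri : |hsum (G n) t (fun _ _ => (1:ℝ)) - p ^ t.card * (V n : ℝ) ^ r|
        ≤ |((totalCount H (G n) : ℝ) - p ^ numEdges H * (V n : ℝ)^r)|
          + (r:ℝ)^2 * (V n : ℝ)^(r-1) := by
      have := abs_sub_le (hsum (G n) t (fun _ _ => (1:ℝ))) ((totalCount H (G n) : ℝ))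
        (p ^ t.card * (V n : ℝ) ^ r)
      rw [hnum]
      calc |hsum (G n) t (fun _ _ => (1:ℝ)) - p ^ t.card * (V n : ℝ) ^ r|
          ≤ |hsum (G n) t (fun _ _ => (1:ℝ)) - (totalCount H (G n) : ℝ)|
            + |(totalCount H (G n) : ℝ) - p ^ t.card * (V n : ℝ) ^ r| := this
        _ ≤ _ := by
            have := hpt n
            linarith [abs_nonneg ((totalCount H (G n) : ℝ) - p ^ t.card * (V n : ℝ) ^ r)]
    calc |hsum (G n) t (fun _ _ => (1:ℝ)) - p ^ t.card * (V n : ℝ) ^ r| / (V n : ℝ)^r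
        ≤ (|((totalCount H (G n) : ℝ) - p ^ numEdges H * (V n : ℝ)^r)|
            + (r:ℝ)^2 * (V n : ℝ)^(r-1)) / (V n : ℝ)^r := by
          gcongr
      _ = |((totalCount H (G n) : ℝ) - p ^ numEdges H * (V n : ℝ)^r)| / (V n : ℝ)^r
          + (r:ℝ)^2 / (V n : ℝ) := by
          rw [add_div]
          congr 1
          have hsplit : (V n : ℝ)^r = (V n : ℝ) * (V n : ℝ)^(r-1) := by
            rw [← pow_succ']
            congr 1
            omega
          rw [hsplit, mul_div_mul_right _ _ (by positivity : ((V n : ℝ)^(r-1)) ≠ 0)]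
      _ = _ := by rw [abs_div, abs_of_pos hNrpos]
  · have t1 : Tendsto (fun n =>
        |((totalCount H (G n) : ℝ) - p ^ numEdges H * (V n : ℝ)^r) / (V n : ℝ)^r|)
        atTop (nhds 0) := by
      have := hQ.abs
      rwa [abs_zero] at this
    have t2 : Tendsto (fun n => (r:ℝ)^2 / (V n : ℝ)) atTop (nhds 0) :=
      Tendsto.div_atTop tendsto_const_nhds hVR
    simpa using t1.add t2


lemma qsum_asymp (hV : Tendsto V atTop atTop) (hQR : IsQuasirandom p V G) :
    Tendsto (fun n => qsum (G n) p / (V n : ℝ)^4) atTop (nhds 0) := by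
  classical
  have hzero : ∑ t ∈ c4E.powerset, (-p) ^ ((c4E \ t).card) * p ^ t.card = 0 := by
    have h := Finset.prod_add (fun _ : Sym2 (Fin 4) => p) (fun _ : Sym2 (Fin 4) => -p) c4E
    have hl : (∏ _e ∈ c4E, (p + -p)) = 0 := by
      rw [Finset.prod_const, c4E_card]
      norm_num
    calc ∑ t ∈ c4E.powerset, (-p) ^ ((c4E \ t).card) * p ^ t.card
        = ∑ t ∈ c4E.powerset, (∏ _e ∈ t, p) * ∏ _e ∈ c4E \ t, (-p) := by
          refine Finset.sum_congr rfl fun t _ => ?_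
          rw [Finset.prod_const, Finset.prod_const, mul_comm]
      _ = 0 := by rw [← h, hl]
  have hdecomp : ∀ n, qsum (G n) p / (V n : ℝ)^4
      = ∑ t ∈ c4E.powerset, (-p) ^ ((c4E \ t).card)
        * ((hsum (G n) t (fun _ _ => 1) - p ^ t.card * (V n : ℝ)^4) / (V n : ℝ)^4) := by
    intro n
    rw [qsum_eq_fsum, fsum_expand, Finset.sum_div]
    have hterm : ∀ t ∈ c4E.powerset,
        (-p) ^ ((c4E \ t).card) * hsum (G n) t (fun _ _ => 1) / (V n : ℝ)^4
        = (-p) ^ ((c4E \ t).card)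
            * ((hsum (G n) t (fun _ _ => 1) - p ^ t.card * (V n : ℝ)^4) / (V n : ℝ)^4)
          + ((-p) ^ ((c4E \ t).card) * p ^ t.card) * ((V n : ℝ)^4 / (V n : ℝ)^4) := by
      intro t _
      ring
    rw [Finset.sum_congr rfl hterm, Finset.sum_add_distrib, ← Finset.sum_mul, hzero,
      zero_mul, add_zero]
  have hlim : Tendsto (fun n => ∑ t ∈ c4E.powerset, (-p) ^ ((c4E \ t).card)
      * ((hsum (G n) t (fun _ _ => 1) - p ^ t.card * (V n : ℝ)^4) / (V n : ℝ)^4))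
      atTop (nhds 0) := by
    have := tendsto_finset_sum (f := fun (t : Finset (Sym2 (Fin 4))) (n : ℕ) =>
        (-p) ^ ((c4E \ t).card)
          * ((hsum (G n) t (fun _ _ => 1) - p ^ t.card * (V n : ℝ)^4) / (V n : ℝ)^4))
      (a := fun _ => 0) c4E.powerset (fun t htmem => by
        have hsub : ∀ e ∈ t, ¬ e.IsDiag := fun e he =>
          c4E_not_diag e (Finset.mem_powerset.1 htmem he)
        have := (hsum_one_asymp p V G hV hQR (by norm_num) t hsub).const_mul
          ((-p) ^ ((c4E \ t).card))
        simpa using this)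
    simpa using this
  exact hlim.congr (fun n => (hdecomp n).symm)

end seq

lemma labCount_bound [Nonempty β] (hp0 : 0 ≤ p) (hp1 : p ≤ 1)
    {B : ℝ} (hB : ∀ g h : β → ℝ, (∀ x, 0 ≤ g x ∧ g x ≤ 1) → (∀ x, 0 ≤ h x ∧ h x ≤ 1) →
      |∑ x, ∑ y, fdev G p x y * g x * h y| ≤ B)
    (F : SimpleGraph (Fin k)) (U : Fin k → Finset β) :
    |(labCount F G U : ℝ) - p ^ numEdges F * ∏ v, ((U v).card : ℝ)|
      ≤ (k:ℝ)^2 * (Fintype.card β : ℝ)^(k-1)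
        + (numEdges F : ℝ) * (B * (Fintype.card β : ℝ)^(k-2)) := by
  classical
  set u : Fin k → β → ℝ := fun v x => if x ∈ U v then 1 else 0 with hu_def
  have hu : ∀ v x, 0 ≤ u v x ∧ u v x ≤ 1 := by
    intro v x
    show 0 ≤ (if x ∈ U v then (1:ℝ) else 0) ∧ (if x ∈ U v then (1:ℝ) else 0) ≤ 1
    split <;> norm_num
  have h1 := hsum_sub_cnt G (edges F) U
  have h2 := tele G p hp0 hp1 hB u hu (edges F) (fun e he => edges_not_isDiag he)
  have h3 : ∀ v, ∑ x : β, u v x = ((U v).card : ℝ) := by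
    intro v
    show (∑ x : β, if x ∈ U v then (1:ℝ) else 0) = _
    have hfu : Finset.univ.filter (fun x => x ∈ U v) = U v := by ext x; simp
    rw [Finset.sum_boole, hfu]
  have e4 : (∏ v, ∑ x : β, u v x) = ∏ v, ((U v).card : ℝ) :=
    Finset.prod_congr rfl fun v _ => h3 v
  have e5 : (labCount F G U : ℝ)
      = (cnt k β (fun φ => Function.Injective φ ∧ homC G (edges F) φ ∧ ∀ v, φ v ∈ U v) : ℝ) := by
    exact_mod_cast congrArg Nat.cast (labCount_eq_cnt F G U)
  rw [e4, edges_card] at h2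
  rw [← e5] at h1
  calc |(labCount F G U : ℝ) - p ^ numEdges F * ∏ v, ((U v).card : ℝ)|
      ≤ |(labCount F G U : ℝ) - hsum G (edges F) u|
        + |hsum G (edges F) u - p ^ numEdges F * ∏ v, ((U v).card : ℝ)| :=
        abs_sub_le _ _ _
    _ ≤ _ := by
        apply add_le_add _ h2
        rw [abs_sub_comm]
        exact h1


end QR5

/-- **Lemma (L0).** If `(G_n)` is `p`-quasi-random and `e(F) > 0`, then
`N(F,G_n;U₁,…,U_m) = p^(e F) ∏ |U_i| + o(|G_n|^m)` and likewise for `Ñ`, uniformly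
over all (not necessarily disjoint) subsets `U₁,…,U_m ⊆ V(G_n)`. -/
theorem stmt5 (p : ℝ) (hp0 : 0 ≤ p) (hp1 : p ≤ 1)
    (V : ℕ → ℕ) (G : ∀ n, SimpleGraph (Fin (V n))) (hV : Tendsto V atTop atTop)
    (hQR : IsQuasirandom p V G)
    {m : ℕ} (F : SimpleGraph (Fin m)) (hF : 0 < numEdges F) :
    ∃ ε : ℕ → ℝ, Tendsto ε atTop (nhds 0) ∧
      ∀ (n : ℕ) (U : Fin m → Finset (Fin (V n))),
        |(labCount F (G n) U : ℝ) - p ^ numEdges F * ∏ i, ((U i).card : ℝ)|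
            ≤ ε n * (V n : ℝ) ^ m ∧
        |symCount F (G n) U - p ^ numEdges F * ∏ i, ((U i).card : ℝ)|
            ≤ ε n * (V n : ℝ) ^ m := by
  classical
  -- `m ≥ 2` since `F` has an edge
  have hne : F.edgeSet.Nonempty := by
    by_contra h
    rw [Set.not_nonempty_iff_eq_empty] at h
    rw [numEdges, h] at hF
    simp at hF
  obtain ⟨e, he⟩ := hne
  obtain ⟨i0, j0, rfl⟩ : ∃ i j, e = s(i, j) := Sym2.ind (fun a b => ⟨a, b, rfl⟩) e
  have hij0 : i0 ≠ j0 := (F.mem_edgeSet.1 he).ne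
  have hm2 : 2 ≤ m := by
    haveI : Nontrivial (Fin m) := ⟨⟨i0, j0, hij0⟩⟩
    have h := Fintype.one_lt_card (α := Fin m)
    rwa [Fintype.card_fin] at h
  have hm0 : m ≠ 0 := by omega
  have hVR : Tendsto (fun n => (V n : ℝ)) atTop atTop := tendsto_natCast_atTop_atTop.comp hV
  have hq := QR5.qsum_asymp p V G hV hQR
  set δ : ℕ → ℝ := fun n => (QR5.qsum (G n) p / (V n : ℝ)^4) ^ ((4:ℝ)⁻¹) with hδ
  have hδ0 : ∀ n, 0 ≤ δ n := fun n => Real.rpow_nonneg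
    (div_nonneg (QR5.qsum_nonneg _ _) (by positivity)) _
  have hδlim : Tendsto δ atTop (nhds 0) := by
    have hcont : ContinuousAt (fun x : ℝ => x ^ ((4:ℝ)⁻¹)) 0 :=
      Real.continuousAt_rpow_const 0 _ (Or.inr (by norm_num))
    have h := hcont.tendsto.comp hq
    rwa [Real.zero_rpow (by norm_num)] at h
  set ε : ℕ → ℝ := fun n => (m:ℝ)^2 / (V n : ℝ) + (numEdges F : ℝ) * δ n with hε
  have hεlim : Tendsto ε atTop (nhds 0) := by
    have t1 : Tendsto (fun n => (m:ℝ)^2 / (V n : ℝ)) atTop (nhds 0) :=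
      Tendsto.div_atTop tendsto_const_nhds hVR
    have t2 := hδlim.const_mul ((numEdges F : ℝ))
    simpa using t1.add t2
  have KEY : ∀ (n : ℕ) (U : Fin m → Finset (Fin (V n))),
      |(labCount F (G n) U : ℝ) - p ^ numEdges F * ∏ i, ((U i).card : ℝ)|
        ≤ ε n * (V n : ℝ)^m := by
    intro n U
    by_cases hn : V n = 0
    · haveI hie : IsEmpty (Fin (V n)) := by rw [hn]; infer_instance
      haveI : Nonempty (Fin m) := ⟨i0⟩
      have hlab : labCount F (G n) U = 0 := by
        rw [labCount]
        exact Nat.card_of_isEmpty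
      have hprod : (∏ i, ((U i).card : ℝ)) = 0 := by
        apply Finset.prod_eq_zero (Finset.mem_univ i0)
        rw [Finset.eq_empty_of_isEmpty (U i0)]
        simp
      have hvn : ((V n : ℝ))^m = 0 := by
        rw [hn]
        push_cast
        exact zero_pow hm0
      rw [hlab, hprod, hvn, mul_zero]
      simp
    · have hn1 : 1 ≤ V n := by omega
      haveI : Nonempty (Fin (V n)) := ⟨⟨0, by omega⟩⟩
      have hNpos : (0:ℝ) < (V n : ℝ) := by exact_mod_cast hn1
      set B : ℝ := δ n * (V n : ℝ)^2 with hB_def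
      have hq0 : 0 ≤ QR5.qsum (G n) p / (V n : ℝ)^4 :=
        div_nonneg (QR5.qsum_nonneg _ _) (by positivity)
      have hδ4 : (δ n)^(4:ℕ) = QR5.qsum (G n) p / (V n : ℝ)^4 := by
        show (((QR5.qsum (G n) p / (V n : ℝ)^4) ^ ((4:ℝ)⁻¹)))^(4:ℕ) = _
        rw [← Real.rpow_natCast ((QR5.qsum (G n) p / (V n : ℝ)^4) ^ ((4:ℝ)⁻¹)) 4,
          ← Real.rpow_mul hq0]
        norm_num
      have hB : ∀ g h : Fin (V n) → ℝ, (∀ x, 0 ≤ g x ∧ g x ≤ 1) →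
          (∀ x, 0 ≤ h x ∧ h x ≤ 1) →
          |∑ x, ∑ y, QR5.fdev (G n) p x y * g x * h y| ≤ B := by
        intro g h hg hh
        have hcs := QR5.cs_bound (G n) p g h hg hh
        rw [Fintype.card_fin] at hcs
        have hB4 : B^(4:ℕ) = (V n : ℝ)^4 * QR5.qsum (G n) p := by
          rw [hB_def, mul_pow, hδ4]
          have hne0 : (V n : ℝ) ≠ 0 := ne_of_gt hNpos
          field_simp
        have habs : |∑ x, ∑ y, QR5.fdev (G n) p x y * g x * h y|^(4:ℕ) ≤ B^(4:ℕ) := by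
          rw [hB4, ← abs_pow, abs_of_nonneg (by positivity :
            (0:ℝ) ≤ (∑ x, ∑ y, QR5.fdev (G n) p x y * g x * h y)^(4:ℕ))]
          exact hcs
        have hBpos : 0 ≤ B := mul_nonneg (hδ0 n) (by positivity)
        exact (pow_le_pow_iff_left₀ (abs_nonneg _) hBpos (by norm_num)).1 habs
      have hbound := QR5.labCount_bound (G n) p hp0 hp1 hB F U
      rw [Fintype.card_fin] at hbound
      have harith : (m:ℝ)^2 * (V n : ℝ)^(m-1)
          + (numEdges F : ℝ) * (B * (V n : ℝ)^(m-2)) = ε n * (V n : ℝ)^m := by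
        have e1 : (V n : ℝ)^m = (V n : ℝ)^(m-1) * (V n : ℝ) := by
          rw [← pow_succ]
          congr 1
          omega
        have e2 : (V n : ℝ)^m = (V n : ℝ)^(m-2) * (V n : ℝ)^2 := by
          rw [← pow_add]
          congr 1
          omega
        have t1 : (m:ℝ)^2 / (V n : ℝ) * (V n : ℝ)^m = (m:ℝ)^2 * (V n : ℝ)^(m-1) := by
          rw [e1]
          field_simp
        have t2 : (numEdges F : ℝ) * δ n * (V n : ℝ)^m
            = (numEdges F : ℝ) * (B * (V n : ℝ)^(m-2)) := by
          rw [e2, hB_def]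
          ring
        show _ = ((m:ℝ)^2 / (V n : ℝ) + (numEdges F : ℝ) * δ n) * (V n : ℝ)^m
        rw [add_mul, t1, t2]
      rw [← harith]
      exact hbound
  refine ⟨ε, hεlim, fun n U => ⟨KEY n U, ?_⟩⟩
  have hprodperm : ∀ σ : Equiv.Perm (Fin m),
      (∏ i, ((U (σ i)).card : ℝ)) = ∏ i, ((U i).card : ℝ) :=
    fun σ => Equiv.prod_comp σ (fun i => ((U i).card : ℝ))
  have hfact : (0:ℝ) < (m.factorial : ℝ) := by exact_mod_cast m.factorial_pos
  have hdec : symCount F (G n) U - p ^ numEdges F * ∏ i, ((U i).card : ℝ)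
      = (m.factorial : ℝ)⁻¹ * ∑ σ : Equiv.Perm (Fin m),
          ((labCount F (G n) (fun i => U (σ i)) : ℝ)
            - p ^ numEdges F * ∏ i, ((U (σ i)).card : ℝ)) := by
    rw [Finset.sum_sub_distrib, mul_sub, symCount]
    congr 1
    have hsum0 : ∑ σ : Equiv.Perm (Fin m), p ^ numEdges F * ∏ i, ((U (σ i)).card : ℝ)
        = (m.factorial : ℝ) * (p ^ numEdges F * ∏ i, ((U i).card : ℝ)) := by
      rw [Finset.sum_congr rfl (fun σ _ => by rw [hprodperm σ]), Finset.sum_const,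
        Finset.card_univ, Fintype.card_perm, Fintype.card_fin, nsmul_eq_mul]
    rw [hsum0, ← mul_assoc, inv_mul_cancel₀ (ne_of_gt hfact), one_mul]
  rw [hdec, abs_mul, abs_of_pos (inv_pos.2 hfact)]
  have hin : |∑ σ : Equiv.Perm (Fin m),
      ((labCount F (G n) (fun i => U (σ i)) : ℝ)
        - p ^ numEdges F * ∏ i, ((U (σ i)).card : ℝ))|
      ≤ (m.factorial : ℝ) * (ε n * (V n : ℝ)^m) := by
    calc |∑ σ : Equiv.Perm (Fin m), _| ≤ ∑ σ : Equiv.Perm (Fin m),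
          |(labCount F (G n) (fun i => U (σ i)) : ℝ)
            - p ^ numEdges F * ∏ i, ((U (σ i)).card : ℝ)| :=
        Finset.abs_sum_le_sum_abs _ _
      _ ≤ ∑ _σ : Equiv.Perm (Fin m), ε n * (V n : ℝ)^m :=
        Finset.sum_le_sum fun σ _ => KEY n (fun i => U (σ i))
      _ = (m.factorial : ℝ) * (ε n * (V n : ℝ)^m) := by
        rw [Finset.sum_const, Finset.card_univ, Fintype.card_perm, Fintype.card_fin,
          nsmul_eq_mul]
  calc (m.factorial : ℝ)⁻¹ * |∑ σ : Equiv.Perm (Fin m),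
        ((labCount F (G n) (fun i => U (σ i)) : ℝ)
          - p ^ numEdges F * ∏ i, ((U (σ i)).card : ℝ))|
      ≤ (m.factorial : ℝ)⁻¹ * ((m.factorial : ℝ) * (ε n * (V n : ℝ)^m)) :=
        mul_le_mul_of_nonneg_left hin (inv_nonneg.2 hfact.le)
    _ = ε n * (V n : ℝ)^m := by
        rw [← mul_assoc, inv_mul_cancel₀ (ne_of_gt hfact), one_mul]
end

section
/- Let F be a labelled graph with m = |F| vertices, let W be a graphon, let p ∈ [0,1], and let α_1,…,α_m ∈ (0,1) with Σ_{i=1}^m α_i < 1. Then W satisfies P^W(F;α_1,…,α_m) if and only if Ψ_{F,W}(x_1,…,x_m) = p^{e(F)} for a.e. (x_1,…,x_m) ∈ [0,1]^m. -/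
open Filter Finset Asymptotics MeasureTheory

/-- A graphon: a symmetric measurable function `[0,1]² → [0,1]`
(encoded as a function on all of `ℝ × ℝ`). -/
def IsGraphon (W : ℝ → ℝ → ℝ) : Prop :=
  Measurable (Function.uncurry W) ∧ (∀ x y, W x y = W y x) ∧
    ∀ x y, W x y ∈ Set.Icc (0 : ℝ) 1

open Classical in
/-- `Ψ_{F,W}(x₁,…,x_m) = ∏_{ij ∈ E(F)} W(x_i,x_j)`. -/
noncomputable def psi {m : ℕ} (F : SimpleGraph (Fin m)) (W : ℝ → ℝ → ℝ)
    (x : Fin m → ℝ) : ℝ :=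
  ∏ i : Fin m, ∏ j : Fin m, if i < j ∧ F.Adj i j then W (x i) (x j) else 1

/-- `Ψ̃_{F,W}`, the symmetrization of `Ψ_{F,W}` over the `m` coordinates. -/
noncomputable def psiSym {m : ℕ} (F : SimpleGraph (Fin m)) (W : ℝ → ℝ → ℝ)
    (x : Fin m → ℝ) : ℝ :=
  ((m.factorial : ℝ))⁻¹ * ∑ σ : Equiv.Perm (Fin m), psi F W (fun i => x (σ i))

/-- The unit cube `[0,1]^m`. -/
def unitBox (m : ℕ) : Set (Fin m → ℝ) := Set.univ.pi fun _ => Set.Icc (0 : ℝ) 1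

/-- The unit square `[0,1]²`. -/
def unitSquare : Set (ℝ × ℝ) := Set.Icc (0 : ℝ) 1 ×ˢ Set.Icc (0 : ℝ) 1

/-- The graphon property `P^W(F;α₁,…,α_m)`:
`∫_{A₁×⋯×A_m} Ψ_{F,W} = p^(e F) ∏ λ(A_i)` for all pairwise disjoint measurable
`A₁,…,A_m ⊆ [0,1]` with `λ(A_i) = α_i`. -/
def GraphonP {m : ℕ} (F : SimpleGraph (Fin m)) (W : ℝ → ℝ → ℝ) (p : ℝ)
    (α : Fin m → ℝ) : Prop :=
  ∀ A : Fin m → Set ℝ, (∀ i, MeasurableSet (A i)) → (∀ i, A i ⊆ Set.Icc 0 1) →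
    Pairwise (fun i j => Disjoint (A i) (A j)) →
    (∀ i, volume (A i) = ENNReal.ofReal (α i)) →
    ∫ x in Set.univ.pi A, psi F W x = p ^ numEdges F * ∏ i, α i

/-- The graphon property `P̃^W(F;α₁,…,α_m)`: as `GraphonP` but with `Ψ̃_{F,W}`. -/
def GraphonPt {m : ℕ} (F : SimpleGraph (Fin m)) (W : ℝ → ℝ → ℝ) (p : ℝ)
    (α : Fin m → ℝ) : Prop :=
  ∀ A : Fin m → Set ℝ, (∀ i, MeasurableSet (A i)) → (∀ i, A i ⊆ Set.Icc 0 1) →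
    Pairwise (fun i j => Disjoint (A i) (A j)) →
    (∀ i, volume (A i) = ENNReal.ofReal (α i)) →
    ∫ x in Set.univ.pi A, psiSym F W x = p ^ numEdges F * ∏ i, α i



section helpers

variable {m : ℕ} {F : SimpleGraph (Fin m)} {W : ℝ → ℝ → ℝ}

lemma psi_nonneg (hW : IsGraphon W) (x : Fin m → ℝ) : 0 ≤ psi F W x := by
  apply Finset.prod_nonneg; intro i _
  apply Finset.prod_nonneg; intro j _
  split_ifs
  · exact (hW.2.2 (x i) (x j)).1
  · norm_num

lemma psi_le_one (hW : IsGraphon W) (x : Fin m → ℝ) : psi F W x ≤ 1 := by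
  apply Finset.prod_le_one
  · intro i _
    apply Finset.prod_nonneg; intro j _
    split_ifs
    · exact (hW.2.2 (x i) (x j)).1
    · norm_num
  · intro i _
    apply Finset.prod_le_one
    · intro j _; split_ifs
      · exact (hW.2.2 (x i) (x j)).1
      · norm_num
    · intro j _; split_ifs
      · exact (hW.2.2 (x i) (x j)).2
      · norm_num

lemma psi_measurable (hW : IsGraphon W) : Measurable (psi F W) := by
  apply Finset.measurable_prod; intro i _
  apply Finset.measurable_prod; intro j _
  split_ifs
  · have h : Measurable fun x : Fin m → ℝ => (x i, x j) :=
      (measurable_pi_apply i).prodMk (measurable_pi_apply j)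
    exact hW.1.comp h
  · exact measurable_const

lemma psi_integrableOn (hW : IsGraphon W) {s : Set (Fin m → ℝ)}
    (hfin : volume s ≠ ⊤) : IntegrableOn (psi F W) s := by
  apply Measure.integrableOn_of_bounded hfin (psi_measurable hW).aestronglyMeasurable (M := 1)
  filter_upwards with x
  rw [Real.norm_eq_abs, abs_le]
  exact ⟨by linarith [psi_nonneg (F := F) hW x], psi_le_one hW x⟩

lemma vol_ne_top {s : Set ℝ} (hs : s ⊆ Set.Icc 0 1) : volume s ≠ ⊤ := by
  refine ne_top_of_le_ne_top ?_ (measure_mono hs)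
  simp [Real.volume_Icc]

/-- Existence of a measurable subset of prescribed measure, for subsets of `[0,1]`. -/
lemma exists_subset_volume_eq {S : Set ℝ} (hSm : MeasurableSet S) (hS1 : S ⊆ Set.Icc 0 1)
    {r : ℝ} (hr : 0 ≤ r) (hrS : ENNReal.ofReal r ≤ volume S) :
    ∃ C, MeasurableSet C ∧ C ⊆ S ∧ volume C = ENNReal.ofReal r := by
  set f : ℝ → ℝ := fun t => (volume (S ∩ Set.Iic t)).toReal with hf
  have hfin : ∀ t, volume (S ∩ Set.Iic t) ≠ ⊤ := fun t =>
    vol_ne_top fun x hx => hS1 hx.1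
  have hlip : LipschitzWith 1 f := by
    apply LipschitzWith.of_dist_le_mul
    intro a b
    wlog hab : b ≤ a generalizing a b
    · rw [dist_comm a b, dist_comm (f a) (f b)]; exact this b a (le_of_not_ge hab)
    have hsub : S ∩ Set.Iic a ⊆ (S ∩ Set.Iic b) ∪ Set.Ioc b a := by
      rintro x ⟨hxS, hxa⟩
      by_cases hxb : x ≤ b
      · exact Or.inl ⟨hxS, hxb⟩
      · exact Or.inr ⟨lt_of_not_ge hxb, hxa⟩
    have h1 : f a ≤ f b + (a - b) := by
      have hmono := measure_mono (μ := volume) hsub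
      have h3 : volume (S ∩ Set.Iic a) ≤ volume (S ∩ Set.Iic b) + ENNReal.ofReal (a - b) := by
        refine hmono.trans ((measure_union_le _ _).trans ?_)
        rw [Real.volume_Ioc]
      calc f a ≤ ((volume (S ∩ Set.Iic b)) + ENNReal.ofReal (a - b)).toReal := by
                  apply ENNReal.toReal_mono _ h3
                  exact ENNReal.add_ne_top.2 ⟨hfin b, ENNReal.ofReal_ne_top⟩
        _ = f b + (a - b) := by
                  rw [ENNReal.toReal_add (hfin b) ENNReal.ofReal_ne_top,
                    ENNReal.toReal_ofReal (by linarith)]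
    have h0 : f b ≤ f a := by
      apply ENNReal.toReal_mono (hfin a)
      exact measure_mono (Set.inter_subset_inter_right _ (Set.Iic_subset_Iic.2 hab))
    rw [Real.dist_eq, Real.dist_eq, abs_of_nonneg (by linarith), abs_of_nonneg (by linarith),
      NNReal.coe_one, one_mul]
    linarith
  have hc : Continuous f := hlip.continuous
  have hfm1 : f (-1) = 0 := by
    have : S ∩ Set.Iic (-1) = ∅ := by
      ext x; simp only [Set.mem_inter_iff, Set.mem_Iic, Set.mem_empty_iff_false, iff_false]
      rintro ⟨hxS, hx1⟩
      have := (hS1 hxS).1; linarith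
    simp [hf, this]
  have hf2 : r ≤ f 2 := by
    have : S ∩ Set.Iic 2 = S := by
      apply Set.inter_eq_self_of_subset_left
      intro x hx; exact le_trans (hS1 hx).2 (by norm_num)
    rw [hf]; simp only [this]
    rw [← ENNReal.toReal_ofReal hr]
    exact ENNReal.toReal_mono (vol_ne_top hS1) hrS
  have : r ∈ Set.Icc (f (-1)) (f 2) := ⟨by rw [hfm1]; exact hr, hf2⟩
  obtain ⟨t, _, ht⟩ := intermediate_value_Icc (by norm_num : (-1:ℝ) ≤ 2) hc.continuousOn this
  refine ⟨S ∩ Set.Iic t, hSm.inter measurableSet_Iic, Set.inter_subset_left, ?_⟩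
  rw [← ENNReal.ofReal_toReal (hfin t)]
  exact congrArg ENNReal.ofReal ht

end helpers

section nulinear

/-- Core lemma: an additive, nonnegative, dominated set functional on subsets of `X ⊆ [0,1]`
which is constant (`= K`) on sets of measure `αk` is linear on small sets. -/
lemma nu_linear {X : Set ℝ} (hXm : MeasurableSet X) (hX1 : X ⊆ Set.Icc 0 1)
    (ν : Set ℝ → ℝ) {αk η K : ℝ} (hαk : 0 < αk) (hη : 0 < η)
    (hXbig : ENNReal.ofReal (αk + η) ≤ volume X)
    (hadd : ∀ B C, MeasurableSet B → MeasurableSet C → B ⊆ X → C ⊆ X → Disjoint B C →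
      ν (B ∪ C) = ν B + ν C)
    (hbd : ∀ B, MeasurableSet B → B ⊆ X → ν B ≤ (volume B).toReal)
    (hpos : ∀ B, MeasurableSet B → B ⊆ X → 0 ≤ ν B)
    (hK : ∀ B, MeasurableSet B → B ⊆ X → volume B = ENNReal.ofReal αk → ν B = K) :
    ∀ B, MeasurableSet B → B ⊆ X → ∀ t, 0 ≤ t → t ≤ η / 2 →
      volume B = ENNReal.ofReal t → ν B = K * t / αk := by
  have hvolX : ENNReal.ofReal αk ≤ volume X :=
    le_trans (ENNReal.ofReal_le_ofReal (by linarith)) hXbig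
  -- L1 : exchange lemma
  have L1 : ∀ s, 0 ≤ s → s ≤ αk → 2 * s ≤ η → ∀ B B', MeasurableSet B → MeasurableSet B' →
      B ⊆ X → B' ⊆ X → volume B = ENNReal.ofReal s → volume B' = ENNReal.ofReal s →
      ν B = ν B' := by
    -- first the disjoint case
    have Ldis : ∀ s, 0 ≤ s → s ≤ αk → 2 * s ≤ η → ∀ B B', MeasurableSet B → MeasurableSet B' →
        B ⊆ X → B' ⊆ X → volume B = ENNReal.ofReal s → volume B' = ENNReal.ofReal s →
        Disjoint B B' → ν B = ν B' := by
      intro s hs0 hsα hsη B B' hBm hB'm hBX hB'X hBv hB'v hdis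
      -- pad set C of measure αk - s inside X \ (B ∪ B')
      have hYm : MeasurableSet (X \ (B ∪ B')) := hXm.diff (hBm.union hB'm)
      have hYvol : ENNReal.ofReal (αk - s) ≤ volume (X \ (B ∪ B')) := by
        have h1 : volume X - volume (B ∪ B') ≤ volume (X \ (B ∪ B')) := le_measure_diff
        have h2 : volume (B ∪ B') ≤ ENNReal.ofReal (2 * s) := by
          refine (measure_union_le _ _).trans ?_
          rw [hBv, hB'v, ← ENNReal.ofReal_add hs0 hs0]
          apply ENNReal.ofReal_le_ofReal; linarith
        refine le_trans ?_ h1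
        have : ENNReal.ofReal (αk - s) ≤ ENNReal.ofReal (αk + η) - ENNReal.ofReal (2 * s) := by
          rw [← ENNReal.ofReal_sub _ (by linarith)]
          apply ENNReal.ofReal_le_ofReal; linarith
        refine this.trans (tsub_le_tsub hXbig h2)
      obtain ⟨C, hCm, hCY, hCv⟩ := exists_subset_volume_eq hYm
        (fun x hx => hX1 hx.1) (by linarith) hYvol
      have hCX : C ⊆ X := fun x hx => (hCY hx).1
      have hCB : Disjoint C B := by
        rw [Set.disjoint_left]; intro x hx hxB; exact (hCY hx).2 (Or.inl hxB)
      have hCB' : Disjoint C B' := by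
        rw [Set.disjoint_left]; intro x hx hxB; exact (hCY hx).2 (Or.inr hxB)
      have hvol : ∀ D : Set ℝ, volume D = ENNReal.ofReal s → Disjoint D C →
          volume (D ∪ C) = ENNReal.ofReal αk := by
        intro D hDv hDC
        rw [measure_union hDC hCm, hDv, hCv, ← ENNReal.ofReal_add hs0 (by linarith)]
        congr 1; ring
      have e1 : ν (B ∪ C) = K := hK _ (hBm.union hCm) (Set.union_subset hBX hCX)
        (hvol B hBv hCB.symm)
      have e2 : ν (B' ∪ C) = K := hK _ (hB'm.union hCm) (Set.union_subset hB'X hCX)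
        (hvol B' hB'v hCB'.symm)
      have a1 : ν (B ∪ C) = ν B + ν C := hadd B C hBm hCm hBX hCX hCB.symm
      have a2 : ν (B' ∪ C) = ν B' + ν C := hadd B' C hB'm hCm hB'X hCX hCB'.symm
      have := e1.trans e2.symm
      rw [a1, a2] at this; linarith
    intro s hs0 hsα hsη B B' hBm hB'm hBX hB'X hBv hB'v
    -- general case: split into symmetric difference parts
    have hfinB : volume B ≠ ⊤ := by rw [hBv]; exact ENNReal.ofReal_ne_top
    have hIm : MeasurableSet (B ∩ B') := hBm.inter hB'm
    have hIfin : volume (B ∩ B') ≠ ⊤ :=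
      ne_top_of_le_ne_top hfinB (measure_mono Set.inter_subset_left)
    set s₂ : ℝ := (volume (B \ B')).toReal with hs₂
    have hDv : volume (B \ B') = ENNReal.ofReal s₂ := by
      rw [hs₂, ENNReal.ofReal_toReal (ne_top_of_le_ne_top hfinB (measure_mono Set.diff_subset))]
    have hD'v : volume (B' \ B) = ENNReal.ofReal s₂ := by
      have hIfin' : volume (B' ∩ B) ≠ ⊤ := by rw [Set.inter_comm]; exact hIfin
      have h1 : volume (B \ B') = volume B - volume (B ∩ B') := by
        rw [← Set.diff_self_inter, measure_diff Set.inter_subset_left hIm.nullMeasurableSet hIfin]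
      have h2 : volume (B' \ B) = volume B' - volume (B' ∩ B) := by
        rw [← Set.diff_self_inter,
          measure_diff Set.inter_subset_left (hB'm.inter hBm).nullMeasurableSet hIfin']
      rw [h2, Set.inter_comm, hB'v, ← hBv, ← h1, hDv]
    have hs₂0 : 0 ≤ s₂ := ENNReal.toReal_nonneg
    have hs₂s : s₂ ≤ s := by
      have := measure_mono (μ := volume) (Set.diff_subset (s := B) (t := B'))
      rw [hBv] at this
      calc s₂ ≤ (ENNReal.ofReal s).toReal := ENNReal.toReal_mono ENNReal.ofReal_ne_top
                (hDv ▸ this)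
        _ = s := ENNReal.toReal_ofReal hs0
    have hDD' : ν (B \ B') = ν (B' \ B) :=
      Ldis s₂ hs₂0 (by linarith) (by linarith) _ _ (hBm.diff hB'm) (hB'm.diff hBm)
        (fun x hx => hBX hx.1) (fun x hx => hB'X hx.1) hDv hD'v
        (Set.disjoint_left.2 fun x hx hx' => hx.2 hx'.1)
    have hB_split : ν B = ν (B \ B') + ν (B ∩ B') := by
      rw [← hadd _ _ (hBm.diff hB'm) hIm (fun x hx => hBX hx.1)
        (fun x hx => hBX hx.1) (Set.disjoint_left.2 fun x hx hx' => hx.2 hx'.2)]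
      rw [Set.diff_union_inter]
    have hB'_split : ν B' = ν (B' \ B) + ν (B' ∩ B) := by
      rw [← hadd _ _ (hB'm.diff hBm) (hB'm.inter hBm) (fun x hx => hB'X hx.1)
        (fun x hx => hB'X hx.1) (Set.disjoint_left.2 fun x hx hx' => hx.2 hx'.2)]
      rw [Set.diff_union_inter]
    rw [hB_split, hB'_split, hDD', Set.inter_comm]
  -- L3 : value on multiples
  have L3 : ∀ q : ℕ, ∀ u, 0 ≤ u → u ≤ αk → 2 * u ≤ η → ∀ B B₀,
      MeasurableSet B → MeasurableSet B₀ → B ⊆ X → B₀ ⊆ X →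
      volume B = ENNReal.ofReal (q * u) → volume B₀ = ENNReal.ofReal u →
      ν B = q * ν B₀ := by
    intro q
    induction q with
    | zero =>
      intro u hu0 _ _ B B₀ hBm _ hBX _ hBv _
      have h1 : ν B ≤ 0 := by
        have := hbd B hBm hBX
        rw [hBv] at this; simpa using this
      have h2 : 0 ≤ ν B := hpos B hBm hBX
      rw [Nat.cast_zero, zero_mul]; linarith
    | succ q ih =>
      intro u hu0 huα huη B B₀ hBm hB₀m hBX hB₀X hBv hB₀v
      have hq1u : 0 ≤ (q + 1 : ℝ) * u := by positivity
      have hle : ENNReal.ofReal u ≤ volume B := by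
        rw [hBv]; apply ENNReal.ofReal_le_ofReal
        push_cast
        nlinarith [Nat.cast_nonneg (α := ℝ) q]
      obtain ⟨C, hCm, hCB, hCv⟩ := exists_subset_volume_eq hBm
        (fun x hx => hX1 (hBX hx)) hu0 hle
      have hCfin : volume C ≠ ⊤ := by rw [hCv]; exact ENNReal.ofReal_ne_top
      have hBC : volume (B \ C) = ENNReal.ofReal (q * u) := by
        rw [measure_diff hCB hCm.nullMeasurableSet hCfin, hBv, hCv,
          ← ENNReal.ofReal_sub _ hu0]
        congr 1
        push_cast; ring
      have hsplit : ν B = ν C + ν (B \ C) := by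
        rw [← hadd _ _ hCm (hBm.diff hCm) (fun x hx => hBX (hCB hx))
          (fun x hx => hBX hx.1) (Set.disjoint_left.2 fun x hx hx' => hx'.2 hx)]
        rw [Set.union_diff_cancel hCB]
      have hC0 : ν C = ν B₀ := L1 u hu0 huα huη C B₀ hCm hB₀m
        (fun x hx => hBX (hCB hx)) hB₀X hCv hB₀v
      have hrec : ν (B \ C) = q * ν B₀ := ih u hu0 huα huη _ B₀ (hBm.diff hCm) hB₀m
        (fun x hx => hBX hx.1) hB₀X hBC hB₀v
      rw [hsplit, hC0, hrec]
      push_cast; ring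
  -- main argument
  intro B hBm hBX t ht0 htη hBv
  have habs : ∀ N : ℕ, 2 * αk / η ≤ N → 1 ≤ N → |ν B - K * t / αk| ≤ 2 * K / N := by
    intro N hNη hN1
    have hN0 : (0:ℝ) < N := by exact_mod_cast hN1
    have hN1' : (1:ℝ) ≤ N := by exact_mod_cast hN1
    set u : ℝ := αk / N with hu
    have hu0 : 0 < u := by positivity
    have huα : u ≤ αk := by
      rw [hu, div_le_iff₀ hN0]; nlinarith
    have huη : 2 * u ≤ η := by
      have h2 : 2 * αk ≤ N * η := (div_le_iff₀ hη).1 hNη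
      have : 2 * u = 2 * αk / N := by rw [hu]; ring
      rw [this, div_le_iff₀ hN0]
      linarith [mul_comm (N:ℝ) η]
    -- reference set B₀ of measure u
    obtain ⟨B₀, hB₀m, hB₀X, hB₀v⟩ := exists_subset_volume_eq (r := u) hXm hX1 hu0.le
      (le_trans (ENNReal.ofReal_le_ofReal (by linarith)) hvolX)
    -- full set F of measure αk
    obtain ⟨Fs, hFm, hFX, hFv⟩ := exists_subset_volume_eq (r := αk) hXm hX1 hαk.le hvolX
    have hFval : ν Fs = K := hK Fs hFm hFX hFv
    have hNu : (N:ℝ) * u = αk := by rw [hu]; field_simp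
    have hFval' : ν Fs = N * ν B₀ := by
      apply L3 N u hu0.le huα huη Fs B₀ hFm hB₀m hFX hB₀X ?_ hB₀v
      rw [hFv, hNu]
    have hνB₀ : ν B₀ = K / N := by
      rw [eq_div_iff hN0.ne']
      rw [hFval] at hFval'
      linarith
    have hK0 : 0 ≤ K := hFval ▸ hpos Fs hFm hFX
    set q : ℕ := ⌊t / u⌋₊ with hq
    have hqu : q * u ≤ t := by
      rw [hq]
      calc (⌊t / u⌋₊ : ℝ) * u ≤ t / u * u := by
            apply mul_le_mul_of_nonneg_right (Nat.floor_le (by positivity)) hu0.le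
        _ = t := by field_simp
    have htq1 : t ≤ (q + 1) * u := by
      have := (Nat.lt_floor_add_one (t / u)).le
      calc t = t / u * u := by field_simp
        _ ≤ (q + 1) * u := mul_le_mul_of_nonneg_right (by exact_mod_cast this) hu0.le
    -- lower bound
    have hlow : (q : ℝ) * (K / N) ≤ ν B := by
      obtain ⟨C, hCm, hCB, hCv⟩ := exists_subset_volume_eq (r := (q:ℝ) * u) hBm
        (fun x hx => hX1 (hBX hx)) (by positivity)
        (by rw [hBv]; exact ENNReal.ofReal_le_ofReal hqu)
      have hCval : ν C = q * ν B₀ := L3 q u hu0.le huα huη C B₀ hCm hB₀m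
        (fun x hx => hBX (hCB hx)) hB₀X hCv hB₀v
      have : ν B = ν C + ν (B \ C) := by
        rw [← hadd _ _ hCm (hBm.diff hCm) (fun x hx => hBX (hCB hx))
          (fun x hx => hBX hx.1) (Set.disjoint_left.2 fun x hx hx' => hx'.2 hx),
          Set.union_diff_cancel hCB]
      have hd := hpos _ (hBm.diff hCm) (fun x hx => hBX hx.1)
      rw [hνB₀] at hCval; linarith
    -- upper bound
    have hup : ν B ≤ ((q : ℝ) + 1) * (K / N) := by
      have hroom : ENNReal.ofReal ((q + 1) * u - t) ≤ volume (X \ B) := by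
        have h1 : volume X - volume B ≤ volume (X \ B) := le_measure_diff
        refine le_trans ?_ h1
        rw [hBv]
        have : ENNReal.ofReal ((q+1) * u - t) ≤ ENNReal.ofReal (αk + η) - ENNReal.ofReal t := by
          rw [← ENNReal.ofReal_sub _ ht0]
          apply ENNReal.ofReal_le_ofReal
          nlinarith
        exact this.trans (tsub_le_tsub hXbig le_rfl)
      obtain ⟨D, hDm, hDX, hDv⟩ := exists_subset_volume_eq (r := ((q:ℝ)+1)*u - t)
        (hXm.diff hBm) (fun x hx => hX1 hx.1) (by linarith) hroom
      have hDB : Disjoint B D := Set.disjoint_left.2 fun x hx hx' => (hDX hx').2 hx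
      have hBDv : volume (B ∪ D) = ENNReal.ofReal ((q + 1 : ℕ) * u) := by
        rw [measure_union hDB hDm, hBv, hDv, ← ENNReal.ofReal_add ht0 (by linarith)]
        congr 1
        push_cast; ring
      have hBDval : ν (B ∪ D) = (q + 1 : ℕ) * ν B₀ :=
        L3 (q+1) u hu0.le huα huη (B ∪ D) B₀ (hBm.union hDm) hB₀m
          (Set.union_subset hBX (fun x hx => (hDX hx).1)) hB₀X hBDv hB₀v
      have hsplit : ν (B ∪ D) = ν B + ν D :=
        hadd B D hBm hDm hBX (fun x hx => (hDX hx).1) hDB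
      have hd := hpos D hDm (fun x hx => (hDX hx).1)
      rw [hνB₀] at hBDval
      push_cast at hBDval
      linarith
    -- and the target is in the same interval
    have htarget_low : (q : ℝ) * (K / N) ≤ K * t / αk := by
      have h1 : (q : ℝ) * u / αk = q / N := by rw [hu]; field_simp
      calc (q:ℝ) * (K/N) = K * ((q:ℝ) * u) / αk := by rw [hu]; field_simp
        _ ≤ K * t / αk := by
            apply div_le_div_of_nonneg_right _ hαk.le
            exact mul_le_mul_of_nonneg_left hqu hK0
    have htarget_up : K * t / αk ≤ ((q : ℝ) + 1) * (K / N) := by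
      calc K * t / αk ≤ K * (((q:ℝ)+1) * u) / αk := by
            apply div_le_div_of_nonneg_right _ hαk.le
            exact mul_le_mul_of_nonneg_left htq1 hK0
        _ = ((q:ℝ)+1) * (K/N) := by rw [hu]; field_simp
    have hexp : ((q:ℝ)+1)*(K/N) = (q:ℝ)*(K/N) + K/N := by ring
    have hKN : (0:ℝ) ≤ K / N := by positivity
    have h2KN : K / N ≤ 2 * K / N := by
      have hh : 2 * K / N = K / N + K / N := by ring
      linarith
    rw [abs_le]
    constructor
    · linarith
    · linarith
  -- conclude
  obtain ⟨Fs, hFm, hFX, hFv⟩ := exists_subset_volume_eq (r := αk) hXm hX1 hαk.le hvolX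
  have hK0 : 0 ≤ K := (hK Fs hFm hFX hFv) ▸ hpos Fs hFm hFX
  by_contra hne
  set d := |ν B - K * t / αk| with hd
  have habs0 : 0 < d := abs_pos.2 (sub_ne_zero.2 hne)
  obtain ⟨N, hN⟩ := exists_nat_gt (max (max (2 * αk / η) 1) (2 * K / d))
  have hNa : 2 * αk / η ≤ N := le_of_lt (lt_of_le_of_lt (le_max_of_le_left (le_max_left _ _)) hN)
  have hN1 : 1 ≤ N := by
    have : (1:ℝ) ≤ N := le_of_lt (lt_of_le_of_lt (le_max_of_le_left (le_max_right _ _)) hN)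
    exact_mod_cast this
  have hN0 : (0:ℝ) < N := by exact_mod_cast hN1
  have hdle : d ≤ 2 * K / N := habs N hNa hN1
  have hKd : 2 * K / d < N := lt_of_le_of_lt (le_max_right _ _) hN
  have h2K : 2 * K < N * d := (div_lt_iff₀ habs0).1 hKd
  have : 2 * K / N < d := by
    rw [div_lt_iff₀ hN0]
    linarith [mul_comm (N:ℝ) d]
  linarith

end nulinear

section induction

variable {m : ℕ} {F : SimpleGraph (Fin m)} {W : ℝ → ℝ → ℝ}

lemma mem_pi_update_iff {A : Fin m → Set ℝ} {kk : Fin m} {B : Set ℝ} {x : Fin m → ℝ} :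
    x ∈ Set.univ.pi (Function.update A kk B) ↔ x kk ∈ B ∧ ∀ i, i ≠ kk → x i ∈ A i := by
  rw [Set.mem_univ_pi]
  constructor
  · intro h
    refine ⟨by simpa using h kk, fun i hi => by simpa [Function.update_of_ne hi] using h i⟩
  · rintro ⟨h1, h2⟩ i
    rcases eq_or_ne i kk with rfl | h
    · simpa using h1
    · simpa [Function.update_of_ne h] using h2 i h

lemma pi_update_union (A : Fin m → Set ℝ) (kk : Fin m) (B C : Set ℝ) :
    Set.univ.pi (Function.update A kk (B ∪ C)) =
      Set.univ.pi (Function.update A kk B) ∪ Set.univ.pi (Function.update A kk C) := by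
  ext x
  simp only [mem_pi_update_iff, Set.mem_union]
  tauto

lemma vol_pi_ne_top {A : Fin m → Set ℝ} (hA1 : ∀ i, A i ⊆ Set.Icc 0 1) :
    volume (Set.univ.pi A) ≠ ⊤ := by
  rw [volume_pi_pi]
  exact (ENNReal.prod_lt_top fun i _ => (vol_ne_top (hA1 i)).lt_top).ne

lemma vol_comp_le_one {s : Set ℝ} (hs : s ⊆ Set.Icc 0 1) : volume s ≤ 1 := by
  refine (measure_mono hs).trans ?_
  simp [Real.volume_Icc]

lemma Qinduct (hW : IsGraphon W) (α : Fin m → ℝ) (hα : ∀ i, 0 < α i)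
    (hsum : ∑ i, α i < 1) (c : ℝ)
    (base : ∀ A : Fin m → Set ℝ, (∀ i, MeasurableSet (A i)) → (∀ i, A i ⊆ Set.Icc 0 1) →
      Pairwise (fun i j => Disjoint (A i) (A j)) →
      (∀ i, volume (A i) = ENNReal.ofReal (α i)) →
      ∫ x in Set.univ.pi A, psi F W x = c * ∏ i, α i) :
    ∀ k : ℕ, k ≤ m →
      ∀ τ : Fin m → ℝ,
      (∀ i : Fin m, (i : ℕ) < k → 0 ≤ τ i ∧ τ i ≤ (1 - ∑ i, α i) / (2 * (m + 1))) →
      (∀ i : Fin m, k ≤ (i : ℕ) → τ i = α i) →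
      ∀ A : Fin m → Set ℝ, (∀ i, MeasurableSet (A i)) → (∀ i, A i ⊆ Set.Icc 0 1) →
      Pairwise (fun i j => Disjoint (A i) (A j)) →
      (∀ i, volume (A i) = ENNReal.ofReal (τ i)) →
      ∫ x in Set.univ.pi A, psi F W x = c * ∏ i, τ i := by
  have hε0 : 0 < 1 - ∑ i, α i := by linarith
  set ε := 1 - ∑ i, α i with hε
  set δ := ε / (2 * (m + 1)) with hδ
  have hδ0 : 0 < δ := by positivity
  intro k
  induction k with
  | zero =>
    intro _ τ _ hτge A hAm hA1 hdisj hAv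
    have hτα : τ = α := funext fun i => hτge i (Nat.zero_le _)
    rw [hτα] at hAv ⊢
    exact base A hAm hA1 hdisj hAv
  | succ k ih =>
    intro hk1 τ hτlt hτge A hAm hA1 hdisj hAv
    have hk : k < m := hk1
    have hm1 : 1 ≤ m := by omega
    set kk : Fin m := ⟨k, hk⟩ with hkk
    set U := ⋃ i, ⋃ (_ : i ≠ kk), A i with hU
    set X := Set.Icc (0:ℝ) 1 \ U with hX
    have hUm : MeasurableSet U :=
      MeasurableSet.iUnion fun i => MeasurableSet.iUnion fun _ => hAm i
    have hXm : MeasurableSet X := measurableSet_Icc.diff hUm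
    have hX1 : X ⊆ Set.Icc 0 1 := Set.diff_subset
    have hτ0 : ∀ i, 0 ≤ τ i := fun i => by
      rcases lt_or_ge (i : ℕ) (k + 1) with h | h
      · exact (hτlt i h).1
      · rw [hτge i h]; exact (hα i).le
    have hα0 : ∀ i : Fin m, 0 ≤ α i := fun i => (hα i).le
    -- bound the measure of U
    set S := ∑ i, (if i = kk then 0 else τ i) with hS
    have hS0 : 0 ≤ S := Finset.sum_nonneg fun i _ => by split_ifs <;> simp [hτ0 i]
    have hUv : volume U ≤ ENNReal.ofReal S := by
      refine (measure_iUnion_fintype_le _ _).trans ?_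
      have heq : ∀ i : Fin m, volume (⋃ (_ : i ≠ kk), A i) ≤
          ENNReal.ofReal (if i = kk then 0 else τ i) := by
        intro i
        rcases eq_or_ne i kk with rfl | h
        · simp
        · rw [if_neg h]
          have : (⋃ (_ : i ≠ kk), A i) = A i := by simp [h]
          rw [this, hAv i]
      refine (Finset.sum_le_sum fun i _ => heq i).trans ?_
      rw [← ENNReal.ofReal_sum_of_nonneg fun i _ => by split_ifs <;> simp [hτ0 i]]
    -- real bound on S
    have hSle : S ≤ m * δ + (∑ i, α i - α kk) := by
      have h1 : S ≤ (∑ i : Fin m, (if (i:ℕ) < k then δ else 0)) +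
          ∑ i : Fin m, (if i = kk then 0 else if (i:ℕ) < k then 0 else α i) := by
        rw [hS, ← Finset.sum_add_distrib]
        apply Finset.sum_le_sum
        intro i _
        rcases eq_or_ne i kk with rfl | h
        · simp only [if_pos rfl]
          split_ifs <;> simp [hδ0.le]
        · rw [if_neg h, if_neg h]
          rcases lt_or_ge (i:ℕ) k with h2 | h2
          · rw [if_pos h2, if_pos h2]
            have := hτlt i (by omega)
            linarith [this.2]
          · rw [if_neg (not_lt.2 h2), if_neg (not_lt.2 h2)]
            have hik : k + 1 ≤ (i:ℕ) := by
              rcases lt_or_eq_of_le h2 with h3 | h3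
              · omega
              · exfalso; exact h (Fin.ext h3.symm)
            rw [hτge i hik]
            linarith
      have h2 : (∑ i : Fin m, (if (i:ℕ) < k then δ else 0)) ≤ m * δ := by
        calc (∑ i : Fin m, (if (i:ℕ) < k then δ else 0)) ≤ ∑ _i : Fin m, δ :=
              Finset.sum_le_sum fun i _ => by split_ifs <;> simp [hδ0.le]
          _ = m * δ := by
              rw [Finset.sum_const, Finset.card_univ, Fintype.card_fin, nsmul_eq_mul]
      have h3 : (∑ i : Fin m, (if i = kk then 0 else if (i:ℕ) < k then 0 else α i)) ≤
          ∑ i, α i - α kk := by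
        rw [le_sub_iff_add_le]
        have : (∑ i : Fin m, (if i = kk then 0 else if (i:ℕ) < k then 0 else α i)) + α kk =
            ∑ i : Fin m, ((if i = kk then 0 else if (i:ℕ) < k then 0 else α i) +
              (if i = kk then α i else 0)) := by
          rw [Finset.sum_add_distrib, Finset.sum_ite_eq' Finset.univ kk α]
          simp
        rw [this]
        apply Finset.sum_le_sum
        intro i _
        rcases eq_or_ne i kk with rfl | h
        · simp
        · rw [if_neg h, if_neg h]
          split_ifs <;> simp [hα0 i]
      linarith
    have hmδ : (m : ℝ) * δ ≤ ε / 2 := by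
      have h1 : (0:ℝ) < 2 * ((m:ℝ) + 1) := by positivity
      rw [hδ, ← mul_div_assoc, div_le_div_iff₀ h1 two_pos]
      nlinarith [hε0.le, Nat.cast_nonneg (α := ℝ) m]
    have hXbig : ENNReal.ofReal (α kk + ε / 2) ≤ volume X := by
      have h1 : volume (Set.Icc (0:ℝ) 1) - volume U ≤ volume X := le_measure_diff
      refine le_trans ?_ h1
      have hIcc : volume (Set.Icc (0:ℝ) 1) = ENNReal.ofReal 1 := by
        rw [Real.volume_Icc]; norm_num
      calc ENNReal.ofReal (α kk + ε / 2) ≤ ENNReal.ofReal (1 - S) := by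
            apply ENNReal.ofReal_le_ofReal
            have : α kk + ε ≤ 1 - (∑ i, α i - α kk) := by rw [hε]; ring_nf; linarith
            linarith
        _ = ENNReal.ofReal 1 - ENNReal.ofReal S := ENNReal.ofReal_sub 1 hS0
        _ ≤ volume (Set.Icc (0:ℝ) 1) - volume U := tsub_le_tsub hIcc.ge hUv
    -- the set functional
    set ν : Set ℝ → ℝ := fun B => ∫ x in Set.univ.pi (Function.update A kk B), psi F W x
      with hν
    have hupd1 : ∀ B : Set ℝ, B ⊆ Set.Icc 0 1 → ∀ i, Function.update A kk B i ⊆ Set.Icc 0 1 := by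
      intro B hB i
      rcases eq_or_ne i kk with rfl | h
      · rwa [Function.update_self]
      · rw [Function.update_of_ne h]; exact hA1 i
    have hupdm : ∀ B : Set ℝ, MeasurableSet B → ∀ i, MeasurableSet (Function.update A kk B i) := by
      intro B hB i
      rcases eq_or_ne i kk with rfl | h
      · rwa [Function.update_self]
      · rw [Function.update_of_ne h]; exact hAm i
    have hint : ∀ B : Set ℝ, MeasurableSet B → B ⊆ Set.Icc 0 1 →
        IntegrableOn (psi F W) (Set.univ.pi (Function.update A kk B)) :=
      fun B hBm hB1 => psi_integrableOn hW (vol_pi_ne_top (hupd1 B hB1))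
    have hadd : ∀ B C, MeasurableSet B → MeasurableSet C → B ⊆ X → C ⊆ X → Disjoint B C →
        ν (B ∪ C) = ν B + ν C := by
      intro B C hBm hCm hBX hCX hBC
      rw [hν]
      simp only
      rw [pi_update_union]
      have hdisjpi : Disjoint (Set.univ.pi (Function.update A kk B))
          (Set.univ.pi (Function.update A kk C)) := by
        rw [Set.disjoint_left]
        intro x hx hx'
        exact Set.disjoint_left.1 hBC (mem_pi_update_iff.1 hx).1 (mem_pi_update_iff.1 hx').1
      rw [setIntegral_union hdisjpi (MeasurableSet.univ_pi (hupdm C hCm))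
        (hint B hBm (hBX.trans hX1)) (hint C hCm (hCX.trans hX1))]
    have hvolpi : ∀ B : Set ℝ, B ⊆ Set.Icc 0 1 →
        volume (Set.univ.pi (Function.update A kk B)) ≤ volume B := by
      intro B hB1
      rw [volume_pi_pi]
      rw [← Finset.mul_prod_erase Finset.univ _ (Finset.mem_univ kk), Function.update_self]
      calc volume B * ∏ i ∈ Finset.univ.erase kk, volume (Function.update A kk B i)
          ≤ volume B * 1 := by
            apply mul_le_mul_right
            exact Finset.prod_le_one' fun i _ => vol_comp_le_one (hupd1 B hB1 i)
        _ = volume B := mul_one _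
    have hbd : ∀ B, MeasurableSet B → B ⊆ X → ν B ≤ (volume B).toReal := by
      intro B hBm hBX
      have h1 : ‖ν B‖ ≤ 1 * (volume (Set.univ.pi (Function.update A kk B))).toReal := by
        refine norm_setIntegral_le_of_norm_le_const
          ((vol_pi_ne_top (hupd1 B (hBX.trans hX1))).lt_top) (fun x _ => ?_)
        rw [Real.norm_eq_abs, abs_le]
        exact ⟨by linarith [psi_nonneg (F := F) hW x], psi_le_one hW x⟩
      rw [one_mul] at h1
      refine le_trans (le_abs_self _) (h1.trans ?_)
      apply ENNReal.toReal_mono (vol_ne_top (hBX.trans hX1))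
      exact hvolpi B (hBX.trans hX1)
    have hpos : ∀ B, MeasurableSet B → B ⊆ X → 0 ≤ ν B := by
      intro B hBm hBX
      exact setIntegral_nonneg (MeasurableSet.univ_pi (hupdm B hBm))
        fun x _ => psi_nonneg hW x
    have hdisjX : ∀ B : Set ℝ, B ⊆ X → ∀ j, j ≠ kk → Disjoint B (A j) := by
      intro B hBX j hj
      rw [Set.disjoint_left]
      intro x hx hxA
      exact (hBX hx).2 (Set.mem_iUnion.2 ⟨j, Set.mem_iUnion.2 ⟨hj, hxA⟩⟩)
    set K : ℝ := c * (α kk * ∏ i ∈ Finset.univ.erase kk, τ i) with hKdef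
    have hKval : ∀ B, MeasurableSet B → B ⊆ X → volume B = ENNReal.ofReal (α kk) →
        ν B = K := by
      intro B hBm hBX hBv
      show (∫ x in Set.univ.pi (Function.update A kk B), psi F W x) = K
      have happ := ih (by omega) (Function.update τ kk (α kk))
        (fun i hik => by
          have h : i ≠ kk := by
            intro h; rw [h] at hik; exact absurd hik (lt_irrefl k)
          rw [Function.update_of_ne h]
          exact hτlt i (by omega))
        (fun i hik => by
          rcases eq_or_ne i kk with rfl | h
          · rw [Function.update_self]
          · rw [Function.update_of_ne h]
            have hik' : k + 1 ≤ (i : ℕ) := by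
              rcases lt_or_eq_of_le hik with h3 | h3
              · omega
              · exfalso; exact h (Fin.ext h3.symm)
            exact hτge i hik')
        (Function.update A kk B)
        (hupdm B hBm)
        (hupd1 B (hBX.trans hX1))
        (by
          intro i j hij
          rcases eq_or_ne i kk with rfl | hi
          · rw [Function.update_self, Function.update_of_ne (Ne.symm hij)]
            exact hdisjX B hBX j (Ne.symm hij)
          · rcases eq_or_ne j kk with rfl | hj
            · rw [Function.update_self, Function.update_of_ne hi]
              exact (hdisjX B hBX i hi).symm
            · rw [Function.update_of_ne hi, Function.update_of_ne hj]
              exact hdisj hij)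
        (by
          intro i
          rcases eq_or_ne i kk with rfl | h
          · rw [Function.update_self, Function.update_self]; exact hBv
          · rw [Function.update_of_ne h, Function.update_of_ne h]; exact hAv i)
      rw [happ, Finset.prod_update_of_mem (Finset.mem_univ kk), hKdef, Finset.erase_eq]
    have hAkkX : A kk ⊆ X := by
      intro x hx
      refine ⟨hA1 kk hx, ?_⟩
      intro hxU
      rw [hU, Set.mem_iUnion] at hxU
      obtain ⟨j, hxj⟩ := hxU
      rw [Set.mem_iUnion] at hxj
      obtain ⟨hj, hxA⟩ := hxj
      exact Set.disjoint_left.1 (hdisj hj) hxA hx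
    have hδε4 : δ ≤ ε / 2 / 2 := by
      have h1 : (0:ℝ) < 2 * ((m:ℝ) + 1) := by positivity
      have hm1' : (1:ℝ) ≤ (m:ℝ) := by exact_mod_cast hm1
      have h2 : ε / 2 / 2 = ε / 4 := by ring
      rw [hδ, h2, div_le_div_iff₀ h1 (by norm_num : (0:ℝ) < 4)]
      nlinarith [hε0.le]
    have hmain := nu_linear hXm hX1 ν (hα kk) (by positivity : (0:ℝ) < ε / 2) hXbig
      hadd hbd hpos hKval (A kk) (hAm kk) hAkkX (τ kk) (hτ0 kk)
      (le_trans (hτlt kk (lt_add_one k)).2 hδε4) (hAv kk)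
    have hAself : Function.update A kk (A kk) = A := Function.update_eq_self kk A
    have hmain' : (∫ x in Set.univ.pi (Function.update A kk (A kk)), psi F W x)
        = K * τ kk / α kk := hmain
    rw [hAself] at hmain'
    rw [hmain', hKdef, ← Finset.mul_prod_erase Finset.univ τ (Finset.mem_univ kk),
      div_eq_iff (hα kk).ne']
    ring

end induction

section nullsets

variable {m : ℕ}

lemma diag_null (i j : Fin m) (hij : i ≠ j) :
    volume {x : Fin m → ℝ | x i = x j} = 0 := by
  set L : (Fin m → ℝ) →ₗ[ℝ] ℝ := (LinearMap.proj (R := ℝ) (φ := fun _ : Fin m => ℝ) i) - (LinearMap.proj (R := ℝ) (φ := fun _ : Fin m => ℝ) j) with hL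
  have hker : {x : Fin m → ℝ | x i = x j} = (LinearMap.ker L : Set (Fin m → ℝ)) := by
    ext x
    simp only [Set.mem_setOf_eq, SetLike.mem_coe, LinearMap.mem_ker, hL,
      LinearMap.sub_apply, LinearMap.proj_apply]
    rw [sub_eq_zero]
  rw [hker]
  apply Measure.addHaar_submodule
  intro h
  rw [Submodule.eq_top_iff'] at h
  have h1 := h (Pi.single i 1)
  rw [LinearMap.mem_ker, hL, LinearMap.sub_apply, LinearMap.proj_apply,
    LinearMap.proj_apply, Pi.single_eq_same, Pi.single_eq_of_ne (Ne.symm hij)] at h1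
  norm_num at h1

lemma coordeq_null (i : Fin m) (a : ℝ) : volume {x : Fin m → ℝ | x i = a} = 0 := by
  rw [volume_pi]
  exact Measure.pi_hyperplane (fun _ : Fin m => (volume : Measure ℝ)) i a

end nullsets

open scoped Topology ENNReal

/-- **Lemma (LW3).** If `∑ α_i < 1`, then `P^W(F;α₁,…,α_m)` holds iff
`Ψ_{F,W} = p^(e F)` a.e. on `[0,1]^m`. -/
theorem stmt11 {m : ℕ} (F : SimpleGraph (Fin m)) (W : ℝ → ℝ → ℝ)
    (hW : IsGraphon W) (p : ℝ) (hp0 : 0 ≤ p) (hp1 : p ≤ 1)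
    (α : Fin m → ℝ) (hα : ∀ i, α i ∈ Set.Ioo (0 : ℝ) 1) (hsum : ∑ i, α i < 1) :
    GraphonP F W p α ↔
      psi F W =ᵐ[volume.restrict (unitBox m)] fun _ => p ^ numEdges F := by
  have hbox_meas : MeasurableSet (unitBox m) :=
    MeasurableSet.univ_pi fun _ => measurableSet_Icc
  constructor
  · intro hP
    rcases Nat.eq_zero_or_pos m with hm | hm
    · subst hm
      have hempty : IsEmpty (Sym2 (Fin 0)) := by
        constructor
        intro e
        induction e using Sym2.ind with
        | _ a b => exact a.elim0
      have hE : numEdges F = 0 := by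
        rw [numEdges, Nat.card_eq_zero]
        exact Or.inl ⟨fun e => hempty.false e.1⟩
      filter_upwards with x
      rw [hE, pow_zero]
      simp [psi]
    · set c := p ^ numEdges F with hc
      set ε := 1 - ∑ i, α i with hε
      have hε0 : 0 < ε := by rw [hε]; linarith
      set δ := ε / (2 * ((m:ℝ) + 1)) with hδ
      have hδ0 : 0 < δ := by positivity
      have hQ := Qinduct hW α (fun i => (hα i).1) hsum c hP m le_rfl
      have hloc : LocallyIntegrable (psi F W) (volume : Measure (Fin m → ℝ)) := by
        intro x
        exact ⟨Metric.ball x 1, Metric.ball_mem_nhds x one_pos,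
          psi_integrableOn hW measure_ball_lt_top.ne⟩
      have hae := (Besicovitch.vitaliFamily (volume : Measure (Fin m → ℝ))).ae_tendsto_average hloc
      have hdiagae : ∀ᵐ x : Fin m → ℝ ∂volume, ∀ i j : Fin m, i ≠ j → x i ≠ x j := by
        have hnull : volume (⋃ (i : Fin m) (j : Fin m) (_ : i ≠ j),
            {x : Fin m → ℝ | x i = x j}) = 0 :=
          measure_iUnion_null fun i => measure_iUnion_null fun j =>
            measure_iUnion_null fun hij => diag_null i j hij
        filter_upwards [measure_eq_zero_iff_ae_notMem.1 hnull] with x hx i j hij heq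
        exact hx (Set.mem_iUnion.2 ⟨i, Set.mem_iUnion.2 ⟨j, Set.mem_iUnion.2 ⟨hij, heq⟩⟩⟩)
      have hkey : ∀ᵐ x : Fin m → ℝ ∂volume, (∀ i, x i ∈ Set.Ioo (0:ℝ) 1) → psi F W x = c := by
        filter_upwards [hae, hdiagae] with x hx hxd hbox
        have ht : Tendsto (fun r : ℝ => ⨍ y in Metric.closedBall x r, psi F W y)
            (𝓝[>] 0) (𝓝 (psi F W x)) := hx.comp (Besicovitch.tendsto_filterAt volume x)
        have hev : ∀ᶠ r in 𝓝[>] (0:ℝ), ⨍ y in Metric.closedBall x r, psi F W y = c := by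
          have e1 : ∀ᶠ r in 𝓝[>] (0:ℝ), 0 < r := self_mem_nhdsWithin
          have e2 : ∀ᶠ r in 𝓝[>] (0:ℝ), r < δ / 2 :=
            eventually_nhdsWithin_of_eventually_nhds (gt_mem_nhds (by positivity))
          have e3 : ∀ᶠ r in 𝓝[>] (0:ℝ), ∀ i, r < min (x i) (1 - x i) :=
            eventually_all.2 fun i => eventually_nhdsWithin_of_eventually_nhds
              (gt_mem_nhds (lt_min (hbox i).1 (by linarith [(hbox i).2])))
          have e4 : ∀ᶠ r in 𝓝[>] (0:ℝ), ∀ i j : Fin m, i ≠ j → r < |x i - x j| / 2 := by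
            refine eventually_all.2 fun i => eventually_all.2 fun j => ?_
            rcases eq_or_ne i j with rfl | hij
            · exact Eventually.of_forall fun r h => absurd rfl h
            · have hne : x i ≠ x j := hxd i j hij
              have hposd : 0 < |x i - x j| := abs_pos.2 (sub_ne_zero.2 hne)
              exact (eventually_nhdsWithin_of_eventually_nhds
                (gt_mem_nhds (by positivity))).mono fun r hr _ => hr
          filter_upwards [e1, e2, e3, e4] with r hr0 hrδ hri hrij
          have hball : Metric.closedBall x r =
              Set.univ.pi (fun i => Set.Icc (x i - r) (x i + r)) := by
            rw [closedBall_pi x hr0.le]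
            exact congrArg _ (funext fun i => Real.closedBall_eq_Icc)
          have hint : ∫ y in Set.univ.pi (fun i => Set.Icc (x i - r) (x i + r)),
              psi F W y = c * (2 * r) ^ m := by
            have hbd2r : (0:ℝ) ≤ 2 * r ∧ (2*r) ≤ (1 - ∑ i, α i) / (2 * ((m:ℝ) + 1)) := by
              constructor
              · linarith
              · rw [← hε, ← hδ]; linarith
            have happ := hQ (fun _ => 2 * r)
              (fun i _ => hbd2r)
              (fun i hi => absurd i.isLt (not_lt.2 hi))
              (fun i => Set.Icc (x i - r) (x i + r))
              (fun i => measurableSet_Icc)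
              (fun i => by
                have h1 := (lt_min_iff.1 (hri i)).1
                have h2 := (lt_min_iff.1 (hri i)).2
                exact Set.Icc_subset_Icc (by linarith) (by linarith))
              (fun i j hij => by
                show Disjoint (Set.Icc (x i - r) (x i + r)) (Set.Icc (x j - r) (x j + r))
                rw [Set.disjoint_left]
                intro y hy hy'
                have h1 : |x i - y| ≤ r := abs_le.2 ⟨by linarith [hy.1, hy.2], by linarith [hy.1]⟩
                have h2 : |x j - y| ≤ r := abs_le.2 ⟨by linarith [hy'.2], by linarith [hy'.1]⟩
                have h3 := abs_sub_le (x i) y (x j)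
                rw [abs_sub_comm y (x j)] at h3
                have h4 := hrij i j hij
                linarith)
              (fun i => by rw [Real.volume_Icc]; congr 1; ring)
            rw [happ, Finset.prod_const, Finset.card_univ, Fintype.card_fin]
          rw [hball, setAverage_eq, hint]
          have hvol : volume (Set.univ.pi fun i => Set.Icc (x i - r) (x i + r)) =
              ENNReal.ofReal (2 * r) ^ m := by
            rw [volume_pi_pi]
            have hIcc : ∀ i : Fin m, volume (Set.Icc (x i - r) (x i + r)) =
                ENNReal.ofReal (2 * r) := fun i => by rw [Real.volume_Icc]; congr 1; ring
            rw [Finset.prod_congr rfl fun i _ => hIcc i, Finset.prod_const,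
              Finset.card_univ, Fintype.card_fin]
          rw [measureReal_def, hvol, ← ENNReal.ofReal_pow (by linarith), ENNReal.toReal_ofReal (by positivity),
            smul_eq_mul]
          have hpow : ((2*r):ℝ)^m ≠ 0 := by positivity
          field_simp
        have ht2 : Tendsto (fun r : ℝ => ⨍ y in Metric.closedBall x r, psi F W y)
            (𝓝[>] 0) (𝓝 c) := by
          refine Tendsto.congr' ?_ tendsto_const_nhds
          filter_upwards [hev] with r hr using hr.symm
        exact tendsto_nhds_unique ht ht2
      have hbnd : ∀ᵐ x : Fin m → ℝ ∂volume, ∀ i : Fin m, x i ≠ 0 ∧ x i ≠ 1 := by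
        have hnull : volume (⋃ (i : Fin m),
            ({x : Fin m → ℝ | x i = 0} ∪ {x : Fin m → ℝ | x i = 1})) = 0 :=
          measure_iUnion_null fun i =>
            measure_union_null (coordeq_null i 0) (coordeq_null i 1)
        filter_upwards [measure_eq_zero_iff_ae_notMem.1 hnull] with x hx i
        constructor
        · intro h; exact hx (Set.mem_iUnion.2 ⟨i, Or.inl h⟩)
        · intro h; exact hx (Set.mem_iUnion.2 ⟨i, Or.inr h⟩)
      refine (ae_restrict_iff' hbox_meas).2 ?_
      filter_upwards [hkey, hbnd] with x hx hxb hxbox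
      apply hx
      intro i
      simp only [unitBox, Set.mem_pi, Set.mem_univ, forall_true_left] at hxbox
      have hxi : x i ∈ Set.Icc (0:ℝ) 1 := hxbox i
      exact ⟨lt_of_le_of_ne hxi.1 (Ne.symm (hxb i).1), lt_of_le_of_ne hxi.2 (hxb i).2⟩
  · intro hAE A hAm hA1 hdisj hAv
    have hsub : Set.univ.pi A ⊆ unitBox m := Set.pi_mono fun i _ => hA1 i
    have h1 : psi F W =ᵐ[volume.restrict (Set.univ.pi A)] fun _ => p ^ numEdges F :=
      ae_restrict_of_ae_restrict_of_subset hsub hAE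
    rw [integral_congr_ae h1, setIntegral_const]
    have hvol : (volume (Set.univ.pi A)).toReal = ∏ i, α i := by
      rw [volume_pi_pi, ENNReal.toReal_prod]
      exact Finset.prod_congr rfl fun i _ => by
        rw [hAv i, ENNReal.toReal_ofReal (hα i).1.le]
    rw [measureReal_def, hvol, smul_eq_mul, mul_comm]
end

section
/- Let m ≥ 2, let Φ : [0,1]^{m(m−1)/2} → ℝ be a continuous function of the variables w_{ij}, 1 ≤ i < j ≤ m, and let a ∈ ℝ. The following are equivalent: (i) there exists a graphon W, not a.e. constant, such that Φ_W(x_1,…,x_m) = a for a.e. (x_1,…,x_m) ∈ [0,1]^m; (ii) there exists a non-constant graphon W that is constant on each of the three regions [0,1/2]², (1/2,1]², and ([0,1/2]×(1/2,1]) ∪ ((1/2,1]×[0,1/2]), such that Φ_W(x_1,…,x_m) = a for all (x_1,…,x_m); (iii) there exist u, v, s ∈ [0,1], not all equal, such that for every subset A ⊆ {1,…,m}, setting w_{ij} := u if i,j ∈ A, w_{ij} := v if i,j ∉ A, and w_{ij} := s otherwise, one has Φ((w_{ij})_{i<j}) = a. -/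
open Filter Finset Asymptotics MeasureTheory

section RamseyStuff

variable {C : Type*} [Fintype C] [DecidableEq C] [Nonempty C]

lemma preHomog : ∀ L : ℕ, ∃ N : ℕ, ∀ S : Finset ℕ, N ≤ S.card → ∀ χ : ℕ → ℕ → C,
    ∃ g : Fin L → ℕ, StrictMono g ∧ (∀ i, g i ∈ S) ∧
      ∃ cc : Fin L → C, ∀ i j : Fin L, i < j → χ (g i) (g j) = cc i := by
  intro L
  induction L with
  | zero =>
    refine ⟨0, fun S _ χ => ⟨Fin.elim0, ?_, ?_, Fin.elim0, ?_⟩⟩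
    · intro i; exact i.elim0
    · intro i; exact i.elim0
    · intro i; exact i.elim0
  | succ L ih =>
    obtain ⟨N, hN⟩ := ih
    refine ⟨Fintype.card C * N + 1, fun S hS χ => ?_⟩
    have hSne : S.Nonempty := Finset.card_pos.1 (by omega)
    set v := S.min' hSne with hv
    have hS'card : Fintype.card C * N ≤ (S.erase v).card := by
      rw [Finset.card_erase_of_mem (S.min'_mem hSne)]; omega
    obtain ⟨c₀, -, hc₀⟩ := Finset.exists_le_card_fiber_of_mul_le_card_of_maps_to
      (f := fun w => χ v w) (t := (Finset.univ : Finset C))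
      (fun a _ => Finset.mem_univ _) ⟨Classical.arbitrary C, Finset.mem_univ _⟩
      (by simpa using hS'card)
    set T := (S.erase v).filter (fun w => χ v w = c₀) with hT
    obtain ⟨g, hgmono, hgmem, cc, hcc⟩ := hN T hc₀ χ
    have hvT : ∀ w ∈ T, v < w := by
      intro w hw
      have hw' : w ∈ S.erase v := Finset.mem_of_mem_filter _ hw
      have hne : w ≠ v := Finset.ne_of_mem_erase hw'
      have : w ∈ S := Finset.mem_of_mem_erase hw'
      exact lt_of_le_of_ne (S.min'_le w this) (Ne.symm hne)
    refine ⟨Fin.cons v g, ?_, ?_, Fin.cons c₀ cc, ?_⟩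
    · intro i j hij
      rcases Fin.eq_zero_or_eq_succ j with rfl | ⟨j', rfl⟩
      · exact absurd hij (Fin.not_lt_zero _)
      rcases Fin.eq_zero_or_eq_succ i with rfl | ⟨i', rfl⟩
      · simp only [Fin.cons_zero, Fin.cons_succ]
        exact hvT _ (hgmem j')
      · simp only [Fin.cons_succ]
        exact hgmono (Fin.succ_lt_succ_iff.mp hij)
    · intro i
      rcases Fin.eq_zero_or_eq_succ i with rfl | ⟨i', rfl⟩
      · simpa using S.min'_mem hSne
      · simp only [Fin.cons_succ]
        exact Finset.mem_of_mem_erase (Finset.mem_of_mem_filter _ (hgmem i'))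
    · intro i j hij
      rcases Fin.eq_zero_or_eq_succ j with rfl | ⟨j', rfl⟩
      · exact absurd hij (Fin.not_lt_zero _)
      rcases Fin.eq_zero_or_eq_succ i with rfl | ⟨i', rfl⟩
      · simp only [Fin.cons_zero, Fin.cons_succ]
        have := hgmem j'
        rw [hT, Finset.mem_filter] at this
        exact this.2
      · simp only [Fin.cons_succ]
        exact hcc _ _ (Fin.succ_lt_succ_iff.mp hij)

lemma ramseyPairs (L : ℕ) : ∃ N : ℕ, ∀ S : Finset ℕ, N ≤ S.card → ∀ χ : ℕ → ℕ → C,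
    ∃ g : Fin L → ℕ, StrictMono g ∧ (∀ i, g i ∈ S) ∧
      ∃ c : C, ∀ i j : Fin L, i < j → χ (g i) (g j) = c := by
  obtain ⟨N, hN⟩ := preHomog (C := C) (Fintype.card C * L)
  refine ⟨N, fun S hS χ => ?_⟩
  obtain ⟨g₀, hg₀mono, hg₀mem, cc, hcc⟩ := hN S hS χ
  have hn : (Finset.univ : Finset C).card * L
      ≤ (Finset.univ : Finset (Fin (Fintype.card C * L))).card := by
    simp
  obtain ⟨c, -, hc⟩ := Finset.exists_le_card_fiber_of_mul_le_card_of_maps_to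
    (f := cc) (t := (Finset.univ : Finset C)) (fun a _ => Finset.mem_univ _)
    ⟨Classical.arbitrary C, Finset.mem_univ _⟩ hn
  obtain ⟨F', hF'sub, hF'card⟩ := Finset.exists_subset_card_eq hc
  set e := F'.orderEmbOfFin hF'card with he
  refine ⟨fun i => g₀ (e i), ?_, fun i => hg₀mem _, c, ?_⟩
  · exact hg₀mono.comp e.strictMono
  · intro i j hij
    have h1 := hF'sub (F'.orderEmbOfFin_mem hF'card i)
    rw [Finset.mem_filter] at h1
    rw [hcc _ _ (e.strictMono hij)]
    exact h1.2

end RamseyStuff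

section MeasureStuff

/-- uniform probability measure on `[0,1] ⊆ ℝ` -/
noncomputable def nu : Measure ℝ := volume.restrict (Set.Icc 0 1)

instance : IsProbabilityMeasure nu := by
  constructor
  rw [nu, Measure.restrict_apply_univ, Real.volume_Icc]
  norm_num

/-- product of copies of `nu` -/
noncomputable def PP (ι : Type*) [Fintype ι] : Measure (ι → ℝ) :=
  Measure.pi fun _ => nu

instance (ι : Type*) [Fintype ι] : IsProbabilityMeasure (PP ι) := by
  unfold PP; infer_instance

lemma measurePreserving_comp_inj {ι κ : Type*} [Fintype ι] [Fintype κ]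
    {f : ι → κ} (hf : Function.Injective f) :
    MeasurePreserving (fun x : κ → ℝ => x ∘ f) (PP κ) (PP ι) := by
  classical
  constructor
  · exact measurable_pi_iff.2 fun i => measurable_pi_apply (f i)
  · refine (Measure.pi_eq fun s hs => ?_).symm
    have hmeas : Measurable (fun x : κ → ℝ => x ∘ f) :=
      measurable_pi_iff.2 fun i => measurable_pi_apply (f i)
    rw [Measure.map_apply hmeas (MeasurableSet.univ_pi hs)]
    set t : κ → Set ℝ := fun k => ⋂ (i : ι) (_ : f i = k), s i with ht
    have hpre : (fun x : κ → ℝ => x ∘ f) ⁻¹' (Set.univ.pi s) = Set.univ.pi t := by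
      ext x
      simp only [Set.mem_preimage, Set.mem_univ_pi, ht, Set.mem_iInter, Function.comp_apply]
      constructor
      · intro h k i hik; subst hik; exact h i
      · intro h i; exact h (f i) i rfl
    have htmeas : ∀ k, MeasurableSet (t k) :=
      fun k => MeasurableSet.iInter fun i => MeasurableSet.iInter fun _ => hs i
    rw [hpre, PP, Measure.pi_pi]
    have h1 : ∀ k ∉ Finset.univ.image f, nu (t k) = 1 := by
      intro k hk
      have : t k = Set.univ := by
        ext x
        simp only [ht, Set.mem_iInter, Set.mem_univ, iff_true]
        intro i hik
        exact absurd (Finset.mem_image.2 ⟨i, Finset.mem_univ _, hik⟩) (by simp_all)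
      rw [this]
      exact measure_univ
    have h2 : ∀ i : ι, t (f i) = s i := by
      intro i
      apply Set.Subset.antisymm
      · intro x hx
        simp only [ht, Set.mem_iInter] at hx
        exact hx i rfl
      · intro x hx
        simp only [ht, Set.mem_iInter]
        intro i' hi'
        rwa [hf hi']
    calc ∏ k, nu (t k) = ∏ k ∈ Finset.univ.image f, nu (t k) :=
          (Finset.prod_subset (Finset.subset_univ _) (fun k _ hk => h1 k hk)).symm
      _ = ∏ i, nu (t (f i)) := Finset.prod_image (fun i _ j _ h => hf h)
      _ = ∏ i, nu (s i) := by simp_rw [h2]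

lemma PP_eq_restrict (m : ℕ) :
    (volume : Measure (Fin m → ℝ)).restrict (Set.univ.pi fun _ => Set.Icc (0:ℝ) 1)
      = PP (Fin m) := by
  refine (Measure.pi_eq (μ := fun _ : Fin m => nu) fun s hs => ?_).symm
  rw [Measure.restrict_apply (MeasurableSet.univ_pi hs)]
  have : Set.univ.pi s ∩ (Set.univ.pi fun _ => Set.Icc (0:ℝ) 1)
      = Set.univ.pi (fun i => s i ∩ Set.Icc 0 1) := (Set.pi_inter_distrib).symm
  rw [this, volume_pi_pi (fun i => s i ∩ Set.Icc 0 1)]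
  exact (Finset.prod_congr rfl fun i _ => (Measure.restrict_apply (hs i))).symm

lemma repl {α β : Type*} [MeasurableSpace α] [MeasurableSpace β]
    (μ : Measure α) (κm : Measure β) [IsProbabilityMeasure μ] [IsProbabilityMeasure κm]
    {D : Set (α × β)} (hD : MeasurableSet D) (hpos : μ.prod κm D ≠ 0)
    (ι : Type*) [Fintype ι] :
    ((Measure.pi fun _ : ι => μ).prod κm) {p : (ι → α) × β | ∀ i, (p.1 i, p.2) ∈ D} ≠ 0 := by
  classical
  set S := {p : (ι → α) × β | ∀ i, (p.1 i, p.2) ∈ D} with hSdef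
  have hS : MeasurableSet S := by
    have : S = ⋂ i : ι, (fun p : (ι → α) × β => (p.1 i, p.2)) ⁻¹' D := by
      ext p; simp [hSdef]
    rw [this]
    exact MeasurableSet.iInter fun i =>
      (((measurable_pi_apply i).comp measurable_fst).prodMk measurable_snd) hD
  rcases isEmpty_or_nonempty ι with hι | hι
  · have : S = Set.univ := by
      ext p; simp [hSdef]
    rw [this]
    simp [measure_univ]
  · set d : β → ENNReal := fun y => μ ((fun x => (x, y)) ⁻¹' D) with hd
    have hdmeas : Measurable d := measurable_measure_prodMk_right hD
    have hfib : ∀ y : β,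
        (Measure.pi fun _ : ι => μ) ((fun x => (x, y)) ⁻¹' S) = d y ^ Fintype.card ι := by
      intro y
      have : (fun x : ι → α => (x, y)) ⁻¹' S
          = Set.univ.pi fun _ : ι => ((fun x => (x, y)) ⁻¹' D) := by
        ext x; simp [hSdef]
      rw [this, Measure.pi_pi, Finset.prod_const, Finset.card_univ]
    rw [Measure.prod_apply_symm hS]
    have hpos' : ∫⁻ y, d y ∂κm ≠ 0 := by
      rwa [Measure.prod_apply_symm hD] at hpos
    intro hcon
    apply hpos'
    rw [lintegral_eq_zero_iff hdmeas]
    rw [lintegral_congr (fun y => hfib y)] at hcon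
    have := (lintegral_eq_zero_iff (hdmeas.pow_const _)).1 hcon
    filter_upwards [this] with y hy
    have hcard : Fintype.card ι ≠ 0 := Fintype.card_ne_zero
    simpa [pow_eq_zero_iff hcard] using hy

lemma lemQprod {D : Set (ℝ × ℝ)} (hD : MeasurableSet D) (hpos : (nu.prod nu) D ≠ 0)
    (ι κ : Type*) [Fintype ι] [Fintype κ] :
    ((PP ι).prod (PP κ)) {p : (ι → ℝ) × (κ → ℝ) | ∀ i j, (p.1 i, p.2 j) ∈ D} ≠ 0 := by
  have h1 := repl nu nu hD hpos ι
  set D₁ : Set ((ι → ℝ) × ℝ) := {p | ∀ i, (p.1 i, p.2) ∈ D} with hD₁def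
  have hD₁ : MeasurableSet D₁ := by
    have : D₁ = ⋂ i : ι, (fun p : (ι → ℝ) × ℝ => (p.1 i, p.2)) ⁻¹' D := by
      ext p; simp [hD₁def]
    rw [this]
    exact MeasurableSet.iInter fun i =>
      (((measurable_pi_apply i).comp measurable_fst).prodMk measurable_snd) hD
  set D₂ : Set (ℝ × (ι → ℝ)) := Prod.swap ⁻¹' D₁ with hD₂def
  have hD₂ : MeasurableSet D₂ := measurable_swap hD₁
  have hswap1 : Prod.swap ⁻¹' D₂ = D₁ := by
    ext z; simp [hD₂def]
  have h2 : (nu.prod (Measure.pi fun _ : ι => nu)) D₂ ≠ 0 := by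
    rw [← Measure.prod_swap, Measure.map_apply measurable_swap hD₂, hswap1]
    exact h1
  have h3 := repl nu (Measure.pi fun _ : ι => nu) hD₂ h2 κ
  set S₃ : Set ((κ → ℝ) × (ι → ℝ)) := {p | ∀ j, (p.1 j, p.2) ∈ D₂} with hS₃def
  have hS₃ : MeasurableSet S₃ := by
    have : S₃ = ⋂ j : κ, (fun p : (κ → ℝ) × (ι → ℝ) => (p.1 j, p.2)) ⁻¹' D₂ := by
      ext p; simp [hS₃def]
    rw [this]
    exact MeasurableSet.iInter fun j =>
      (((measurable_pi_apply j).comp measurable_fst).prodMk measurable_snd) hD₂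
  show ((Measure.pi fun _ : ι => nu).prod (Measure.pi fun _ : κ => nu))
      {p : (ι → ℝ) × (κ → ℝ) | ∀ i j, (p.1 i, p.2 j) ∈ D} ≠ 0
  have htgt : {p : (ι → ℝ) × (κ → ℝ) | ∀ i j, (p.1 i, p.2 j) ∈ D} = Prod.swap ⁻¹' S₃ := by
    ext p
    simp only [Set.mem_setOf_eq, Set.mem_preimage, hS₃def, hD₂def, hD₁def, Prod.swap]
    constructor
    · intro h j i; exact h i j
    · intro h i j; exact h j i
  rw [htgt, ← Measure.prod_swap, Measure.map_apply measurable_swap (measurable_swap hS₃)]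
  have : Prod.swap ⁻¹' (Prod.swap ⁻¹' S₃) = S₃ := by ext z; simp
  rw [this]
  exact h3

lemma lemQsum {D : Set (ℝ × ℝ)} (hD : MeasurableSet D) (hpos : (nu.prod nu) D ≠ 0)
    (ι κ : Type*) [Fintype ι] [Fintype κ] :
    PP (ι ⊕ κ) {y : ι ⊕ κ → ℝ | ∀ i j, (y (Sum.inl i), y (Sum.inr j)) ∈ D} ≠ 0 := by
  have hmp := MeasureTheory.measurePreserving_sumPiEquivProdPi
    (X := fun _ : ι ⊕ κ => ℝ) (fun _ => nu)
  set Sp : Set ((ι → ℝ) × (κ → ℝ)) := {p | ∀ i j, (p.1 i, p.2 j) ∈ D} with hSp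
  have hSpm : MeasurableSet Sp := by
    have : Sp = ⋂ (i : ι) (j : κ), (fun p : (ι → ℝ) × (κ → ℝ) => (p.1 i, p.2 j)) ⁻¹' D := by
      ext p; simp [hSp]
    rw [this]
    exact MeasurableSet.iInter fun i => MeasurableSet.iInter fun j =>
      (((measurable_pi_apply i).comp measurable_fst).prodMk
        ((measurable_pi_apply j).comp measurable_snd)) hD
  have hpre : {y : ι ⊕ κ → ℝ | ∀ i j, (y (Sum.inl i), y (Sum.inr j)) ∈ D}
      = (MeasurableEquiv.sumPiEquivProdPi fun _ : ι ⊕ κ => ℝ) ⁻¹' Sp := rfl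
  show (Measure.pi fun _ : ι ⊕ κ => nu) _ ≠ 0
  rw [hpre, hmp.measure_preimage hSpm.nullMeasurableSet]
  exact lemQprod hD hpos ι κ

end MeasureStuff

section ColorStuff

variable (ε : ℝ)

/-- number of the last color cell -/
noncomputable def tmax : ℕ := ⌊1/ε⌋₊

/-- color (grid cell index) of a value in `[0,1]` -/
noncomputable def colorOf (w : ℝ) : Fin (tmax ε + 1) :=
  ⟨min ⌊w/ε⌋₊ (tmax ε), by omega⟩

/-- representative value of a color -/
noncomputable def rep (k : Fin (tmax ε + 1)) : ℝ := (k : ℕ) * ε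

lemma rep_mem (hε : 0 < ε) (k : Fin (tmax ε + 1)) : rep ε k ∈ Set.Icc (0:ℝ) 1 := by
  rw [rep]
  constructor
  · positivity
  · have hk : (k : ℕ) ≤ tmax ε := by omega
    have h1 : ((tmax ε : ℝ)) ≤ 1/ε := Nat.floor_le (by positivity)
    have : ((k : ℕ) : ℝ) ≤ 1/ε := le_trans (by exact_mod_cast hk) h1
    calc ((k : ℕ) : ℝ) * ε ≤ (1/ε) * ε := by nlinarith
      _ = 1 := by field_simp

lemma colorOf_close (hε : 0 < ε) {w : ℝ} (hw : w ∈ Set.Icc (0:ℝ) 1) :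
    |w - rep ε (colorOf ε w)| ≤ ε := by
  obtain ⟨hw0, hw1⟩ := hw
  rcases le_or_gt ⌊w/ε⌋₊ (tmax ε) with h | h
  · have : ((colorOf ε w : Fin (tmax ε + 1)) : ℕ) = ⌊w/ε⌋₊ := by
      simp [colorOf, min_eq_left h]
    rw [rep, this]
    have hfl : (⌊w/ε⌋₊ : ℝ) * ε ≤ w := (le_div_iff₀ hε).1 (Nat.floor_le (by positivity))
    have hfu : w < ((⌊w/ε⌋₊ : ℝ) + 1) * ε := (div_lt_iff₀ hε).1 (Nat.lt_floor_add_one _)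
    rw [abs_le]
    constructor
    · nlinarith
    · nlinarith
  · have hc : ((colorOf ε w : Fin (tmax ε + 1)) : ℕ) = tmax ε := by
      simp [colorOf, min_eq_right (le_of_lt h)]
    rw [rep, hc]
    have h1 : (tmax ε + 1 : ℝ) ≤ w/ε := by
      have : tmax ε + 1 ≤ ⌊w/ε⌋₊ := h
      have h2 : ((tmax ε + 1 : ℕ) : ℝ) ≤ w/ε :=
        (Nat.le_floor_iff (by positivity)).1 this
      exact_mod_cast h2
    have h1' : ((tmax ε : ℝ) + 1) * ε ≤ w := (le_div_iff₀ hε).1 h1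
    have h3 : (1:ℝ) < ((tmax ε : ℝ) + 1) * ε := (div_lt_iff₀ hε).1 (Nat.lt_floor_add_one _)
    have htm : ((tmax ε : ℝ)) * ε ≤ 1 := (le_div_iff₀ hε).1 (Nat.floor_le (by positivity))
    rw [abs_le]
    constructor
    · nlinarith
    · nlinarith

lemma measurable_colorSet (k : Fin (tmax ε + 1)) :
    MeasurableSet {w : ℝ | colorOf ε w = k} := by
  have : {w : ℝ | colorOf ε w = k} = (fun w : ℝ => min ⌊w/ε⌋₊ (tmax ε)) ⁻¹' {(k : ℕ)} := by
    ext w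
    simp only [Set.mem_setOf_eq, Set.mem_preimage, Set.mem_singleton_iff, colorOf]
    constructor
    · intro h; rw [← h]
    · intro h; exact Fin.ext h
  rw [this]
  exact ((Nat.measurable_floor.comp (measurable_id.mul_const ε⁻¹)).min measurable_const)
    (measurableSet_singleton _) |>.congr rfl

end ColorStuff

section KeyLemma

set_option maxHeartbeats 1000000
set_option synthInstance.maxHeartbeats 400000

lemma keyLemma (m : ℕ) (hm : 2 ≤ m)
    (Φ : ({q : Fin m × Fin m // q.1 < q.2} → ℝ) → ℝ) (a : ℝ)
    (W : ℝ → ℝ → ℝ) (hWm : Measurable (Function.uncurry W))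
    (hWsym : ∀ x y, W x y = W y x) (hWrange : ∀ x y, W x y ∈ Set.Icc (0:ℝ) 1)
    (hae : ∀ᵐ x ∂(volume.restrict (Set.univ.pi fun _ : Fin m => Set.Icc (0:ℝ) 1)),
      Φ (fun p => W (x p.1.1) (x p.1.2)) = a)
    (q ρ : ℝ) (hρ : 0 < ρ)
    (hlow : (nu.prod nu) {z : ℝ × ℝ | W z.1 z.2 ≤ q} ≠ 0)
    (hhigh : (nu.prod nu) {z : ℝ × ℝ | q + ρ ≤ W z.1 z.2} ≠ 0)
    (ε : ℝ) (hε : 0 < ε) (hερ : ε ≤ ρ/6) :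
    ∃ u v s : ℝ, u ∈ Set.Icc (0:ℝ) 1 ∧ v ∈ Set.Icc (0:ℝ) 1 ∧ s ∈ Set.Icc (0:ℝ) 1 ∧
      ρ/6 ≤ |u - v| + |v - s| + |u - s| ∧
      ∀ A : Finset (Fin m), ∃ w : {p : Fin m × Fin m // p.1 < p.2} → ℝ,
        (∀ p, w p ∈ Set.Icc (0:ℝ) 1) ∧ Φ w = a ∧
        ∀ p : {p : Fin m × Fin m // p.1 < p.2},
          |w p - (if p.1.1 ∈ A then (if p.1.2 ∈ A then u else s)
              else (if p.1.2 ∈ A then s else v))| ≤ ε := by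
  classical
  set DL : Set (ℝ × ℝ) := {z : ℝ × ℝ | W z.1 z.2 ≤ q} with hDLdef
  set DH : Set (ℝ × ℝ) := {z : ℝ × ℝ | q + ρ ≤ W z.1 z.2} with hDHdef
  have hDLm : MeasurableSet DL := hWm measurableSet_Iic
  have hDHm : MeasurableSet DH := hWm measurableSet_Ici
  -- Ramsey number
  obtain ⟨NR, hNR⟩ := ramseyPairs (C := Fin 4 → Fin 4 → Fin (tmax ε + 1)) (2*m)
  set M := NR with hMdef
  -- the ambient index type and the configuration set B
  set B : Set ((Fin 4 × Fin M) → ℝ) :=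
    {y | (∀ i j : Fin M, (y (0,i), y (1,j)) ∈ DL) ∧
         (∀ i j : Fin M, (y (2,i), y (3,j)) ∈ DH)} with hBdef
  -- positivity of B
  have hBL : MeasurableSet {zz : (Fin M ⊕ Fin M) → ℝ |
      ∀ i j, (zz (Sum.inl i), zz (Sum.inr j)) ∈ DL} := by
    have : {zz : (Fin M ⊕ Fin M) → ℝ | ∀ i j, (zz (Sum.inl i), zz (Sum.inr j)) ∈ DL}
        = ⋂ (i : Fin M) (j : Fin M),
          (fun zz : (Fin M ⊕ Fin M) → ℝ => (zz (Sum.inl i), zz (Sum.inr j))) ⁻¹' DL := by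
      ext zz; simp
    rw [this]
    exact MeasurableSet.iInter fun i => MeasurableSet.iInter fun j =>
      ((measurable_pi_apply _).prodMk (measurable_pi_apply _)) hDLm
  have hBH : MeasurableSet {zz : (Fin M ⊕ Fin M) → ℝ |
      ∀ i j, (zz (Sum.inl i), zz (Sum.inr j)) ∈ DH} := by
    have : {zz : (Fin M ⊕ Fin M) → ℝ | ∀ i j, (zz (Sum.inl i), zz (Sum.inr j)) ∈ DH}
        = ⋂ (i : Fin M) (j : Fin M),
          (fun zz : (Fin M ⊕ Fin M) → ℝ => (zz (Sum.inl i), zz (Sum.inr j))) ⁻¹' DH := by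
      ext zz; simp
    rw [this]
    exact MeasurableSet.iInter fun i => MeasurableSet.iInter fun j =>
      ((measurable_pi_apply _).prodMk (measurable_pi_apply _)) hDHm
  have hBpos : PP (Fin 4 × Fin M) B ≠ 0 := by
    set h0 : ((Fin M ⊕ Fin M) ⊕ (Fin M ⊕ Fin M)) → Fin 4 × Fin M :=
      Sum.elim (Sum.elim (fun i => ((0 : Fin 4), i)) (fun i => ((1 : Fin 4), i)))
        (Sum.elim (fun i => ((2 : Fin 4), i)) (fun i => ((3 : Fin 4), i))) with h0def
    have hinj : Function.Injective h0 := by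
      rintro ((i|i)|(i|i)) ((j|j)|(j|j)) h <;>
        simp only [h0def, Sum.elim_inl, Sum.elim_inr, Prod.mk.injEq] at h <;>
        first
          | (exact absurd h.1 (by decide))
          | (rw [h.2])
    set B₀ : Set (((Fin M ⊕ Fin M) ⊕ (Fin M ⊕ Fin M)) → ℝ) :=
      {z | (∀ i j, (z (Sum.inl (Sum.inl i)), z (Sum.inl (Sum.inr j))) ∈ DL) ∧
           (∀ i j, (z (Sum.inr (Sum.inl i)), z (Sum.inr (Sum.inr j))) ∈ DH)} with hB₀def
    have hBeq : B = (fun y => y ∘ h0) ⁻¹' B₀ := rfl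
    have hB₀meas : MeasurableSet B₀ := by
      have he := (MeasurableEquiv.sumPiEquivProdPi
        (fun _ : (Fin M ⊕ Fin M) ⊕ (Fin M ⊕ Fin M) => ℝ)).measurable
      exact (he (hBL.prod hBH))
    rw [hBeq, (measurePreserving_comp_inj hinj).measure_preimage hB₀meas.nullMeasurableSet]
    have hmp := MeasureTheory.measurePreserving_sumPiEquivProdPi
      (X := fun _ : (Fin M ⊕ Fin M) ⊕ (Fin M ⊕ Fin M) => ℝ) (fun _ => nu)
    have hB₀eq : B₀ = (MeasurableEquiv.sumPiEquivProdPi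
        (fun _ : (Fin M ⊕ Fin M) ⊕ (Fin M ⊕ Fin M) => ℝ)) ⁻¹'
        (({zz : (Fin M ⊕ Fin M) → ℝ | ∀ i j, (zz (Sum.inl i), zz (Sum.inr j)) ∈ DL}) ×ˢ
         ({zz : (Fin M ⊕ Fin M) → ℝ | ∀ i j, (zz (Sum.inl i), zz (Sum.inr j)) ∈ DH})) := rfl
    show (Measure.pi fun _ : (Fin M ⊕ Fin M) ⊕ (Fin M ⊕ Fin M) => nu) B₀ ≠ 0
    rw [hB₀eq, hmp.measure_preimage (hBL.prod hBH).nullMeasurableSet, Measure.prod_prod]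
    exact mul_ne_zero (lemQsum hDLm hlow _ _) (lemQsum hDHm hhigh _ _)
  -- pigeonhole over full colorings
  set F : ((Fin 4 × Fin M) → ℝ) → ((Fin 4 × Fin M) × (Fin 4 × Fin M) → Fin (tmax ε + 1)) :=
    fun y pq => colorOf ε (W (y pq.1) (y pq.2)) with hFdef
  have hfibmeas : ∀ χ, MeasurableSet {y : (Fin 4 × Fin M) → ℝ | F y = χ} := by
    intro χ
    have : {y : (Fin 4 × Fin M) → ℝ | F y = χ}
        = ⋂ pq : (Fin 4 × Fin M) × (Fin 4 × Fin M),
          (fun y : (Fin 4 × Fin M) → ℝ => W (y pq.1) (y pq.2)) ⁻¹'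
            {t : ℝ | colorOf ε t = χ pq} := by
      ext y
      simp only [Set.mem_setOf_eq, Set.mem_iInter, Set.mem_preimage, hFdef]
      constructor
      · intro h pq; rw [← h]
      · intro h; funext pq; exact h pq
    rw [this]
    refine MeasurableSet.iInter fun pq => ?_
    have hpair : Measurable (fun y : (Fin 4 × Fin M) → ℝ => (y pq.1, y pq.2)) :=
      (measurable_pi_apply _).prodMk (measurable_pi_apply _)
    exact (hWm.comp hpair) (measurable_colorSet ε (χ pq))
  have hχex : ∃ χ, PP (Fin 4 × Fin M) (B ∩ {y | F y = χ}) ≠ 0 := by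
    by_contra hall
    push_neg at hall
    apply hBpos
    have hsub : B ⊆ ⋃ χ, (B ∩ {y | F y = χ}) := by
      intro y hy
      exact Set.mem_iUnion.2 ⟨F y, hy, rfl⟩
    refine le_antisymm ?_ zero_le
    calc PP (Fin 4 × Fin M) B ≤ PP (Fin 4 × Fin M) (⋃ χ, (B ∩ {y | F y = χ})) :=
          measure_mono hsub
      _ ≤ ∑' χ, PP (Fin 4 × Fin M) (B ∩ {y | F y = χ}) := measure_iUnion_le _
      _ = 0 := by simp [hall]
  obtain ⟨χ, hχpos⟩ := hχex
  obtain ⟨ω₀, hω₀B, hω₀F⟩ := nonempty_of_measure_ne_zero hχpos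
  rw [Set.mem_setOf_eq] at hω₀F
  -- Ramsey
  set χhat : ℕ → ℕ → (Fin 4 → Fin 4 → Fin (tmax ε + 1)) := fun pn rn =>
    if h : pn < M ∧ rn < M then (fun X Y => χ ((X, ⟨pn, h.1⟩), (Y, ⟨rn, h.2⟩)))
    else (fun _ _ => ⟨0, Nat.succ_pos _⟩) with hχhatdef
  obtain ⟨g, hgmono, hgmem, γ, hγ⟩ := hNR (Finset.range M) (by simp [hMdef]) χhat
  set G : Fin (2*m) → Fin M := fun i => ⟨g i, Finset.mem_range.1 (hgmem i)⟩ with hGdef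
  have hγ' : ∀ (i j : Fin (2*m)), i < j → ∀ X Y : Fin 4,
      χ ((X, G i), (Y, G j)) = γ X Y := by
    intro i j hij X Y
    have h := hγ i j hij
    simp only [hχhatdef] at h
    rw [dif_pos (⟨Finset.mem_range.1 (hgmem i), Finset.mem_range.1 (hgmem j)⟩ :
      g i < M ∧ g j < M)] at h
    exact congrFun (congrFun h X) Y
  -- numeric facts
  have h2m : 1 < 2*m := by omega
  set i0 : Fin (2*m) := ⟨0, by omega⟩ with hi0
  set i1 : Fin (2*m) := ⟨1, by omega⟩ with hi1
  have hi01 : i0 < i1 := by simp [hi0, hi1, Fin.mk_lt_mk]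
  have hlowval : rep ε (γ 0 1) ≤ q + ε := by
    have hv : (ω₀ ((0 : Fin 4), G i0), ω₀ ((1 : Fin 4), G i1)) ∈ DL := hω₀B.1 (G i0) (G i1)
    rw [hDLdef, Set.mem_setOf_eq] at hv
    have hcol : colorOf ε (W (ω₀ ((0 : Fin 4), G i0)) (ω₀ ((1 : Fin 4), G i1))) = γ 0 1 :=
      (congrFun hω₀F (((0 : Fin 4), G i0), ((1 : Fin 4), G i1))).trans (hγ' i0 i1 hi01 0 1)
    have hclose := colorOf_close ε hε (hWrange (ω₀ ((0 : Fin 4), G i0)) (ω₀ ((1 : Fin 4), G i1)))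
    rw [hcol] at hclose
    have := abs_le.1 hclose
    linarith [this.1]
  have hhighval : q + ρ - ε ≤ rep ε (γ 2 3) := by
    have hv : (ω₀ ((2 : Fin 4), G i0), ω₀ ((3 : Fin 4), G i1)) ∈ DH := hω₀B.2 (G i0) (G i1)
    rw [hDHdef, Set.mem_setOf_eq] at hv
    have hcol : colorOf ε (W (ω₀ ((2 : Fin 4), G i0)) (ω₀ ((3 : Fin 4), G i1))) = γ 2 3 :=
      (congrFun hω₀F (((2 : Fin 4), G i0), ((3 : Fin 4), G i1))).trans (hγ' i0 i1 hi01 2 3)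
    have hclose := colorOf_close ε hε (hWrange (ω₀ ((2 : Fin 4), G i0)) (ω₀ ((3 : Fin 4), G i1)))
    rw [hcol] at hclose
    have := abs_le.1 hclose
    linarith [this.2]
  -- case analysis
  by_cases hcase : ∃ X Y : Fin 4, ρ/6 ≤ |rep ε (γ X X) - rep ε (γ Y Y)|
      + |rep ε (γ Y Y) - rep ε (γ X Y)| + |rep ε (γ X X) - rep ε (γ X Y)|
  swap
  · exfalso
    push_neg at hcase
    have h1 := hcase 0 1
    have h2 := hcase 0 2
    have h3 := hcase 2 3
    have a1 : |rep ε (γ 0 0) - rep ε (γ 0 1)| < ρ/6 := by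
      have := abs_nonneg (rep ε (γ 0 0) - rep ε (γ 1 1))
      have := abs_nonneg (rep ε (γ 1 1) - rep ε (γ 0 1))
      linarith
    have a2 : |rep ε (γ 0 0) - rep ε (γ 2 2)| < ρ/6 := by
      have := abs_nonneg (rep ε (γ 2 2) - rep ε (γ 0 2))
      have := abs_nonneg (rep ε (γ 0 0) - rep ε (γ 0 2))
      linarith
    have a3 : |rep ε (γ 2 2) - rep ε (γ 2 3)| < ρ/6 := by
      have := abs_nonneg (rep ε (γ 2 2) - rep ε (γ 3 3))
      have := abs_nonneg (rep ε (γ 3 3) - rep ε (γ 2 3))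
      linarith
    rw [abs_lt] at a1 a2 a3
    linarith [a1.1, a1.2, a2.1, a2.2, a3.1, a3.2]
  obtain ⟨X, Y, hsep⟩ := hcase
  -- the selected-configuration set
  set Csel : Set ((Fin 4 × Fin (2*m)) → ℝ) :=
    {w | ∀ (X' Y' : Fin 4) (i j : Fin (2*m)), i < j →
      colorOf ε (W (w (X',i)) (w (Y',j))) = γ X' Y'} with hCdef
  have hCmeas : MeasurableSet Csel := by
    have : Csel = ⋂ (X' : Fin 4) (Y' : Fin 4) (i : Fin (2*m)) (j : Fin (2*m)),
        {w : (Fin 4 × Fin (2*m)) → ℝ | i < j →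
          colorOf ε (W (w (X',i)) (w (Y',j))) = γ X' Y'} := by
      ext w; simp [hCdef]
    rw [this]
    refine MeasurableSet.iInter fun X' => MeasurableSet.iInter fun Y' =>
      MeasurableSet.iInter fun i => MeasurableSet.iInter fun j => ?_
    by_cases hij : i < j
    · have : {w : (Fin 4 × Fin (2*m)) → ℝ | i < j →
          colorOf ε (W (w (X',i)) (w (Y',j))) = γ X' Y'}
          = (fun w : (Fin 4 × Fin (2*m)) → ℝ => W (w (X',i)) (w (Y',j))) ⁻¹'
            {t : ℝ | colorOf ε t = γ X' Y'} := by
        ext w; simp [hij]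
      rw [this]
      have hpair : Measurable (fun w : (Fin 4 × Fin (2*m)) → ℝ => (w (X',i), w (Y',j))) :=
        (measurable_pi_apply _).prodMk (measurable_pi_apply _)
      exact (hWm.comp hpair) (measurable_colorSet ε _)
    · have : {w : (Fin 4 × Fin (2*m)) → ℝ | i < j →
          colorOf ε (W (w (X',i)) (w (Y',j))) = γ X' Y'} = Set.univ := by
        ext w; simp [hij]
      rw [this]
      exact MeasurableSet.univ
  -- B ∩ fiber is contained in the pullback of Csel
  set emb : Fin 4 × Fin (2*m) → Fin 4 × Fin M := fun p => (p.1, G p.2) with hembdef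
  have hembinj : Function.Injective emb := by
    intro p1 p2 h
    simp only [hembdef, Prod.mk.injEq, hGdef, Fin.mk.injEq] at h
    exact Prod.ext_iff.2 ⟨h.1, hgmono.injective h.2⟩
  have hsubC : B ∩ {y | F y = χ} ⊆ (fun y => y ∘ emb) ⁻¹' Csel := by
    rintro y ⟨hyB, hyF⟩
    rw [Set.mem_setOf_eq] at hyF
    intro X' Y' i j hij
    exact (congrFun hyF ((emb (X', i)), (emb (Y', j)))).trans (hγ' i j hij X' Y')
  have hCpos : PP (Fin 4 × Fin (2*m)) Csel ≠ 0 := by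
    intro h0
    apply hχpos
    refine le_antisymm ?_ zero_le
    calc PP (Fin 4 × Fin M) (B ∩ {y | F y = χ})
        ≤ PP (Fin 4 × Fin M) ((fun y => y ∘ emb) ⁻¹' Csel) := measure_mono hsubC
      _ = PP (Fin 4 × Fin (2*m)) Csel :=
          (measurePreserving_comp_inj hembinj).measure_preimage hCmeas.nullMeasurableSet
      _ = 0 := h0
  -- choose the triple
  refine ⟨rep ε (γ X X), rep ε (γ Y Y), rep ε (γ X Y),
    rep_mem ε hε _, rep_mem ε hε _, rep_mem ε hε _, hsep, ?_⟩
  intro A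
  -- the selection map for A
  set e1 : Fin m → Fin (2*m) := fun i => ⟨i.1, by omega⟩ with he1
  set e2 : Fin m → Fin (2*m) := fun i => ⟨m + i.1, by omega⟩ with he2
  set sel : Fin m → Fin 4 × Fin (2*m) :=
    fun i => if i ∈ A then (X, e1 i) else (Y, e2 i) with hseldef
  have hselinj : Function.Injective sel := by
    intro i j hijeq
    have hval : ∀ k : Fin m, ((sel k).2 : ℕ) = if k ∈ A then (k : ℕ) else m + k := by
      intro k
      by_cases h : k ∈ A <;> simp [hseldef, he1, he2, h]
    have hv := congrArg (fun p : Fin 4 × Fin (2*m) => ((p.2 : ℕ))) hijeq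
    rw [hval i, hval j] at hv
    have hi := i.2
    have hj := j.2
    by_cases hiA : i ∈ A <;> by_cases hjA : j ∈ A <;> simp [hiA, hjA] at hv <;>
      first
        | (exact Fin.val_injective hv)
        | omega
  -- the null sets
  set Nm := toMeasurable (PP (Fin m))
    {x : Fin m → ℝ | ¬ Φ (fun p => W (x p.1.1) (x p.1.2)) = a} with hNmdef
  have hNm0 : PP (Fin m) Nm = 0 := by
    rw [hNmdef, measure_toMeasurable, ← PP_eq_restrict]
    exact ae_iff.1 hae
  have hpull0 : PP (Fin 4 × Fin (2*m)) ((fun w : (Fin 4 × Fin (2*m)) → ℝ => w ∘ sel) ⁻¹' Nm)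
      = 0 := by
    rw [(measurePreserving_comp_inj hselinj).measure_preimage
      (measurableSet_toMeasurable _ _).nullMeasurableSet]
    exact hNm0
  set NB : Set ((Fin 4 × Fin (2*m)) → ℝ) :=
    (Set.univ.pi fun _ : Fin 4 × Fin (2*m) => Set.Icc (0:ℝ) 1)ᶜ with hNBdef
  have hNB0 : PP (Fin 4 × Fin (2*m)) NB = 0 := by
    rw [hNBdef, measure_compl (MeasurableSet.univ_pi fun _ => measurableSet_Icc)
      (measure_ne_top _ _)]
    have : PP (Fin 4 × Fin (2*m)) (Set.univ.pi fun _ : Fin 4 × Fin (2*m) => Set.Icc (0:ℝ) 1)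
        = 1 := by
      show (Measure.pi fun _ : Fin 4 × Fin (2*m) => nu) _ = 1
      rw [Measure.pi_pi]
      have : nu (Set.Icc (0:ℝ) 1) = 1 := by
        rw [nu, Measure.restrict_apply measurableSet_Icc, Set.inter_self, Real.volume_Icc]
        norm_num
      simp [this]
    rw [this, measure_univ]
    simp
  -- pick the witness configuration
  have hnotsub : ¬ (Csel ⊆ NB ∪ (fun w : (Fin 4 × Fin (2*m)) → ℝ => w ∘ sel) ⁻¹' Nm) := by
    intro hsub
    apply hCpos
    refine le_antisymm ?_ zero_le
    calc PP (Fin 4 × Fin (2*m)) Csel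
        ≤ PP (Fin 4 × Fin (2*m)) (NB ∪ (fun w : (Fin 4 × Fin (2*m)) → ℝ => w ∘ sel) ⁻¹' Nm) :=
          measure_mono hsub
      _ ≤ PP (Fin 4 × Fin (2*m)) NB
          + PP (Fin 4 × Fin (2*m)) ((fun w : (Fin 4 × Fin (2*m)) → ℝ => w ∘ sel) ⁻¹' Nm) :=
          measure_union_le _ _
      _ = 0 := by rw [hNB0, hpull0, add_zero]
  obtain ⟨ω, hωC, hωn⟩ := Set.not_subset.1 hnotsub
  rw [Set.mem_union] at hωn
  push_neg at hωn
  obtain ⟨hω1, hω2⟩ := hωn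
  have hbox : ∀ p : Fin 4 × Fin (2*m), ω p ∈ Set.Icc (0:ℝ) 1 := by
    have := Set.notMem_compl_iff.1 hω1
    intro p
    exact this p (Set.mem_univ p)
  have hΦval : Φ (fun p => W ((ω ∘ sel) p.1.1) ((ω ∘ sel) p.1.2)) = a := by
    by_contra hne
    exact hω2 (subset_toMeasurable _ _ hne)
  refine ⟨fun p => W (ω (sel p.1.1)) (ω (sel p.1.2)), fun p => hWrange _ _, hΦval, ?_⟩
  rintro ⟨⟨i, j⟩, hij⟩
  have hijlt : i < j := hij
  have hijv : (i : ℕ) < (j : ℕ) := hijlt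
  have hclose : ∀ (X' Y' : Fin 4) (i' j' : Fin (2*m)), i' < j' →
      |W (ω (X', i')) (ω (Y', j')) - rep ε (γ X' Y')| ≤ ε := by
    intro X' Y' i' j' hij'
    have hcol := hωC X' Y' i' j' hij'
    have hcl := colorOf_close ε hε (hWrange (ω (X', i')) (ω (Y', j')))
    rwa [hcol] at hcl
  by_cases hiA : i ∈ A <;> by_cases hjA : j ∈ A <;>
    simp only [hiA, hjA, if_true, if_false, hseldef]
  · -- both in A
    exact hclose X X (e1 i) (e1 j) (by rw [he1]; exact Fin.mk_lt_mk.2 hijv)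
  · -- i ∈ A, j ∉ A
    exact hclose X Y (e1 i) (e2 j) (by rw [he1, he2]; exact Fin.mk_lt_mk.2 (by omega))
  · -- i ∉ A, j ∈ A
    rw [hWsym]
    exact hclose X Y (e1 j) (e2 i)
      (by rw [he1, he2]; exact Fin.mk_lt_mk.2 (by have := j.2; omega))
  · -- both outside A
    exact hclose Y Y (e2 i) (e2 j) (by rw [he2]; exact Fin.mk_lt_mk.2 (by omega))

end KeyLemma

section Chunks


lemma nu_prod_eq : nu.prod nu = (volume : Measure (ℝ × ℝ)).restrict unitSquare := by
  rw [nu, Measure.prod_restrict, ← Measure.volume_eq_prod, unitSquare]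

lemma exists_lowhigh (W : ℝ → ℝ → ℝ)
    (hWrange : ∀ x y, W x y ∈ Set.Icc (0:ℝ) 1)
    (hnc : ¬ ∃ c : ℝ, (fun z : ℝ × ℝ => W z.1 z.2)
      =ᵐ[volume.restrict unitSquare] fun _ => c) :
    ∃ q ρ : ℝ, 0 < ρ ∧ (nu.prod nu) {z : ℝ × ℝ | W z.1 z.2 ≤ q} ≠ 0 ∧
      (nu.prod nu) {z : ℝ × ℝ | q + ρ ≤ W z.1 z.2} ≠ 0 := by
  set μ := nu.prod nu with hμdef
  have hμprob : IsProbabilityMeasure μ := by rw [hμdef]; infer_instance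
  have step1 : ∃ q : ℝ, μ {z : ℝ × ℝ | W z.1 z.2 ≤ q} ≠ 0 ∧
      μ {z : ℝ × ℝ | q < W z.1 z.2} ≠ 0 := by
    by_contra h1
    push_neg at h1
    have h1' : ∀ q : ℝ, μ {z : ℝ × ℝ | W z.1 z.2 ≤ q} = 0 ∨
        μ {z : ℝ × ℝ | q < W z.1 z.2} = 0 := by
      intro q
      by_cases h : μ {z : ℝ × ℝ | W z.1 z.2 ≤ q} = 0
      · exact Or.inl h
      · exact Or.inr (h1 q h)
    set S := {x : ℝ | μ {z : ℝ × ℝ | x < W z.1 z.2} = 0} with hSdef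
    have hS1 : (1:ℝ) ∈ S := by
      have : {z : ℝ × ℝ | 1 < W z.1 z.2} = ∅ := by
        ext z
        simp only [Set.mem_setOf_eq, Set.mem_empty_iff_false, iff_false, not_lt]
        exact (hWrange z.1 z.2).2
      simp [hSdef, this]
    have hSbdd : BddBelow S := by
      refine ⟨0, fun x hx => ?_⟩
      by_contra hneg
      push_neg at hneg
      have : {z : ℝ × ℝ | x < W z.1 z.2} = Set.univ := by
        ext z
        simp only [Set.mem_setOf_eq, Set.mem_univ, iff_true]
        exact lt_of_lt_of_le hneg (hWrange z.1 z.2).1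
      rw [hSdef, Set.mem_setOf_eq, this] at hx
      exact (IsProbabilityMeasure.ne_zero μ) (by simpa using hx)
    set c := sInf S with hcdef
    have hSne : S.Nonempty := ⟨1, hS1⟩
    have hc_upper : μ {z : ℝ × ℝ | c < W z.1 z.2} = 0 := by
      have hcup : {z : ℝ × ℝ | c < W z.1 z.2}
          = ⋃ n : ℕ, {z : ℝ × ℝ | c + 1/(n+1:ℝ) < W z.1 z.2} := by
        ext z
        simp only [Set.mem_setOf_eq, Set.mem_iUnion]
        constructor
        · intro h
          obtain ⟨n, hn⟩ := exists_nat_one_div_lt (sub_pos.2 h)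
          exact ⟨n, by push_cast at hn ⊢; linarith⟩
        · rintro ⟨n, hn⟩
          have : (0:ℝ) < 1/(n+1:ℝ) := by positivity
          linarith
      rw [hcup]
      refine measure_iUnion_null fun n => ?_
      have hlt' : c < c + 1/(n+1:ℝ) := lt_add_of_pos_right c (by positivity)
      obtain ⟨x, hxS, hxlt⟩ := exists_lt_of_csInf_lt hSne hlt'
      refine measure_mono_null ?_ hxS
      intro z hz
      simp only [Set.mem_setOf_eq] at hz ⊢
      linarith
    have hc_lower : μ {z : ℝ × ℝ | W z.1 z.2 < c} = 0 := by
      have hcdn : {z : ℝ × ℝ | W z.1 z.2 < c}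
          = ⋃ n : ℕ, {z : ℝ × ℝ | W z.1 z.2 ≤ c - 1/(n+1:ℝ)} := by
        ext z
        simp only [Set.mem_setOf_eq, Set.mem_iUnion]
        constructor
        · intro h
          obtain ⟨n, hn⟩ := exists_nat_one_div_lt (sub_pos.2 h)
          exact ⟨n, by push_cast at hn ⊢; linarith⟩
        · rintro ⟨n, hn⟩
          have : (0:ℝ) < 1/(n+1:ℝ) := by positivity
          linarith
      rw [hcdn]
      refine measure_iUnion_null fun n => ?_
      rcases h1' (c - 1/(n+1:ℝ)) with h | h
      · exact h
      · exfalso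
        have hmem : (c - 1/(n+1:ℝ)) ∈ S := h
        have := csInf_le hSbdd hmem
        rw [← hcdef] at this
        have hpos : (0:ℝ) < 1/(n+1:ℝ) := by positivity
        linarith
    apply hnc
    refine ⟨c, ?_⟩
    have : μ {z : ℝ × ℝ | ¬ W z.1 z.2 = c} = 0 := by
      refine measure_mono_null (fun z hz => ?_)
        (measure_union_null hc_lower hc_upper)
      simp only [Set.mem_setOf_eq] at hz
      rcases lt_or_gt_of_ne hz with h | h
      · exact Or.inl h
      · exact Or.inr h
    rw [← nu_prod_eq]
    exact ae_iff.2 this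
  obtain ⟨q, hle, hlt⟩ := step1
  have hup : {z : ℝ × ℝ | q < W z.1 z.2}
      = ⋃ n : ℕ, {z : ℝ × ℝ | q + 1/(n+1:ℝ) ≤ W z.1 z.2} := by
    ext z
    simp only [Set.mem_setOf_eq, Set.mem_iUnion]
    constructor
    · intro h
      obtain ⟨n, hn⟩ := exists_nat_one_div_lt (sub_pos.2 h)
      exact ⟨n, by push_cast at hn ⊢; linarith⟩
    · rintro ⟨n, hn⟩
      have : (0:ℝ) < 1/(n+1:ℝ) := by positivity
      linarith
  by_contra hall
  push_neg at hall
  apply hlt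
  rw [hup]
  refine measure_iUnion_null fun n => ?_
  by_contra hne
  exact hne (hall q (1/(n+1:ℝ)) (by positivity) hle)

/-- the two-type step graphon -/
noncomputable def W0 (u v s : ℝ) : ℝ → ℝ → ℝ := fun x y =>
  if x ≤ 1/2 then (if y ≤ 1/2 then v else s) else (if y ≤ 1/2 then s else u)

lemma W0_measurable (u v s : ℝ) : Measurable (Function.uncurry (W0 u v s)) := by
  have h1 : MeasurableSet {z : ℝ × ℝ | z.1 ≤ 1/2} :=
    measurableSet_le measurable_fst measurable_const
  have h2 : MeasurableSet {z : ℝ × ℝ | z.2 ≤ 1/2} :=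
    measurableSet_le measurable_snd measurable_const
  have : Function.uncurry (W0 u v s) = fun z : ℝ × ℝ =>
      if z.1 ≤ 1/2 then (if z.2 ≤ 1/2 then v else s) else (if z.2 ≤ 1/2 then s else u) := rfl
  rw [this]
  exact Measurable.ite h1 (Measurable.ite h2 measurable_const measurable_const)
    (Measurable.ite h2 measurable_const measurable_const)

lemma W0_symm (u v s : ℝ) : ∀ x y, W0 u v s x y = W0 u v s y x := by
  intro x y
  unfold W0
  split_ifs <;> rfl

lemma W0_range (u v s : ℝ) (hu : u ∈ Set.Icc (0:ℝ) 1) (hv : v ∈ Set.Icc (0:ℝ) 1)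
    (hs : s ∈ Set.Icc (0:ℝ) 1) : ∀ x y, W0 u v s x y ∈ Set.Icc (0:ℝ) 1 := by
  intro x y
  rw [W0]
  split_ifs <;> assumption

lemma W0_pattern {m : ℕ} (u v s : ℝ) (x : Fin m → ℝ) :
    (fun p : {p : Fin m × Fin m // p.1 < p.2} => W0 u v s (x p.1.1) (x p.1.2))
      = fun p => if p.1.1 ∈ Finset.univ.filter (fun i => ¬ x i ≤ 1/2) then
          (if p.1.2 ∈ Finset.univ.filter (fun i => ¬ x i ≤ 1/2) then u else s)
        else (if p.1.2 ∈ Finset.univ.filter (fun i => ¬ x i ≤ 1/2) then s else v) := by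
  classical
  funext p
  by_cases h1 : x p.1.1 ≤ 1/2 <;> by_cases h2 : x p.1.2 ≤ 1/2 <;>
    simp only [W0, Finset.mem_filter, Finset.mem_univ, true_and, h1, h2,
      not_true_eq_false, not_false_eq_true, if_true, if_false, ite_true, ite_false]

lemma region_value (Wf : ℝ → ℝ → ℝ) (c t : ℝ) (R : Set (ℝ × ℝ)) (hR : R ⊆ unitSquare)
    (hRv : volume R ≠ 0) (hval : ∀ z ∈ R, Wf z.1 z.2 = t)
    (hc : (fun z : ℝ × ℝ => Wf z.1 z.2) =ᵐ[volume.restrict unitSquare] fun _ => c) :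
    t = c := by
  by_contra hne
  have h0 : (volume.restrict unitSquare) {z : ℝ × ℝ | ¬ Wf z.1 z.2 = c} = 0 := ae_iff.1 hc
  have hsub : R ⊆ {z : ℝ × ℝ | ¬ Wf z.1 z.2 = c} := by
    intro z hz
    simp only [Set.mem_setOf_eq]
    rw [hval z hz]
    exact hne
  have : (volume.restrict unitSquare) R = 0 := measure_mono_null hsub h0
  rw [Measure.restrict_apply' (by rw [unitSquare]; exact measurableSet_Icc.prod measurableSet_Icc),
    Set.inter_eq_left.2 hR] at this
  exact hRv this

lemma volR1 : (volume : Measure (ℝ × ℝ)) (Set.Ioc (1/2:ℝ) 1 ×ˢ Set.Ioc (1/2:ℝ) 1) ≠ 0 := by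
  rw [Measure.volume_eq_prod, Measure.prod_prod, Real.volume_Ioc]
  norm_num
lemma volR2 : (volume : Measure (ℝ × ℝ)) (Set.Icc (0:ℝ) (1/2) ×ˢ Set.Icc (0:ℝ) (1/2)) ≠ 0 := by
  rw [Measure.volume_eq_prod, Measure.prod_prod, Real.volume_Icc]
  norm_num
lemma volR3 : (volume : Measure (ℝ × ℝ)) (Set.Icc (0:ℝ) (1/2) ×ˢ Set.Ioc (1/2:ℝ) 1) ≠ 0 := by
  rw [Measure.volume_eq_prod, Measure.prod_prod, Real.volume_Icc, Real.volume_Ioc]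
  norm_num

lemma Ioc_sub : Set.Ioc (1/2:ℝ) 1 ⊆ Set.Icc 0 1 := fun x hx => ⟨by linarith [hx.1], hx.2⟩
lemma Icc_sub : Set.Icc (0:ℝ) (1/2) ⊆ Set.Icc 0 1 := fun x hx => ⟨hx.1, by linarith [hx.2]⟩

lemma W0_not_ae_const (u v s : ℝ) (hne : ¬ (u = v ∧ v = s)) :
    ¬ ∃ c : ℝ, (fun z : ℝ × ℝ => W0 u v s z.1 z.2)
      =ᵐ[volume.restrict unitSquare] fun _ => c := by
  rintro ⟨c, hc⟩
  have hu : u = c := by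
    refine region_value _ c u (Set.Ioc (1/2:ℝ) 1 ×ˢ Set.Ioc (1/2:ℝ) 1) ?_ volR1 ?_ hc
    · rw [unitSquare]; exact Set.prod_mono Ioc_sub Ioc_sub
    · rintro ⟨z1, z2⟩ ⟨hz1, hz2⟩
      simp only [W0, if_neg (not_le.2 hz1.1), if_neg (not_le.2 hz2.1)]
  have hv : v = c := by
    refine region_value _ c v (Set.Icc (0:ℝ) (1/2) ×ˢ Set.Icc (0:ℝ) (1/2)) ?_ volR2 ?_ hc
    · rw [unitSquare]; exact Set.prod_mono Icc_sub Icc_sub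
    · rintro ⟨z1, z2⟩ ⟨hz1, hz2⟩
      simp only [W0, if_pos hz1.2, if_pos hz2.2]
  have hs : s = c := by
    refine region_value _ c s (Set.Icc (0:ℝ) (1/2) ×ˢ Set.Ioc (1/2:ℝ) 1) ?_ volR3 ?_ hc
    · rw [unitSquare]; exact Set.prod_mono Icc_sub Ioc_sub
    · rintro ⟨z1, z2⟩ ⟨hz1, hz2⟩
      simp only [W0, if_pos hz1.2, if_neg (not_le.2 hz2.1)]
  exact hne ⟨hu.trans hv.symm, hv.trans hs.symm⟩

lemma W0_not_const (u v s : ℝ) (hne : ¬ (u = v ∧ v = s)) :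
    ¬ ∃ c : ℝ, ∀ x ∈ Set.Icc (0:ℝ) 1, ∀ y ∈ Set.Icc (0:ℝ) 1, W0 u v s x y = c := by
  rintro ⟨c, hc⟩
  have h1 : W0 u v s 1 1 = c := hc 1 (by norm_num) 1 (by norm_num)
  have h2 : W0 u v s 0 0 = c := hc 0 (by norm_num) 0 (by norm_num)
  have h3 : W0 u v s 0 1 = c := hc 0 (by norm_num) 1 (by norm_num)
  rw [show W0 u v s 1 1 = u by norm_num [W0]] at h1
  rw [show W0 u v s 0 0 = v by norm_num [W0]] at h2
  rw [show W0 u v s 0 1 = s by norm_num [W0]] at h3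
  exact hne ⟨h1.trans h2.symm, h2.trans h3.symm⟩

end Chunks
section ForwardDir

lemma forwardDir (m : ℕ) (hm : 2 ≤ m)
    (Φ : ({q : Fin m × Fin m // q.1 < q.2} → ℝ) → ℝ)
    (hΦ : ContinuousOn Φ (Set.univ.pi fun _ => Set.Icc (0 : ℝ) 1)) (a : ℝ)
    (W : ℝ → ℝ → ℝ) (hWm : Measurable (Function.uncurry W))
    (hWsym : ∀ x y, W x y = W y x) (hWrange : ∀ x y, W x y ∈ Set.Icc (0:ℝ) 1)
    (hnc : ¬ ∃ c : ℝ, (fun z : ℝ × ℝ => W z.1 z.2)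
      =ᵐ[volume.restrict unitSquare] fun _ => c)
    (hae : ∀ᵐ x ∂(volume.restrict (unitBox m)), Φ (fun p => W (x p.1.1) (x p.1.2)) = a) :
    ∃ u v s : ℝ, u ∈ Set.Icc (0:ℝ) 1 ∧ v ∈ Set.Icc (0:ℝ) 1 ∧ s ∈ Set.Icc (0:ℝ) 1 ∧
      ¬ (u = v ∧ v = s) ∧ ∀ A : Finset (Fin m),
        Φ (fun p => if p.1.1 ∈ A then (if p.1.2 ∈ A then u else s)
            else (if p.1.2 ∈ A then s else v)) = a := by
  classical
  obtain ⟨q, ρ, hρ, hlow, hhigh⟩ := exists_lowhigh W hWrange hnc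
  have hae' : ∀ᵐ x ∂(volume.restrict (Set.univ.pi fun _ : Fin m => Set.Icc (0:ℝ) 1)),
      Φ (fun p => W (x p.1.1) (x p.1.2)) = a := hae
  have hεpos : ∀ n : ℕ, 0 < (ρ/6) * (1/(n+1:ℝ)) := fun n => by positivity
  have hεle : ∀ n : ℕ, (ρ/6) * (1/(n+1:ℝ)) ≤ ρ/6 := by
    intro n
    have h1 : 1/(n+1:ℝ) ≤ 1 := by
      rw [div_le_one (by positivity)]
      have : (0:ℝ) ≤ n := Nat.cast_nonneg n
      linarith
    nlinarith
  have hεlim : Tendsto (fun n : ℕ => (ρ/6) * (1/(n+1:ℝ))) atTop (nhds 0) := by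
    have h1 : Tendsto (fun n : ℕ => 1/((n:ℝ)+1)) atTop (nhds 0) :=
      tendsto_one_div_add_atTop_nhds_zero_nat
    have := h1.const_mul (ρ/6)
    simpa using this
  choose u v s hu hv hs hsep hreal using fun n : ℕ =>
    keyLemma m hm Φ a W hWm hWsym hWrange hae' q ρ hρ hlow hhigh _ (hεpos n) (hεle n)
  have hK : IsCompact (Set.Icc (0:ℝ) 1 ×ˢ (Set.Icc (0:ℝ) 1 ×ˢ Set.Icc (0:ℝ) 1)) :=
    isCompact_Icc.prod (isCompact_Icc.prod isCompact_Icc)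
  obtain ⟨L, hL, φ, hφ, hconv⟩ := hK.tendsto_subseq
    (x := fun n => (u n, v n, s n)) (fun n => ⟨hu n, hv n, hs n⟩)
  have hu0 : Tendsto (fun n => u (φ n)) atTop (nhds L.1) :=
    (continuous_fst.tendsto L).comp hconv
  have hv0 : Tendsto (fun n => v (φ n)) atTop (nhds L.2.1) :=
    ((continuous_fst.comp continuous_snd).tendsto L).comp hconv
  have hs0 : Tendsto (fun n => s (φ n)) atTop (nhds L.2.2) :=
    ((continuous_snd.comp continuous_snd).tendsto L).comp hconv
  have hsum : Tendsto (fun n => |u (φ n) - v (φ n)| + |v (φ n) - s (φ n)|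
      + |u (φ n) - s (φ n)|) atTop
      (nhds (|L.1 - L.2.1| + |L.2.1 - L.2.2| + |L.1 - L.2.2|)) :=
    ((hu0.sub hv0).abs.add (hv0.sub hs0).abs).add (hu0.sub hs0).abs
  have hδ : ρ/6 ≤ |L.1 - L.2.1| + |L.2.1 - L.2.2| + |L.1 - L.2.2| :=
    ge_of_tendsto hsum (Eventually.of_forall fun n => hsep (φ n))
  refine ⟨L.1, L.2.1, L.2.2, hL.1, hL.2.1, hL.2.2, ?_, ?_⟩
  · rintro ⟨h1, h2⟩
    rw [h1, h2] at hδ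
    simp only [sub_self, abs_zero, add_zero, zero_add] at hδ
    linarith
  · intro A
    choose wA hwbox hwa hwclose using fun n : ℕ => hreal (φ n) A
    set pat : {p : Fin m × Fin m // p.1 < p.2} → ℝ := fun p =>
      if p.1.1 ∈ A then (if p.1.2 ∈ A then L.1 else L.2.2)
      else (if p.1.2 ∈ A then L.2.2 else L.2.1) with hpatdef
    have hwtend : Tendsto wA atTop (nhds pat) := by
      rw [tendsto_pi_nhds]
      intro p
      have hpatn : Tendsto (fun n => (if p.1.1 ∈ A then (if p.1.2 ∈ A then u (φ n) else s (φ n))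
          else (if p.1.2 ∈ A then s (φ n) else v (φ n)))) atTop (nhds (pat p)) := by
        by_cases h1 : p.1.1 ∈ A <;> by_cases h2 : p.1.2 ∈ A <;>
          simp only [hpatdef, h1, h2, if_true, if_false, ite_true, ite_false]
        · exact hu0
        · exact hs0
        · exact hs0
        · exact hv0
      have hdiff : Tendsto (fun n => wA n p
          - (if p.1.1 ∈ A then (if p.1.2 ∈ A then u (φ n) else s (φ n))
            else (if p.1.2 ∈ A then s (φ n) else v (φ n)))) atTop (nhds 0) := by
        apply squeeze_zero_norm (fun n => ?_) (hεlim.comp hφ.tendsto_atTop)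
        simpa [Real.norm_eq_abs] using hwclose n p
      have := hdiff.add hpatn
      simpa using this
    have hmempat : pat ∈ Set.univ.pi fun _ : {p : Fin m × Fin m // p.1 < p.2} =>
        Set.Icc (0:ℝ) 1 := by
      intro p _
      simp only [hpatdef]
      split_ifs
      · exact hL.1
      · exact hL.2.2
      · exact hL.2.2
      · exact hL.2.1
    have hin : Tendsto wA atTop
        (nhdsWithin pat (Set.univ.pi fun _ => Set.Icc (0:ℝ) 1)) :=
      tendsto_nhdsWithin_iff.2 ⟨hwtend, Eventually.of_forall fun n p _ => hwbox n p⟩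
    have hfinal : Tendsto (fun n => Φ (wA n)) atTop (nhds (Φ pat)) :=
      (hΦ pat hmempat).tendsto.comp hin
    have hconst : Tendsto (fun n => Φ (wA n)) atTop (nhds a) := by
      have heq : (fun n => Φ (wA n)) = fun _ => a := funext fun n => hwa n
      rw [heq]
      exact tendsto_const_nhds
    exact tendsto_nhds_unique hfinal hconst

end ForwardDir

/-- **Theorem (TD0).** For continuous `Φ` of the variables `w_{ij}` (`i < j`) and `a ∈ ℝ`,
the following are equivalent: (i) some graphon `W`, not a.e. constant, has `Φ_W = a` a.e.;
(ii) some non-constant 2-type graphon (constant on the three half-square regions) has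
`Φ_W = a` everywhere on `[0,1]^m`; (iii) some `u,v,s ∈ [0,1]`, not all equal, satisfy
`Φ((w_{ij})) = a` for every `A ⊆ [m]`, where `w_{ij} = u` if `i,j ∈ A`, `v` if `i,j ∉ A`,
and `s` otherwise. -/
theorem stmt12 (m : ℕ) (hm : 2 ≤ m)
    (Φ : ({q : Fin m × Fin m // q.1 < q.2} → ℝ) → ℝ)
    (hΦ : ContinuousOn Φ (Set.univ.pi fun _ => Set.Icc (0 : ℝ) 1)) (a : ℝ) :
    ((∃ W : ℝ → ℝ → ℝ, IsGraphon W ∧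
        ¬ (∃ c : ℝ, (fun z : ℝ × ℝ => W z.1 z.2)
            =ᵐ[volume.restrict unitSquare] fun _ => c) ∧
        (∀ᵐ x ∂(volume.restrict (unitBox m)),
          Φ (fun q => W (x q.1.1) (x q.1.2)) = a))
      ↔ (∃ u v s : ℝ, u ∈ Set.Icc (0 : ℝ) 1 ∧ v ∈ Set.Icc (0 : ℝ) 1 ∧
          s ∈ Set.Icc (0 : ℝ) 1 ∧ ¬ (u = v ∧ v = s) ∧
          ∀ A : Finset (Fin m),
            Φ (fun q => if q.1.1 ∈ A then (if q.1.2 ∈ A then u else s)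
                else (if q.1.2 ∈ A then s else v)) = a))
    ∧ ((∃ W : ℝ → ℝ → ℝ, IsGraphon W ∧
        (∃ u v s : ℝ,
          (∀ x ∈ Set.Ioc (1/2 : ℝ) 1, ∀ y ∈ Set.Ioc (1/2 : ℝ) 1, W x y = u) ∧
          (∀ x ∈ Set.Icc (0 : ℝ) (1/2), ∀ y ∈ Set.Icc (0 : ℝ) (1/2), W x y = v) ∧
          (∀ x ∈ Set.Icc (0 : ℝ) (1/2), ∀ y ∈ Set.Ioc (1/2 : ℝ) 1, W x y = s)) ∧
        ¬ (∃ c : ℝ, ∀ x ∈ Set.Icc (0 : ℝ) 1, ∀ y ∈ Set.Icc (0 : ℝ) 1, W x y = c) ∧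
        (∀ x : Fin m → ℝ, (∀ i, x i ∈ Set.Icc (0 : ℝ) 1) →
          Φ (fun q => W (x q.1.1) (x q.1.2)) = a))
      ↔ (∃ u v s : ℝ, u ∈ Set.Icc (0 : ℝ) 1 ∧ v ∈ Set.Icc (0 : ℝ) 1 ∧
          s ∈ Set.Icc (0 : ℝ) 1 ∧ ¬ (u = v ∧ v = s) ∧
          ∀ A : Finset (Fin m),
            Φ (fun q => if q.1.1 ∈ A then (if q.1.2 ∈ A then u else s)
                else (if q.1.2 ∈ A then s else v)) = a)) := by

  classical
  constructor
  · constructor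
    · rintro ⟨W, ⟨hWm, hWsym, hWrange⟩, hnc, hae⟩
      exact forwardDir m hm Φ hΦ a W hWm hWsym hWrange hnc hae
    · rintro ⟨u, v, s, hu, hv, hs, hne, hA⟩
      refine ⟨W0 u v s, ⟨W0_measurable u v s, W0_symm u v s, W0_range u v s hu hv hs⟩,
        W0_not_ae_const u v s hne, ?_⟩
      refine Filter.Eventually.of_forall fun x => ?_
      rw [W0_pattern u v s x]
      exact hA _
  · constructor
    · rintro ⟨W, ⟨hWm, hWsym, hWrange⟩, ⟨u, v, s, hupr, hvpr, hspr⟩, hnc, hall⟩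
      have h11 : (1:ℝ) ∈ Set.Ioc (1/2:ℝ) 1 := ⟨by norm_num, le_refl 1⟩
      have h00 : (0:ℝ) ∈ Set.Icc (0:ℝ) (1/2) := ⟨le_refl 0, by norm_num⟩
      refine ⟨u, v, s, ?_, ?_, ?_, ?_, ?_⟩
      · rw [← hupr 1 h11 1 h11]; exact hWrange 1 1
      · rw [← hvpr 0 h00 0 h00]; exact hWrange 0 0
      · rw [← hspr 0 h00 1 h11]; exact hWrange 0 1
      · rintro ⟨h1, h2⟩
        apply hnc
        refine ⟨v, fun x hx y hy => ?_⟩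
        rcases le_or_gt x (1/2) with hx2 | hx2 <;> rcases le_or_gt y (1/2) with hy2 | hy2
        · exact hvpr x ⟨hx.1, hx2⟩ y ⟨hy.1, hy2⟩
        · rw [hspr x ⟨hx.1, hx2⟩ y ⟨hy2, hy.2⟩]; exact h2.symm
        · rw [hWsym, hspr y ⟨hy.1, hy2⟩ x ⟨hx2, hx.2⟩]; exact h2.symm
        · rw [hupr x ⟨hx2, hx.2⟩ y ⟨hy2, hy.2⟩]; exact h1
      · intro A
        have hx : ∀ i : Fin m, (if i ∈ A then (1:ℝ) else 0) ∈ Set.Icc (0:ℝ) 1 := by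
          intro i; split_ifs <;> norm_num
        have happ := hall (fun i => if i ∈ A then (1:ℝ) else 0) hx
        have hfun : (fun p : {p : Fin m × Fin m // p.1 < p.2} =>
            W (if p.1.1 ∈ A then (1:ℝ) else 0) (if p.1.2 ∈ A then (1:ℝ) else 0))
            = fun p => if p.1.1 ∈ A then (if p.1.2 ∈ A then u else s)
              else (if p.1.2 ∈ A then s else v) := by
          funext p
          by_cases h1 : p.1.1 ∈ A <;> by_cases h2 : p.1.2 ∈ A <;>
           simp only [h1, h2, if_true, if_false, ite_true, ite_false]
          · exact hupr 1 h11 1 h11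
          · rw [hWsym]; exact hspr 0 h00 1 h11
          · exact hspr 0 h00 1 h11
          · exact hvpr 0 h00 0 h00
        rw [← hfun]
        exact happ
    · rintro ⟨u, v, s, hu, hv, hs, hne, hA⟩
      refine ⟨W0 u v s, ⟨W0_measurable u v s, W0_symm u v s, W0_range u v s hu hv hs⟩,
        ⟨u, v, s, ?_, ?_, ?_⟩, W0_not_const u v s hne, ?_⟩
      · intro x hx y hy
        simp only [W0, if_neg (not_le.2 hx.1), if_neg (not_le.2 hy.1)]
      · intro x hx y hy
        simp only [W0, if_pos hx.2, if_pos hy.2]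
      · intro x hx y hy
        simp only [W0, if_pos hx.2, if_neg (not_le.2 hy.1)]
      · intro x _
        rw [W0_pattern u v s x]
        exact hA _
end

section
/- Let m ≥ 3 be an integer. The function h(x) := (m−2)·log(1+mx) + m·log(1+x) − m·log(1+(m−1)x) satisfies h'(x) = m(m−1)(m−2)x² / ((1+x)(1+(m−1)x)(1+mx)) > 0 for all x > −1/m with x ≠ 0, hence h is strictly increasing on (−1/m, ∞); consequently, the only real number x > −1/m satisfying (1+(m−1)x)^m = (1+mx)^{m−2}(1+x)^m is x = 0. -/
open Filter Finset Asymptotics MeasureTheory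

private lemma aux19_posfacts (m : ℕ) (hm : 3 ≤ m) (x : ℝ) (hx : -1 / (m : ℝ) < x) :
    0 < 1 + x ∧ 0 < 1 + ((m : ℝ) - 1) * x ∧ 0 < 1 + (m : ℝ) * x := by
  have hM : (3 : ℝ) ≤ m := by exact_mod_cast hm
  have hm0 : (0 : ℝ) < m := by linarith
  have hx' : -1 < (m : ℝ) * x := by
    have := (div_lt_iff₀ hm0).mp hx
    nlinarith
  have hx1 : 0 < 1 + x := by nlinarith
  refine ⟨hx1, by nlinarith, by linarith⟩

private lemma aux19_deriv (m : ℕ) (hm : 3 ≤ m) (x : ℝ) (hx : -1 / (m : ℝ) < x) :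
    HasDerivAt (fun y : ℝ => ((m : ℝ) - 2) * Real.log (1 + m * y)
        + m * Real.log (1 + y) - m * Real.log (1 + ((m : ℝ) - 1) * y))
      ((m : ℝ) * ((m : ℝ) - 1) * ((m : ℝ) - 2) * x ^ 2 /
        ((1 + x) * (1 + ((m : ℝ) - 1) * x) * (1 + m * x))) x := by
  obtain ⟨hx1, hxm1, hxm⟩ := aux19_posfacts m hm x hx
  have hM : (3 : ℝ) ≤ m := by exact_mod_cast hm
  have A : HasDerivAt (fun y : ℝ => Real.log (1 + m * y)) ((m : ℝ) / (1 + m * x)) x := by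
    have h1 : HasDerivAt (fun y : ℝ => 1 + (m : ℝ) * y) (m : ℝ) x := by
      simpa using ((hasDerivAt_id x).const_mul (m : ℝ)).const_add 1
    simpa using h1.log hxm.ne'
  have B : HasDerivAt (fun y : ℝ => Real.log (1 + y)) (1 / (1 + x)) x := by
    have h1 : HasDerivAt (fun y : ℝ => 1 + y) 1 x := by
      simpa using (hasDerivAt_id x).const_add 1
    simpa using h1.log hx1.ne'
  have C : HasDerivAt (fun y : ℝ => Real.log (1 + ((m : ℝ) - 1) * y))
      (((m : ℝ) - 1) / (1 + ((m : ℝ) - 1) * x)) x := by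
    have h1 : HasDerivAt (fun y : ℝ => 1 + ((m : ℝ) - 1) * y) ((m : ℝ) - 1) x := by
      simpa using ((hasDerivAt_id x).const_mul ((m : ℝ) - 1)).const_add 1
    simpa using h1.log hxm1.ne'
  have := ((A.const_mul ((m : ℝ) - 2)).add (B.const_mul (m : ℝ))).sub (C.const_mul (m : ℝ))
  refine this.congr_deriv ?_
  rw [mul_div_assoc', mul_div_assoc', mul_div_assoc', div_add_div _ _ hxm.ne' hx1.ne', div_sub_div _ _ (by positivity) hxm1.ne', div_eq_div_iff (by positivity) (by positivity)]
  ring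

private lemma aux19_pos (m : ℕ) (hm : 3 ≤ m) (x : ℝ) (hx : -1 / (m : ℝ) < x) (hx0 : x ≠ 0) :
    0 < (m : ℝ) * ((m : ℝ) - 1) * ((m : ℝ) - 2) * x ^ 2 /
        ((1 + x) * (1 + ((m : ℝ) - 1) * x) * (1 + m * x)) := by
  obtain ⟨hx1, hxm1, hxm⟩ := aux19_posfacts m hm x hx
  have hM : (3 : ℝ) ≤ m := by exact_mod_cast hm
  have hnum : 0 < (m : ℝ) * ((m : ℝ) - 1) * ((m : ℝ) - 2) * x ^ 2 := by
    have hx2 : 0 < x ^ 2 := pow_pos (abs_pos.mpr hx0) 2 |>.trans_le (by rw [sq_abs])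
    have h0 : (0:ℝ) < m := by linarith
    exact mul_pos (mul_pos (mul_pos h0 (by linarith)) (by linarith)) hx2
  exact div_pos hnum (by positivity)

/-- **Calculus step in Example (regular graphs).** For `m ≥ 3`, the function
`h(x) = (m−2) log(1+mx) + m log(1+x) − m log(1+(m−1)x)` has derivative
`m(m−1)(m−2)x²/((1+x)(1+(m−1)x)(1+mx)) > 0` for `x > −1/m`, `x ≠ 0`; hence `h` is
strictly increasing on `(−1/m, ∞)`, and the only `x > −1/m` with
`(1+(m−1)x)^m = (1+mx)^(m−2) (1+x)^m` is `x = 0`. -/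
theorem stmt19 (m : ℕ) (hm : 3 ≤ m) :
    (∀ x : ℝ, -1 / (m : ℝ) < x → x ≠ 0 →
      HasDerivAt (fun y : ℝ => ((m : ℝ) - 2) * Real.log (1 + m * y)
          + m * Real.log (1 + y) - m * Real.log (1 + ((m : ℝ) - 1) * y))
        ((m : ℝ) * ((m : ℝ) - 1) * ((m : ℝ) - 2) * x ^ 2 /
          ((1 + x) * (1 + ((m : ℝ) - 1) * x) * (1 + m * x))) x
      ∧ 0 < (m : ℝ) * ((m : ℝ) - 1) * ((m : ℝ) - 2) * x ^ 2 /
          ((1 + x) * (1 + ((m : ℝ) - 1) * x) * (1 + m * x)))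
    ∧ StrictMonoOn (fun y : ℝ => ((m : ℝ) - 2) * Real.log (1 + m * y)
          + m * Real.log (1 + y) - m * Real.log (1 + ((m : ℝ) - 1) * y))
        (Set.Ioi (-1 / (m : ℝ)))
    ∧ ∀ x : ℝ, -1 / (m : ℝ) < x →
        (1 + ((m : ℝ) - 1) * x) ^ m = (1 + (m : ℝ) * x) ^ (m - 2) * (1 + x) ^ m →
        x = 0 := by
  have hM : (3 : ℝ) ≤ m := by exact_mod_cast hm
  have hm0 : (0 : ℝ) < m := by linarith
  have hneg : -1 / (m : ℝ) < 0 := div_neg_of_neg_of_pos (by norm_num) hm0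
  set f : ℝ → ℝ := fun y : ℝ => ((m : ℝ) - 2) * Real.log (1 + m * y)
          + m * Real.log (1 + y) - m * Real.log (1 + ((m : ℝ) - 1) * y) with hf
  have hcont : ContinuousOn f (Set.Ioi (-1 / (m : ℝ))) := fun x hx =>
    (aux19_deriv m hm x hx).continuousAt.continuousWithinAt
  have hmono : StrictMonoOn f (Set.Ioi (-1 / (m : ℝ))) := by
    have h1 : StrictMonoOn f (Set.Ioc (-1 / (m : ℝ)) 0) := by
      apply strictMonoOn_of_deriv_pos (convex_Ioc _ _)
        (hcont.mono (fun y hy => hy.1))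
      intro y hy
      rw [interior_Ioc] at hy
      rw [(aux19_deriv m hm y hy.1).deriv]
      exact aux19_pos m hm y hy.1 (ne_of_lt hy.2)
    have h2 : StrictMonoOn f (Set.Ici (0 : ℝ)) := by
      apply strictMonoOn_of_deriv_pos (convex_Ici _)
        (hcont.mono (fun y hy => lt_of_lt_of_le hneg hy))
      intro y hy
      rw [interior_Ici] at hy
      have hy' : -1 / (m : ℝ) < y := lt_trans hneg hy
      rw [(aux19_deriv m hm y hy').deriv]
      exact aux19_pos m hm y hy' (ne_of_gt hy)
    intro a ha b hb hab
    rcases le_or_gt b 0 with hb0 | hb0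
    · exact h1 ⟨ha, hab.le.trans hb0⟩ ⟨hb, hb0⟩ hab
    rcases lt_or_ge a 0 with ha0 | ha0
    · calc f a < f 0 := h1 ⟨ha, ha0.le⟩ ⟨hneg, le_refl 0⟩ ha0
        _ < f b := h2 (Set.mem_Ici.mpr le_rfl) hb0.le hb0
    · exact h2 ha0 hb0.le hab
  refine ⟨fun x hx hx0 => ⟨aux19_deriv m hm x hx, aux19_pos m hm x hx hx0⟩, hmono, ?_⟩
  intro x hx heq
  obtain ⟨hx1, hxm1, hxm⟩ := aux19_posfacts m hm x hx
  have hfx : f x = 0 := by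
    have hlog := congrArg Real.log heq
    rw [Real.log_pow, Real.log_mul (by positivity) (by positivity), Real.log_pow,
      Real.log_pow] at hlog
    have hcast : ((m - 2 : ℕ) : ℝ) = (m : ℝ) - 2 := by
      have : (2 : ℕ) ≤ m := by omega
      push_cast [Nat.cast_sub this]
      ring
    simp only [hf]
    rw [hcast] at hlog
    linarith
  have hf0 : f 0 = 0 := by simp [hf]
  exact hmono.injOn hx (Set.mem_Ioi.mpr hneg) (hfx.trans hf0.symm)
end
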